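/- arXiv:1610.00021 — 6 statements merged into one kernel-verified Lean document; each statement's English description precedes it below -/
import Mathlib

section
/- Let x ∈ ℓ₂⁺ and let G₀ ⊆ G be two graphs on vertex sets V ⊆ V' ⊆ ℕ₊. If ord(x, G₀) ∈ ℓ₂↓ then d(ord(x, G₀), ord(x, G)) ≤ sqrt(‖ord(x, G)‖₂² − ‖ord(x, G₀)‖₂²). (Aldous's comparison lemma: merging components can only change the ordered weight sequence by at most the square root of the increase of the sum of squared component weights.) -/
open MeasureTheory ProbabilityTheory Filter
open scoped ENNReal

/-- The (real-valued) total weight of the connected component `C` of `G`. -/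
noncomputable def compW {V : Type*} (x : V → ℝ) (G : SimpleGraph V)
    (C : G.ConnectedComponent) : ℝ :=
  ∑' v : {v : V // G.connectedComponentMk v = C}, x v

/-- The (extended-real-valued) total weight of the connected component `C` of `G`. -/
noncomputable def compWE {V : Type*} (x : V → ℝ) (G : SimpleGraph V)
    (C : G.ConnectedComponent) : ℝ≥0∞ :=
  ∑' v : {v : V // G.connectedComponentMk v = C}, ENNReal.ofReal (x v)

/-- `S₂^G`: the sum of the squared component weights of `G` (with weights `x`). -/
noncomputable def S2E {V : Type*} (x : V → ℝ) (G : SimpleGraph V) : ℝ≥0∞ :=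
  ∑' C : G.ConnectedComponent, compWE x G C ^ 2

/-- The decreasing rearrangement of a nonnegative family `w`: `ordOf w n` is the
`n`-th largest value (counted from `n = 0`). -/
noncomputable def ordOf {α : Type*} (w : α → ℝ) (n : ℕ) : ℝ :=
  sInf {r : ℝ | 0 ≤ r ∧ {a : α | r < w a}.Finite ∧ Nat.card {a : α | r < w a} ≤ n}

/-- `ord(x, G)`: the decreasing rearrangement of the component weights of `G`. -/
noncomputable def ordSeq {V : Type*} (x : V → ℝ) (G : SimpleGraph V) : ℕ → ℝ :=
  ordOf (compW x G)

/-- The `ℓ₂` distance between two sequences. -/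
noncomputable def l2dist (m m' : ℕ → ℝ) : ℝ :=
  Real.sqrt (∑' n, (m n - m' n) ^ 2)

/-- The `ℓ₂` distance between two sequences, with values in `ℝ≥0∞`. -/
noncomputable def l2edist (m m' : ℕ → ℝ) : ℝ≥0∞ :=
  (∑' n, ENNReal.ofReal ((m n - m' n) ^ 2)) ^ (2⁻¹ : ℝ)

section AldousHelpers
open Set

private lemma aldous_ord_mem {α : Type*} {w : α → ℝ}
    (hfin : ∀ r : ℝ, 0 < r → {a : α | r < w a}.Finite) (n : ℕ) :
    0 ≤ ordOf w n ∧ {a : α | ordOf w n < w a}.Finite ∧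
      Nat.card {a : α | ordOf w n < w a} ≤ n := by
  classical
  set S := {r : ℝ | 0 ≤ r ∧ {a : α | r < w a}.Finite ∧ Nat.card {a : α | r < w a} ≤ n} with hS
  have hbdd : BddBelow S := ⟨0, fun r hr => hr.1⟩
  obtain ⟨M, hM⟩ : BddAbove (w '' {a : α | 1 < w a}) := ((hfin 1 one_pos).image w).bddAbove
  have hempty : {a : α | max 1 M < w a} = ∅ := by
    ext a; simp only [mem_setOf_eq, mem_empty_iff_false, iff_false, not_lt]
    by_contra h
    push_neg at h
    have h1 : 1 < w a := lt_of_le_of_lt (le_max_left _ _) h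
    have := hM ⟨a, h1, rfl⟩
    exact absurd h (not_lt.2 (this.trans (le_max_right _ _)))
  have hne : S.Nonempty := by
    refine ⟨max 1 M, le_trans zero_le_one (le_max_left _ _), ?_, ?_⟩
    · rw [hempty]; exact finite_empty
    · rw [hempty]; simp
  have hc0 : 0 ≤ ordOf w n := le_csInf hne (fun r hr => hr.1)
  have hcS : ordOf w n = sInf S := rfl
  -- key claim
  have claim : ∀ T : Set α, T ⊆ {a : α | ordOf w n < w a} → T.Finite → T.ncard ≤ n := by
    intro T hT hTfin
    by_contra hcon
    push_neg at hcon
    obtain ⟨T', hT'sub, hT'card⟩ := Set.exists_subset_card_eq (Nat.succ_le_of_lt hcon)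
    have hT'fin : T'.Finite := hTfin.subset hT'sub
    have hT'ne : T'.Nonempty := by
      rw [← Set.ncard_pos hT'fin, hT'card]; exact Nat.succ_pos n
    obtain ⟨a₀, ha₀T', hmin⟩ := Set.exists_min_image T' w hT'fin hT'ne
    have hca₀ : ordOf w n < w a₀ := hT (hT'sub ha₀T')
    obtain ⟨s, hsS, hs⟩ := exists_lt_of_csInf_lt hne (by rw [← hcS]; exact hca₀)
    have hsub2 : T' ⊆ {a : α | s < w a} := fun a ha =>
      lt_of_lt_of_le hs (hmin a ha)
    have := Set.ncard_le_ncard hsub2 hsS.2.1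
    rw [hT'card] at this
    have h2 := hsS.2.2
    rw [Nat.card_coe_set_eq] at h2
    omega
  have hFin : {a : α | ordOf w n < w a}.Finite := by
    by_contra hinf
    obtain ⟨T, hTsub, hTfin, hTcard⟩ := Set.Infinite.exists_subset_ncard_eq hinf (n+1)
    have := claim T hTsub hTfin
    omega
  refine ⟨hc0, hFin, ?_⟩
  rw [Nat.card_coe_set_eq]
  exact claim _ subset_rfl hFin

private lemma aldous_lt_ordOf_iff {α : Type*} {w : α → ℝ}
    (hfin : ∀ r : ℝ, 0 < r → {a : α | r < w a}.Finite) (n : ℕ) {r : ℝ} (hr : 0 ≤ r) :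
    r < ordOf w n ↔ ¬({a : α | r < w a}.Finite ∧ Nat.card {a : α | r < w a} ≤ n) := by
  classical
  set S := {s : ℝ | 0 ≤ s ∧ {a : α | s < w a}.Finite ∧ Nat.card {a : α | s < w a} ≤ n} with hS
  constructor
  · intro h hcon
    have hrS : r ∈ S := ⟨hr, hcon.1, hcon.2⟩
    have : ordOf w n ≤ r := csInf_le ⟨0, fun s hs => hs.1⟩ hrS
    exact absurd h (not_lt.2 this)
  · intro h
    by_contra hle
    push_neg at hle
    obtain ⟨hc0, hcfin, hccard⟩ := aldous_ord_mem hfin n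
    have hsub : {a : α | r < w a} ⊆ {a : α | ordOf w n < w a} := fun a ha =>
      lt_of_le_of_lt hle ha
    have hrfin : {a : α | r < w a}.Finite := hcfin.subset hsub
    have : Nat.card {a : α | r < w a} ≤ n := by
      rw [Nat.card_coe_set_eq]
      refine le_trans (Set.ncard_le_ncard hsub hcfin) ?_
      rw [← Nat.card_coe_set_eq]; exact hccard
    exact h ⟨hrfin, this⟩

private lemma aldous_ord_count {α : Type*} {w : α → ℝ}
    (hfin : ∀ r : ℝ, 0 < r → {a : α | r < w a}.Finite) {r : ℝ} (hr : 0 < r) :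
    {n : ℕ | r < ordOf w n} = Set.Iio (Nat.card {a : α | r < w a}) := by
  ext n
  simp only [Set.mem_setOf_eq, Set.mem_Iio]
  rw [aldous_lt_ordOf_iff hfin n hr.le]
  simp only [hfin r hr, true_and]
  omega

noncomputable def aldousCount {α : Type*} (s : Set α) : ℝ≥0∞ :=
  ∑' a, s.indicator (fun _ => (1 : ℝ≥0∞)) a

private lemma aldousCount_finite {α : Type*} {s : Set α} (hs : s.Finite) :
    aldousCount s = Nat.card s := by
  classical
  rw [aldousCount, ← tsum_subtype]
  haveI := hs.fintype
  rw [tsum_eq_sum (s := Finset.univ) (fun b hb => absurd (Finset.mem_univ b) hb)]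
  simp [Nat.card_eq_fintype_card]

private lemma aldous_layercake {α : Type*} [Countable α] (g h : α → ℝ)
    (hg : ∀ a, 0 ≤ g a) (hh : ∀ a, 0 ≤ h a) :
    ∑' a, ENNReal.ofReal (g a * h a)
      = ∫⁻ s in Set.Ioi (0:ℝ), ∫⁻ t in Set.Ioi (0:ℝ),
          aldousCount {a | s < g a ∧ t < h a} := by
  classical
  have hind : ∀ (c : ℝ), ∫⁻ t in Set.Ioi (0:ℝ),
      (Set.Iio c).indicator (fun _ => (1:ℝ≥0∞)) t = ENNReal.ofReal c := by
    intro c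
    rw [lintegral_indicator_const measurableSet_Iio, one_mul,
      Measure.restrict_apply measurableSet_Iio,
      Set.Iio_inter_Ioi, Real.volume_Ioo, sub_zero]
  have hne_top : ∀ (c : ℝ) (s : ℝ), (Set.Iio c).indicator (fun _ => (1:ℝ≥0∞)) s ≠ ⊤ := by
    intro c s
    by_cases hs : s ∈ Set.Iio c <;> simp [Set.indicator_apply, hs]
  calc ∑' a, ENNReal.ofReal (g a * h a)
      = ∑' a, ∫⁻ s in Set.Ioi (0:ℝ),
          (Set.Iio (g a)).indicator (fun _ => (1:ℝ≥0∞)) s * ENNReal.ofReal (h a) := by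
        refine tsum_congr (fun a => ?_)
        rw [lintegral_mul_const' _ _ (by exact ENNReal.ofReal_ne_top), hind,
          ENNReal.ofReal_mul (hg a)]
    _ = ∫⁻ s in Set.Ioi (0:ℝ), ∑' a,
          (Set.Iio (g a)).indicator (fun _ => (1:ℝ≥0∞)) s * ENNReal.ofReal (h a) :=
        (lintegral_tsum (fun a => ((measurable_const.indicator
          measurableSet_Iio).mul_const _).aemeasurable)).symm
    _ = ∫⁻ s in Set.Ioi (0:ℝ), ∑' a, ∫⁻ t in Set.Ioi (0:ℝ),
          (Set.Iio (g a)).indicator (fun _ => (1:ℝ≥0∞)) s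
            * (Set.Iio (h a)).indicator (fun _ => (1:ℝ≥0∞)) t := by
        refine lintegral_congr (fun s => tsum_congr (fun a => ?_))
        rw [lintegral_const_mul' _ _ (hne_top _ _), hind]
    _ = ∫⁻ s in Set.Ioi (0:ℝ), ∫⁻ t in Set.Ioi (0:ℝ), ∑' a,
          (Set.Iio (g a)).indicator (fun _ => (1:ℝ≥0∞)) s
            * (Set.Iio (h a)).indicator (fun _ => (1:ℝ≥0∞)) t := by
        refine lintegral_congr (fun s => ?_)
        exact (lintegral_tsum (fun a => ((measurable_const.indicator
          measurableSet_Iio).const_mul _).aemeasurable)).symm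
    _ = ∫⁻ s in Set.Ioi (0:ℝ), ∫⁻ t in Set.Ioi (0:ℝ),
          aldousCount {a | s < g a ∧ t < h a} := by
        refine lintegral_congr (fun s => lintegral_congr (fun t => ?_))
        rw [aldousCount]
        refine tsum_congr (fun a => ?_)
        by_cases h1 : s < g a <;> by_cases h2 : t < h a <;>
          simp [Set.indicator_apply, Set.mem_Iio, Set.mem_setOf_eq, h1, h2]

private lemma aldous_compare {α β : Type*} [Countable α] [Countable β]
    (g h : α → ℝ) (g' h' : β → ℝ)
    (hg : ∀ a, 0 ≤ g a) (hh : ∀ a, 0 ≤ h a) (hg' : ∀ b, 0 ≤ g' b) (hh' : ∀ b, 0 ≤ h' b)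
    (hcmp : ∀ s t : ℝ, 0 < s → 0 < t →
      aldousCount {a | s < g a ∧ t < h a} ≤ aldousCount {b | s < g' b ∧ t < h' b}) :
    ∑' a, ENNReal.ofReal (g a * h a) ≤ ∑' b, ENNReal.ofReal (g' b * h' b) := by
  rw [aldous_layercake g h hg hh, aldous_layercake g' h' hg' hh']
  refine lintegral_mono_ae ?_
  rw [ae_restrict_iff' measurableSet_Ioi]
  filter_upwards with s hs
  refine lintegral_mono_ae ?_
  rw [ae_restrict_iff' measurableSet_Ioi]
  filter_upwards with t ht
  exact hcmp s t hs ht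

private lemma aldous_compare_eq {α β : Type*} [Countable α] [Countable β]
    (g h : α → ℝ) (g' h' : β → ℝ)
    (hg : ∀ a, 0 ≤ g a) (hh : ∀ a, 0 ≤ h a) (hg' : ∀ b, 0 ≤ g' b) (hh' : ∀ b, 0 ≤ h' b)
    (hcmp : ∀ s t : ℝ, 0 < s → 0 < t →
      aldousCount {a | s < g a ∧ t < h a} = aldousCount {b | s < g' b ∧ t < h' b}) :
    ∑' a, ENNReal.ofReal (g a * h a) = ∑' b, ENNReal.ofReal (g' b * h' b) :=
  le_antisymm
    (aldous_compare g h g' h' hg hh hg' hh' (fun s t hs ht => (hcmp s t hs ht).le))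
    (aldous_compare g' h' g h hg' hh' hg hh (fun s t hs ht => (hcmp s t hs ht).ge))

private lemma aldous_exists_max {α : Type*} {w : α → ℝ} (hw0 : ∀ a, 0 ≤ w a)
    (hfin : ∀ r : ℝ, 0 < r → {a : α | r < w a}.Finite) (s : Set α) (hs : s.Nonempty) :
    ∃ a ∈ s, ∀ a' ∈ s, w a' ≤ w a := by
  obtain ⟨a₀, ha₀⟩ := hs
  by_cases hpos : ∃ a ∈ s, 0 < w a
  · obtain ⟨a₁, ha₁s, ha₁⟩ := hpos
    have htfin : {a ∈ s | w a₁ ≤ w a}.Finite := by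
      refine (hfin (w a₁ / 2) (by linarith)).subset (fun a ha => ?_)
      simp only [Set.mem_setOf_eq] at ha ⊢
      linarith [ha.2]
    obtain ⟨m, hm, hmax⟩ := Set.exists_max_image _ w htfin ⟨a₁, ha₁s, le_refl _⟩
    refine ⟨m, hm.1, fun a' ha' => ?_⟩
    by_cases hcase : w a₁ ≤ w a'
    · exact hmax a' ⟨ha', hcase⟩
    · exact (not_le.1 hcase).le.trans (hmax a₁ ⟨ha₁s, le_refl _⟩)
  · push_neg at hpos
    exact ⟨a₀, ha₀, fun a' ha' => (hpos a' ha').trans (hw0 a₀)⟩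

private lemma aldous_card_mono {α : Type*} {w : α → ℝ}
    (hfin : ∀ r : ℝ, 0 < r → {a : α | r < w a}.Finite) {s t : ℝ} (hs : 0 < s) (hst : s ≤ t) :
    Nat.card {a : α | t < w a} ≤ Nat.card {a : α | s < w a} := by
  rw [Nat.card_coe_set_eq, Nat.card_coe_set_eq]
  exact Set.ncard_le_ncard (fun a ha => lt_of_le_of_lt hst ha) (hfin s hs)

private lemma aldous_count_Iio (k : ℕ) : aldousCount (Set.Iio k) = k := by
  rw [aldousCount_finite (Set.finite_Iio k), Nat.card_eq_fintype_card, Fintype.card_Iio, Nat.card_Iio]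

private lemma aldous_ord_pair_count {α β : Type*} {w : α → ℝ} {w' : β → ℝ}
    (hfin : ∀ r : ℝ, 0 < r → {a : α | r < w a}.Finite)
    (hfin' : ∀ r : ℝ, 0 < r → {b : β | r < w' b}.Finite)
    {s t : ℝ} (hs : 0 < s) (ht : 0 < t) :
    aldousCount {n : ℕ | s < ordOf w n ∧ t < ordOf w' n}
      = min (Nat.card {a : α | s < w a}) (Nat.card {b : β | t < w' b}) := by
  have hset : {n : ℕ | s < ordOf w n ∧ t < ordOf w' n}
      = Set.Iio (min (Nat.card {a : α | s < w a}) (Nat.card {b : β | t < w' b})) := by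
    ext n
    simp only [Set.mem_setOf_eq, Set.mem_Iio, lt_min_iff]
    constructor
    · rintro ⟨h1, h2⟩
      constructor
      · have h1' : n ∈ {n : ℕ | s < ordOf w n} := h1
        rw [aldous_ord_count hfin hs] at h1'; exact h1'
      · have h2' : n ∈ {n : ℕ | t < ordOf w' n} := h2
        rw [aldous_ord_count hfin' ht] at h2'; exact h2'
    · rintro ⟨h1, h2⟩
      constructor
      · have h1' : n ∈ Set.Iio (Nat.card {a : α | s < w a}) := h1
        rw [← aldous_ord_count hfin hs] at h1'; exact h1'
      · have h2' : n ∈ Set.Iio (Nat.card {b : β | t < w' b}) := h2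
        rw [← aldous_ord_count hfin' ht] at h2'; exact h2'
  rw [hset, aldous_count_Iio]

private lemma aldous_ord_sq {α : Type*} [Countable α] {w : α → ℝ} (hw0 : ∀ a, 0 ≤ w a)
    (hfin : ∀ r : ℝ, 0 < r → {a : α | r < w a}.Finite) :
    ∑' n, ENNReal.ofReal (ordOf w n * ordOf w n) = ∑' a, ENNReal.ofReal (w a * w a) := by
  refine aldous_compare_eq _ _ w w (fun n => (aldous_ord_mem hfin n).1)
    (fun n => (aldous_ord_mem hfin n).1) hw0 hw0 (fun s t hs ht => ?_)
  rw [aldous_ord_pair_count hfin hfin hs ht]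
  have hset : {a : α | s < w a ∧ t < w a} = {a : α | max s t < w a} := by
    ext a; simp [max_lt_iff]
  rw [hset, aldousCount_finite (hfin _ (lt_max_of_lt_left hs))]
  rcases le_total s t with hst | hst
  · rw [max_eq_right hst, min_eq_right (aldous_card_mono hfin hs hst)]
  · rw [max_eq_left hst, min_eq_left (aldous_card_mono hfin ht hst)]

/-- Aldous's comparison lemma: if `G ⊆ G'` (with vertex sets `V ⊆ V'`) then the `ℓ₂`
distance between the ordered component-weight sequences is bounded by the square root
of the increase in the sum of squared component weights. -/
theorem stmt1 (x : ℕ → ℝ) (hx : ∀ i, 0 ≤ x i) (hx2 : Summable fun i => x i ^ 2)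
    (V V' : Set ℕ) (hVV' : V ⊆ V')
    (G G' : SimpleGraph ℕ) (hGG' : G ≤ G')
    (hGV : ∀ i j, G.Adj i j → i ∈ V ∧ j ∈ V)
    (hG'V' : ∀ i j, G'.Adj i j → i ∈ V' ∧ j ∈ V')
    (hord : S2E (V.indicator x) G < ⊤) :
    l2edist (ordSeq (V.indicator x) G) (ordSeq (V'.indicator x) G') ≤
      (S2E (V'.indicator x) G' - S2E (V.indicator x) G) ^ (2⁻¹ : ℝ) := by
  classical
  by_cases hB : S2E (V'.indicator x) G' = ⊤
  · rw [hB, ENNReal.sub_eq_top_iff.mpr ⟨rfl, hord.ne⟩,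
      ENNReal.top_rpow_of_pos (by norm_num : (0:ℝ) < 2⁻¹)]
    exact le_top
  haveI hcA : Countable G.ConnectedComponent := Quotient.countable
  haveI hcB : Countable G'.ConnectedComponent := Quotient.countable
  set xV := V.indicator x with hxVdef
  set xV' := V'.indicator x with hxV'def
  have hxV0 : ∀ i, 0 ≤ xV i := fun i => Set.indicator_nonneg (fun j _ => hx j) i
  have hxV'0 : ∀ i, 0 ≤ xV' i := fun i => Set.indicator_nonneg (fun j _ => hx j) i
  have hxVle : ∀ i, xV i ≤ xV' i := fun i =>
    Set.indicator_le_indicator_of_subset hVV' hx i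
  set w := compW xV G with hwdef
  set w' := compW xV' G' with hw'def
  -- basic facts about component weights
  have hwE_ne : ∀ a : G.ConnectedComponent, compWE xV G a ≠ ⊤ := by
    intro a hTop
    have hle : compWE xV G a ^ 2 ≤ S2E xV G := ENNReal.le_tsum a
    rw [hTop, ENNReal.top_pow (by norm_num : 2 ≠ 0)] at hle
    exact hord.ne (top_le_iff.mp hle)
  have hwE'_ne : ∀ b : G'.ConnectedComponent, compWE xV' G' b ≠ ⊤ := by
    intro b hTop
    have hle : compWE xV' G' b ^ 2 ≤ S2E xV' G' := ENNReal.le_tsum b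
    rw [hTop, ENNReal.top_pow (by norm_num : 2 ≠ 0)] at hle
    exact hB (top_le_iff.mp hle)
  have htoReal : ∀ (y : ℕ → ℝ) (H : SimpleGraph ℕ), (∀ i, 0 ≤ y i) →
      ∀ a : H.ConnectedComponent, (compWE y H a).toReal = compW y H a := by
    intro y H hy a
    rw [compW, compWE, ENNReal.tsum_toReal_eq (fun v => ENNReal.ofReal_ne_top)]
    exact tsum_congr (fun v => ENNReal.toReal_ofReal (hy _))
  have hw0 : ∀ a, 0 ≤ w a := by
    intro a
    rw [hwdef, ← htoReal xV G hxV0 a]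
    exact ENNReal.toReal_nonneg
  have hw'0 : ∀ b, 0 ≤ w' b := by
    intro b
    rw [hw'def, ← htoReal xV' G' hxV'0 b]
    exact ENNReal.toReal_nonneg
  have hw_eq : ∀ a, ENNReal.ofReal (w a) = compWE xV G a := by
    intro a
    rw [hwdef, ← htoReal xV G hxV0 a, ENNReal.ofReal_toReal (hwE_ne a)]
  have hw'_eq : ∀ b, ENNReal.ofReal (w' b) = compWE xV' G' b := by
    intro b
    rw [hw'def, ← htoReal xV' G' hxV'0 b, ENNReal.ofReal_toReal (hwE'_ne b)]
  -- finiteness of superlevel sets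
  have hfinw : ∀ r : ℝ, 0 < r → {a : G.ConnectedComponent | r < w a}.Finite := by
    intro r hr
    have hfin := ENNReal.finite_const_le_of_tsum_ne_top
      (a := fun a : G.ConnectedComponent => compWE xV G a ^ 2) hord.ne
      (ε := ENNReal.ofReal r ^ 2)
      (pow_ne_zero 2 (ENNReal.ofReal_pos.mpr hr).ne')
    refine hfin.subset (fun a ha => ?_)
    simp only [Set.mem_setOf_eq] at ha ⊢
    rw [← hw_eq a, sq, sq]
    exact mul_le_mul' (ENNReal.ofReal_le_ofReal ha.le) (ENNReal.ofReal_le_ofReal ha.le)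
  have hfinw' : ∀ r : ℝ, 0 < r → {b : G'.ConnectedComponent | r < w' b}.Finite := by
    intro r hr
    have hfin := ENNReal.finite_const_le_of_tsum_ne_top
      (a := fun b : G'.ConnectedComponent => compWE xV' G' b ^ 2) hB
      (ε := ENNReal.ofReal r ^ 2)
      (pow_ne_zero 2 (ENNReal.ofReal_pos.mpr hr).ne')
    refine hfin.subset (fun b hb => ?_)
    simp only [Set.mem_setOf_eq] at hb ⊢
    rw [← hw'_eq b, sq, sq]
    exact mul_le_mul' (ENNReal.ofReal_le_ofReal hb.le) (ENNReal.ofReal_le_ofReal hb.le)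
  -- the component map
  set f := SimpleGraph.ConnectedComponent.map (SimpleGraph.Hom.ofLE hGG')
    with hfdef
  have hfmk : ∀ v : ℕ, f (G.connectedComponentMk v) = G'.connectedComponentMk v :=
    fun v => rfl
  have hfsurj : ∀ b, ∃ a, f a = b := fun b =>
    SimpleGraph.ConnectedComponent.ind (fun v => ⟨G.connectedComponentMk v, hfmk v⟩) b
  -- vertex-level inequality: fibers sum below the big component weight
  have hE1 : ∀ b : G'.ConnectedComponent,
      ∑' a : (f ⁻¹' {b} : Set G.ConnectedComponent), compWE xV G ↑a ≤ compWE xV' G' b := by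
    intro b
    have hsub : ∀ a : G.ConnectedComponent, compWE xV G a
        = ∑' v : ℕ, ({v : ℕ | G.connectedComponentMk v = a}).indicator
            (fun v => ENNReal.ofReal (xV v)) v := by
      intro a
      rw [compWE]
      exact tsum_subtype {v : ℕ | G.connectedComponentMk v = a}
        (fun v => ENNReal.ofReal (xV v))
    calc ∑' a : (f ⁻¹' {b} : Set G.ConnectedComponent), compWE xV G ↑a
        = ∑' a : (f ⁻¹' {b} : Set G.ConnectedComponent), ∑' v : ℕ,
            ({v : ℕ | G.connectedComponentMk v = ↑a}).indicator
              (fun v => ENNReal.ofReal (xV v)) v := tsum_congr (fun a => hsub ↑a)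
      _ = ∑' v : ℕ, ∑' a : (f ⁻¹' {b} : Set G.ConnectedComponent),
            ({v : ℕ | G.connectedComponentMk v = ↑a}).indicator
              (fun v => ENNReal.ofReal (xV v)) v := ENNReal.tsum_comm
      _ ≤ ∑' v : ℕ, ({v : ℕ | G'.connectedComponentMk v = b}).indicator
            (fun v => ENNReal.ofReal (xV' v)) v := ?_
      _ = compWE xV' G' b := by
          rw [compWE]
          exact (tsum_subtype {v : ℕ | G'.connectedComponentMk v = b}
            (fun v => ENNReal.ofReal (xV' v))).symm
    refine ENNReal.tsum_le_tsum (fun v => ?_)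
    by_cases hvb : G'.connectedComponentMk v = b
    · have hmem : G.connectedComponentMk v ∈ f ⁻¹' {b} := by
        rw [Set.mem_preimage, Set.mem_singleton_iff, hfmk]; exact hvb
      rw [tsum_eq_single (⟨G.connectedComponentMk v, hmem⟩ :
          (f ⁻¹' {b} : Set G.ConnectedComponent)) ?_]
      · rw [Set.indicator_of_mem
            (show v ∈ {v' : ℕ | G.connectedComponentMk v' = G.connectedComponentMk v}
              from rfl),
          Set.indicator_of_mem
            (show v ∈ {v' : ℕ | G'.connectedComponentMk v' = b} from hvb)]
        exact ENNReal.ofReal_le_ofReal (hxVle v)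
      · intro a' ha'
        refine Set.indicator_of_notMem (fun hmem' => ha' ?_) _
        exact Subtype.ext (by rw [← hmem'])
    · have hzero : ∀ a : (f ⁻¹' {b} : Set G.ConnectedComponent),
          ({v' : ℕ | G.connectedComponentMk v' = ↑a}).indicator
            (fun v' => ENNReal.ofReal (xV v')) v = 0 := by
        intro a
        refine Set.indicator_of_notMem (fun hmem' => ?_) _
        have : f (G.connectedComponentMk v) = b := by
          rw [hmem']; exact a.2
        rw [hfmk] at this
        exact hvb this
      rw [tsum_congr hzero, tsum_zero]
      exact zero_le
  -- choose a maximal element in each fiber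
  have hmax : ∀ b : G'.ConnectedComponent, ∃ a ∈ f ⁻¹' {b},
      ∀ a' ∈ f ⁻¹' {b}, w a' ≤ w a := by
    intro b
    obtain ⟨a, ha⟩ := hfsurj b
    exact aldous_exists_max hw0 hfinw (f ⁻¹' {b}) ⟨a, by simp [ha]⟩
  choose sel hselmem hselmax using hmax
  set vm : G.ConnectedComponent → ℝ := fun a => if sel (f a) = a then w' (f a) else 0
    with hvmdef
  have hvm0 : ∀ a, 0 ≤ vm a := by
    intro a
    rw [hvmdef]
    dsimp only
    split
    · exact hw'0 _
    · exact le_refl 0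
  have hvm_sel : ∀ a, vm a ≠ 0 → sel (f a) = a ∧ vm a = w' (f a) := by
    intro a h
    by_cases hcase : sel (f a) = a
    · exact ⟨hcase, by rw [hvmdef]; dsimp only; rw [if_pos hcase]⟩
    · exact absurd (by rw [hvmdef]; dsimp only; rw [if_neg hcase]) h
  -- Step A : ∑ w² ≤ ∑ w·vm  (fiberwise)
  have hstepA : ∑' a, ENNReal.ofReal (w a * w a) ≤ ∑' a, ENNReal.ofReal (w a * vm a) := by
    rw [← ENNReal.tsum_fiberwise (fun a => ENNReal.ofReal (w a * w a)) f,
        ← ENNReal.tsum_fiberwise (fun a => ENNReal.ofReal (w a * vm a)) f]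
    refine ENNReal.tsum_le_tsum (fun b => ?_)
    have hselb : f (sel b) = b := by
      have := hselmem b; rwa [Set.mem_preimage, Set.mem_singleton_iff] at this
    have hvmsel : vm (sel b) = w' b := by
      rw [hvmdef]; dsimp only; rw [hselb, if_pos rfl]
    calc ∑' a : (f ⁻¹' {b} : Set G.ConnectedComponent), ENNReal.ofReal (w ↑a * w ↑a)
        ≤ ∑' a : (f ⁻¹' {b} : Set G.ConnectedComponent),
            ENNReal.ofReal (w (sel b)) * ENNReal.ofReal (w ↑a) := by
          refine ENNReal.tsum_le_tsum (fun a => ?_)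
          rw [ENNReal.ofReal_mul (hw0 _)]
          exact mul_le_mul_left (ENNReal.ofReal_le_ofReal (hselmax b ↑a a.2)) _
      _ = ENNReal.ofReal (w (sel b))
            * ∑' a : (f ⁻¹' {b} : Set G.ConnectedComponent), ENNReal.ofReal (w ↑a) :=
          ENNReal.tsum_mul_left
      _ ≤ ENNReal.ofReal (w (sel b)) * compWE xV' G' b := by
          refine mul_le_mul_right ?_ _
          refine le_trans (le_of_eq (tsum_congr fun a => hw_eq ↑a)) (hE1 b)
      _ = ENNReal.ofReal (w (sel b) * vm (sel b)) := by
          rw [← hw'_eq b, ← hvmsel, ← ENNReal.ofReal_mul (hw0 _)]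
      _ ≤ ∑' a : (f ⁻¹' {b} : Set G.ConnectedComponent),
            ENNReal.ofReal (w ↑a * vm ↑a) :=
          ENNReal.le_tsum (⟨sel b, hselmem b⟩ : (f ⁻¹' {b} : Set G.ConnectedComponent))
  -- Step B : ∑ w·vm ≤ ∑ u·v  (rearrangement comparison)
  have hstepB : ∑' a, ENNReal.ofReal (w a * vm a)
      ≤ ∑' n, ENNReal.ofReal (ordOf w n * ordOf w' n) := by
    refine aldous_compare _ _ _ _ hw0 hvm0 (fun n => (aldous_ord_mem hfinw n).1)
      (fun n => (aldous_ord_mem hfinw' n).1) (fun s t hs ht => ?_)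
    rw [aldous_ord_pair_count hfinw hfinw' hs ht]
    have hS1 : {a | s < w a ∧ t < vm a} ⊆ {a | s < w a} := fun a ha => ha.1
    have hSfin : {a | s < w a ∧ t < vm a}.Finite := (hfinw s hs).subset hS1
    have hsel_eq : ∀ a ∈ {a | s < w a ∧ t < vm a}, sel (f a) = a ∧ vm a = w' (f a) := by
      intro a ha
      obtain ⟨ha1, ha2⟩ := ha
      refine hvm_sel a (fun h0 => ?_)
      rw [h0] at ha2
      exact absurd ha2 (not_lt.2 ht.le)
    have hinj : Set.InjOn f {a | s < w a ∧ t < vm a} := by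
      intro a ha a' ha' hff
      rw [← (hsel_eq a ha).1, hff, (hsel_eq a' ha').1]
    have himg : f '' {a | s < w a ∧ t < vm a} ⊆ {b | t < w' b} := by
      rintro b ⟨a, haS, rfl⟩
      have := (hsel_eq a haS).2
      exact lt_of_lt_of_eq haS.2 this
    have hcard1 : Nat.card {a | s < w a ∧ t < vm a} ≤ Nat.card {a | s < w a} := by
      rw [Nat.card_coe_set_eq, Nat.card_coe_set_eq]
      exact Set.ncard_le_ncard hS1 (hfinw s hs)
    have hcard2 : Nat.card {a | s < w a ∧ t < vm a}
        ≤ Nat.card {b | t < w' b} := by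
      rw [Nat.card_coe_set_eq, Nat.card_coe_set_eq, ← Set.ncard_image_of_injOn hinj]
      exact Set.ncard_le_ncard himg (hfinw' t ht)
    rw [aldousCount_finite hSfin]
    exact_mod_cast Nat.cast_le.mpr (le_min hcard1 hcard2)
  -- Step C : rearrangement preserves the sum of squares
  have hCu : ∑' n, ENNReal.ofReal (ordOf w n * ordOf w n)
      = ∑' a, ENNReal.ofReal (w a * w a) := aldous_ord_sq hw0 hfinw
  have hCv : ∑' n, ENNReal.ofReal (ordOf w' n * ordOf w' n)
      = ∑' b, ENNReal.ofReal (w' b * w' b) := aldous_ord_sq hw'0 hfinw'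
  have hS2 : S2E xV G = ∑' a, ENNReal.ofReal (w a * w a) := by
    rw [S2E]
    exact tsum_congr (fun a => by rw [← hw_eq a, sq, ← ENNReal.ofReal_mul (hw0 a)])
  have hS2' : S2E xV' G' = ∑' b, ENNReal.ofReal (w' b * w' b) := by
    rw [S2E]
    exact tsum_congr (fun b => by rw [← hw'_eq b, sq, ← ENNReal.ofReal_mul (hw'0 b)])
  -- final algebra
  set u := ordOf w with hudef
  set v := ordOf w' with hvdef
  set D := ∑' n, ENNReal.ofReal ((u n - v n) ^ 2) with hDdef
  set A := ∑' n, ENNReal.ofReal (u n * u n) with hAdef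
  set Bv := ∑' n, ENNReal.ofReal (v n * v n) with hBvdef
  set C := ∑' n, ENNReal.ofReal (u n * v n) with hCdef
  have hu0 : ∀ n, 0 ≤ u n := fun n => (aldous_ord_mem hfinw n).1
  have hv0 : ∀ n, 0 ≤ v n := fun n => (aldous_ord_mem hfinw' n).1
  have hD2C : D + 2 * C = A + Bv := by
    rw [hDdef, hAdef, hBvdef, hCdef, ← ENNReal.tsum_mul_left, ← ENNReal.tsum_add,
      ← ENNReal.tsum_add]
    refine tsum_congr (fun n => ?_)
    rw [show (2 : ℝ≥0∞) = ENNReal.ofReal 2 by simp,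
      ← ENNReal.ofReal_mul (by norm_num : (0:ℝ) ≤ 2),
      ← ENNReal.ofReal_add (sq_nonneg _)
        (mul_nonneg (by norm_num) (mul_nonneg (hu0 n) (hv0 n))),
      ← ENNReal.ofReal_add (mul_nonneg (hu0 n) (hu0 n)) (mul_nonneg (hv0 n) (hv0 n))]
    congr 1
    ring
  have hA_eq : S2E xV G = A := hS2.trans hCu.symm
  have hBv_eq : S2E xV' G' = Bv := hS2'.trans hCv.symm
  have hA_ne : A ≠ ⊤ := hA_eq ▸ hord.ne
  have hBv_ne : Bv ≠ ⊤ := hBv_eq ▸ hB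
  have hAC : A ≤ C := hCu.trans_le (hstepA.trans hstepB)
  have h1 : A + (D + C) ≤ A + Bv := by
    calc A + (D + C) ≤ C + (D + C) := add_le_add_left hAC _
      _ = D + 2 * C := by ring
      _ = A + Bv := hD2C
  have hDC : D + C ≤ Bv := (ENNReal.add_le_add_iff_left hA_ne).mp h1
  have hfinD : D ≤ Bv - A :=
    ENNReal.le_sub_of_add_le_right hA_ne
      (le_trans (add_le_add_right hAC D) hDC)
  have hgoal : l2edist (ordSeq xV G) (ordSeq xV' G') = D ^ (2⁻¹ : ℝ) := rfl
  rw [hgoal, hA_eq, hBv_eq]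
  exact ENNReal.rpow_le_rpow hfinD (by norm_num)

end AldousHelpers
end

section
/- Let x ∈ ℓ₂⁺ with S₂ = ∑_i x_i², and let G_t be the random graph on ℕ₊ where, for independent exponential(1) variables ξ_{i,j}, the edge {i,j} is present iff ξ_{i,j} ≤ t·x_i·x_j. Then for any i ≠ j and any t < 1/S₂, the probability that i and j are connected in G_t is at most x_i·x_j·t / (1 − t·S₂). -/
open MeasureTheory ProbabilityTheory Filter
open scoped ENNReal

/-- The graphical-construction random graph on `ℕ`: the edge `{i,j}` is present
iff `ξ_{i,j} ≤ t·x_i·x_j`. -/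
noncomputable def expGraph {Ω : Type*} (ξ : ℕ → ℕ → Ω → ℝ) (x : ℕ → ℝ) (t : ℝ)
    (ω : Ω) : SimpleGraph ℕ :=
  SimpleGraph.fromRel (fun i j => ξ (min i j) (max i j) ω ≤ t * x i * x j)


open MeasureTheory ProbabilityTheory Filter
open scoped ENNReal

noncomputable def tupV {k : ℕ} (a b : ℕ) (v : Fin k → ℕ) : Fin (k + 2) → ℕ :=
  Fin.cons a (Fin.snoc v b)

lemma tupV_castSucc {k : ℕ} (a b : ℕ) (v : Fin k → ℕ) (m : Fin (k + 1)) :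
    tupV a b v m.castSucc = (Fin.cons a v : Fin (k+1) → ℕ) m := by
  induction m using Fin.cases with
  | zero => rfl
  | succ m₀ =>
    have : (Fin.succ m₀).castSucc = (m₀.castSucc).succ := rfl
    rw [this, tupV, Fin.cons_succ, Fin.snoc_castSucc, Fin.cons_succ]

lemma tupV_succ {k : ℕ} (a b : ℕ) (v : Fin k → ℕ) (m : Fin (k + 1)) :
    tupV a b v m.succ = (Fin.snoc v b : Fin (k+1) → ℕ) m := by
  rw [tupV, Fin.cons_succ]

lemma walk_tuple {G : SimpleGraph ℕ} {a b : ℕ} (w : G.Walk a b) (hab : a ≠ b)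
    (hp : w.IsPath) :
    ∃ (k : ℕ) (v : Fin k → ℕ),
      Function.Injective (tupV a b v) ∧
      (∀ m : Fin (k + 1), G.Adj (tupV a b v m.castSucc) (tupV a b v m.succ)) ∧
      (∀ m, tupV a b v m ∈ w.support) := by
  induction w with
  | nil => exact absurd rfl hab
  | @cons a c b h rest ih =>
    rw [SimpleGraph.Walk.cons_isPath_iff] at hp
    by_cases hcb : c = b
    · subst hcb
      have : rest = SimpleGraph.Walk.nil := by
        have := SimpleGraph.Path.loop_eq ⟨rest, hp.1⟩
        simpa using congrArg Subtype.val this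
      subst this
      refine ⟨0, Fin.elim0, ?_, ?_, ?_⟩
      · intro m m' hmm
        fin_cases m <;> fin_cases m' <;> simp_all [tupV, Fin.snoc, hab, hab.symm]
      · intro m
        fin_cases m
        simpa [tupV, Fin.snoc, show ((1:Fin 2)) = Fin.last 1 from rfl] using h
      · intro m; fin_cases m <;> simp [tupV, Fin.snoc]
    · obtain ⟨k, v, hinj, hadj, hmem⟩ := ih hcb hp.1
      have hV : tupV a b (Fin.cons c v) = Fin.cons a (tupV c b v) := by
        rw [tupV, tupV, ← Fin.cons_snoc_eq_snoc_cons]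
      have hanotin : a ∉ Set.range (tupV c b v) := by
        rintro ⟨m, rfl⟩
        exact hp.2 (hmem m)
      refine ⟨k + 1, Fin.cons c v, ?_, ?_, ?_⟩
      · rw [hV]
        exact Fin.cons_injective_of_injective hanotin hinj
      · intro m
        rw [hV]
        induction m using Fin.cases with
        | zero => simpa [tupV] using h
        | succ m₀ =>
          have e1 : (Fin.succ m₀).castSucc = (m₀.castSucc).succ := rfl
          rw [e1, Fin.cons_succ, Fin.cons_succ]
          exact hadj m₀
      · intro m
        rw [hV, SimpleGraph.Walk.support_cons]
        induction m using Fin.cases with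
        | zero => simp
        | succ m₀ => simp only [Fin.cons_succ]; exact List.mem_cons_of_mem _ (hmem m₀)

lemma tsum_pi_fin (g : ℕ → ℝ≥0∞) : ∀ k, ∑' v : Fin k → ℕ, ∏ m, g (v m) = (∑' n, g n) ^ k := by
  intro k
  induction k with
  | zero =>
    rw [tsum_eq_single (Fin.elim0)
      (by intro v h; exact absurd (funext fun m => m.elim0) (Ne.symm h))]
    simp
  | succ k ih =>
    rw [← (Fin.consEquiv (fun _ : Fin (k+1) => ℕ)).tsum_eq, pow_succ']
    rw [← ih, ← ENNReal.tsum_mul_right]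
    rw [ENNReal.tsum_prod']
    congr 1; ext a
    rw [← ENNReal.tsum_mul_left]
    congr 1; ext v
    have : (fun m => g ((Fin.cons a v : Fin (k+1) → ℕ) m))
        = (Fin.cons (g a) (g ∘ v) : Fin (k+1) → ℝ≥0∞) := Fin.comp_cons g a v
    show (∏ m : Fin (k+1), g ((Fin.cons a v : Fin (k+1) → ℕ) m)) = _
    rw [this, Fin.prod_cons]; rfl

lemma factor_bound {Ω : Type*} [MeasurableSpace Ω] (μ : Measure Ω) [IsProbabilityMeasure μ]
    (f : Ω → ℝ) (hf : Measurable f) (c : ℝ)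
    (h : μ {ω | c < f ω} = ENNReal.ofReal (Real.exp (-c))) :
    μ (f ⁻¹' Set.Iic c) ≤ ENNReal.ofReal c := by
  have hu : MeasurableSet {ω | c < f ω} := hf measurableSet_Ioi
  have he : f ⁻¹' Set.Iic c = {ω | c < f ω}ᶜ := by
    ext ω; simp [Set.Iic, not_lt]
  rw [he, prob_compl_eq_one_sub hu, h]
  calc (1 : ℝ≥0∞) - ENNReal.ofReal (Real.exp (-c))
      = ENNReal.ofReal (1 - Real.exp (-c)) := by
        rw [ENNReal.ofReal_sub _ (Real.exp_nonneg _), ENNReal.ofReal_one]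
    _ ≤ ENNReal.ofReal c := by
        apply ENNReal.ofReal_le_ofReal
        have := Real.add_one_le_exp (-c)
        linarith

/-- For `x ∈ ℓ₂⁺` and i.i.d. exponential(1) variables `ξ_{i,j}`, in the random graph
`G_t` (edge `{i,j}` iff `ξ_{i,j} ≤ t x_i x_j`), for `i ≠ j` and `t < 1/S₂` the
probability that `i` and `j` are connected is at most `x_i x_j t / (1 - t S₂)`. -/
theorem stmt2 {Ω : Type*} [MeasurableSpace Ω] (μ : Measure Ω) [IsProbabilityMeasure μ]
    (x : ℕ → ℝ) (hx : ∀ i, 0 ≤ x i) (hx2 : Summable fun i => x i ^ 2)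
    (ξ : ℕ → ℕ → Ω → ℝ) (hmeas : ∀ i j, Measurable (ξ i j))
    (hlaw : ∀ i j, i < j → ∀ s : ℝ, 0 ≤ s →
      μ {ω | s < ξ i j ω} = ENNReal.ofReal (Real.exp (-s)))
    (hindep : iIndepFun
      (fun p : {p : ℕ × ℕ // p.1 < p.2} => ξ p.1.1 p.1.2) μ)
    (t : ℝ) (ht : 0 ≤ t) (hts : t * (∑' i, x i ^ 2) < 1)
    (i j : ℕ) (hij : i ≠ j) :
    μ {ω | (expGraph ξ x t ω).Reachable i j} ≤
      ENNReal.ofReal (x i * x j * t / (1 - t * ∑' i, x i ^ 2)) := by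
  classical
  set S₂ := ∑' n, x n ^ 2 with hS₂def
  have hS₂0 : 0 ≤ S₂ := tsum_nonneg fun n => sq_nonneg _
  have hthr : ∀ u w : ℕ, t * x (min u w) * x (max u w) = t * x u * x w := by
    intro u w
    rcases le_total u w with h | h
    · rw [min_eq_left h, max_eq_right h]
    · rw [min_eq_right h, max_eq_left h]; ring
  let edge : ℕ → ℕ → Set Ω := fun u w => {ω | ξ (min u w) (max u w) ω ≤ t * x u * x w}
  let E : (Σ k : ℕ, Fin k → ℕ) → Set Ω := fun σ =>
    if Function.Injective (tupV i j σ.2) then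
      ⋂ m : Fin (σ.1 + 1), edge (tupV i j σ.2 m.castSucc) (tupV i j σ.2 m.succ)
    else ∅
  -- inclusion into the union
  have hsub : {ω | (expGraph ξ x t ω).Reachable i j} ⊆ ⋃ σ, E σ := by
    intro ω hω
    obtain ⟨w⟩ := hω
    obtain ⟨k, v, hinj, hadj, -⟩ := walk_tuple (w.toPath : SimpleGraph.Path _ i j).1 hij
      (w.toPath).2
    refine Set.mem_iUnion.mpr ⟨⟨k, v⟩, ?_⟩
    show ω ∈ E ⟨k, v⟩
    rw [show E ⟨k, v⟩ = _ from if_pos hinj]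
    refine Set.mem_iInter.mpr fun m => ?_
    have hadjm := hadj m
    rw [expGraph, SimpleGraph.fromRel_adj] at hadjm
    rcases hadjm.2 with hr | hr
    · exact hr
    · show ξ _ _ ω ≤ _
      rw [min_comm, max_comm] at hr
      calc ξ (min (tupV i j v m.castSucc) (tupV i j v m.succ))
            (max (tupV i j v m.castSucc) (tupV i j v m.succ)) ω
          ≤ t * x (tupV i j v m.succ) * x (tupV i j v m.castSucc) := hr
        _ = _ := by ring
  -- bound each event
  have hbound : ∀ σ : Σ k : ℕ, Fin k → ℕ, μ (E σ) ≤
      ENNReal.ofReal t * ENNReal.ofReal (x i) * ENNReal.ofReal (x j) *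
        ∏ m : Fin σ.1, (ENNReal.ofReal t * ENNReal.ofReal (x (σ.2 m)) ^ 2) := by
    rintro ⟨k, v⟩
    by_cases hinj : Function.Injective (tupV i j v)
    swap
    · rw [show E ⟨k, v⟩ = ∅ from if_neg hinj]
      simp
    rw [show E ⟨k, v⟩ = _ from if_pos hinj]
    set V : Fin (k + 2) → ℕ := tupV i j v with hVdef
    have hne : ∀ m : Fin (k + 1), V m.castSucc ≠ V m.succ := by
      intro m h
      have := congrArg Fin.val (hinj h)
      simp only [Fin.coe_castSucc, Fin.val_succ] at this
      omega
    let P : Fin (k + 1) → {p : ℕ × ℕ // p.1 < p.2} := fun m =>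
      ⟨(min (V m.castSucc) (V m.succ), max (V m.castSucc) (V m.succ)), min_lt_max.mpr (hne m)⟩
    have Pinj : Function.Injective P := by
      intro m m' hPP
      have h1 : min (V m.castSucc) (V m.succ) = min (V m'.castSucc) (V m'.succ) :=
        congrArg (fun p => p.1.1) hPP
      have h2 : max (V m.castSucc) (V m.succ) = max (V m'.castSucc) (V m'.succ) :=
        congrArg (fun p => p.1.2) hPP
      have hcases : (V m.castSucc = V m'.castSucc ∧ V m.succ = V m'.succ) ∨
          (V m.castSucc = V m'.succ ∧ V m.succ = V m'.castSucc) := by omega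
      rcases hcases with ⟨ha, _⟩ | ⟨ha, hb⟩
      · exact Fin.castSucc_injective _ (hinj ha)
      · have e1 := congrArg Fin.val (hinj ha)
        have e2 := congrArg Fin.val (hinj hb)
        simp only [Fin.coe_castSucc, Fin.val_succ] at e1 e2
        omega
    let sets : {p : ℕ × ℕ // p.1 < p.2} → Set ℝ := fun p => Set.Iic (t * x p.1.1 * x p.1.2)
    have hEeq : (⋂ m : Fin (k + 1), edge (V m.castSucc) (V m.succ)) =
        ⋂ p ∈ Finset.image P Finset.univ,
          (fun q : {p : ℕ × ℕ // p.1 < p.2} => ξ q.1.1 q.1.2) p ⁻¹' sets p := by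
      ext ω
      simp only [Set.mem_iInter, Finset.mem_image, Finset.mem_univ, true_and]
      constructor
      · rintro h p ⟨m, rfl⟩
        have := h m
        show ξ _ _ ω ∈ Set.Iic _
        rw [Set.mem_Iic, hthr]
        exact this
      · intro h m
        have := h (P m) ⟨m, rfl⟩
        rw [Set.mem_preimage, Set.mem_Iic, hthr] at this
        exact this
    rw [hEeq, hindep.measure_inter_preimage_eq_mul _ (fun p _ => measurableSet_Iic)]
    rw [Finset.prod_image (fun m _ m' _ h => Pinj h)]
    have hfac : ∀ m : Fin (k + 1),
        μ ((fun q : {p : ℕ × ℕ // p.1 < p.2} => ξ q.1.1 q.1.2) (P m) ⁻¹' sets (P m)) ≤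
          ENNReal.ofReal (t * x (V m.castSucc) * x (V m.succ)) := by
      intro m
      have hb := factor_bound μ (ξ (P m).1.1 (P m).1.2) (hmeas _ _)
        (t * x (P m).1.1 * x (P m).1.2)
        (hlaw _ _ (P m).2 _ (mul_nonneg (mul_nonneg ht (hx _)) (hx _)))
      calc μ _ ≤ ENNReal.ofReal (t * x (P m).1.1 * x (P m).1.2) := hb
        _ = ENNReal.ofReal (t * x (V m.castSucc) * x (V m.succ)) := by
            show ENNReal.ofReal (t * x (min _ _) * x (max _ _)) = _
            rw [hthr]
    calc ∏ m : Fin (k + 1),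
          μ ((fun q : {p : ℕ × ℕ // p.1 < p.2} => ξ q.1.1 q.1.2) (P m) ⁻¹' sets (P m))
        ≤ ∏ m : Fin (k + 1), ENNReal.ofReal (t * x (V m.castSucc) * x (V m.succ)) :=
          Finset.prod_le_prod' fun m _ => hfac m
      _ = ∏ m : Fin (k + 1),
            (ENNReal.ofReal t * ENNReal.ofReal (x (V m.castSucc)) *
              ENNReal.ofReal (x (V m.succ))) := by
          refine Finset.prod_congr rfl fun m _ => ?_
          rw [ENNReal.ofReal_mul (mul_nonneg ht (hx _)), ENNReal.ofReal_mul ht]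
      _ = ENNReal.ofReal t ^ (k + 1) *
            (∏ m : Fin (k + 1), ENNReal.ofReal (x (V m.castSucc))) *
            (∏ m : Fin (k + 1), ENNReal.ofReal (x (V m.succ))) := by
          rw [Finset.prod_mul_distrib, Finset.prod_mul_distrib, Finset.prod_const,
            Finset.card_univ, Fintype.card_fin]
      _ = ENNReal.ofReal t ^ (k + 1) *
            (ENNReal.ofReal (x i) * ∏ m : Fin k, ENNReal.ofReal (x (v m))) *
            ((∏ m : Fin k, ENNReal.ofReal (x (v m))) * ENNReal.ofReal (x j)) := by
          congr 1
          · congr 1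
            have h1 : ∀ m : Fin (k+1), ENNReal.ofReal (x (V m.castSucc)) =
                (Fin.cons (ENNReal.ofReal (x i))
                  (fun m => ENNReal.ofReal (x (v m))) : Fin (k+1) → ℝ≥0∞) m := by
              intro m
              rw [hVdef, tupV_castSucc]
              induction m using Fin.cases with
              | zero => simp
              | succ m₀ => simp
            rw [Finset.prod_congr rfl (fun m _ => h1 m), Fin.prod_cons]
          · have h2 : ∀ m : Fin (k+1), ENNReal.ofReal (x (V m.succ)) =
                (Fin.snoc (fun m => ENNReal.ofReal (x (v m)))
                  (ENNReal.ofReal (x j)) : Fin (k+1) → ℝ≥0∞) m := by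
              intro m
              rw [hVdef, tupV_succ]
              induction m using Fin.lastCases with
              | last => simp
              | cast m₀ => simp
            rw [Finset.prod_congr rfl (fun m _ => h2 m), Fin.prod_snoc]
      _ = ENNReal.ofReal t * ENNReal.ofReal (x i) * ENNReal.ofReal (x j) *
            ∏ m : Fin k, (ENNReal.ofReal t * ENNReal.ofReal (x (v m)) ^ 2) := by
          rw [Finset.prod_mul_distrib, Finset.prod_const, Finset.card_univ, Fintype.card_fin,
            Finset.prod_pow]
          ring
  -- put it together
  calc μ {ω | (expGraph ξ x t ω).Reachable i j}
      ≤ μ (⋃ σ, E σ) := measure_mono hsub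
    _ ≤ ∑' σ, μ (E σ) := measure_iUnion_le _
    _ ≤ ∑' σ : Σ k : ℕ, Fin k → ℕ,
          ENNReal.ofReal t * ENNReal.ofReal (x i) * ENNReal.ofReal (x j) *
            ∏ m : Fin σ.1, (ENNReal.ofReal t * ENNReal.ofReal (x (σ.2 m)) ^ 2) :=
        ENNReal.tsum_le_tsum hbound
    _ = ENNReal.ofReal t * ENNReal.ofReal (x i) * ENNReal.ofReal (x j) *
          ∑' k : ℕ, ENNReal.ofReal (t * S₂) ^ k := by
        rw [ENNReal.tsum_sigma', ← ENNReal.tsum_mul_left]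
        congr 1; ext k
        rw [ENNReal.tsum_mul_left,
          tsum_pi_fin (fun n => ENNReal.ofReal t * ENNReal.ofReal (x n) ^ 2) k]
        congr 2
        rw [ENNReal.tsum_mul_left, ENNReal.ofReal_mul ht]
        congr 1
        calc ∑' n : ℕ, ENNReal.ofReal (x n) ^ 2
            = ∑' n : ℕ, ENNReal.ofReal (x n ^ 2) := by
              congr 1; ext n; rw [ENNReal.ofReal_pow (hx n)]
          _ = ENNReal.ofReal (∑' n : ℕ, x n ^ 2) :=
              (ENNReal.ofReal_tsum_of_nonneg (fun n => sq_nonneg _) hx2).symm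
    _ = ENNReal.ofReal (x i * x j * t) * (1 - ENNReal.ofReal (t * S₂))⁻¹ := by
        rw [ENNReal.tsum_geometric]
        congr 1
        rw [show x i * x j * t = t * x i * x j by ring,
          ENNReal.ofReal_mul (mul_nonneg ht (hx i)), ENNReal.ofReal_mul ht]
    _ = ENNReal.ofReal (x i * x j * t / (1 - t * S₂)) := by
        rw [ENNReal.ofReal_div_of_pos (by linarith), div_eq_mul_inv]
        congr 1
        rw [ENNReal.ofReal_sub _ (mul_nonneg ht hS₂0), ENNReal.ofReal_one]
end

section
/- In the random graph G_t built from weights x ∈ ℓ₂⁺ (edge {i,j} present with probability 1 − exp(−t x_i x_j), independently), if the initial sum of squares S₂^{G₀} = ∑_i x_i² satisfies S₂^{G₀} ≤ 1/(2t), then the expected sum of squared component weights satisfies E[S₂^{G_t}] ≤ 2·S₂^{G₀}. -/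
open MeasureTheory ProbabilityTheory Filter
open scoped ENNReal

namespace Stmt3Aux

noncomputable def eE (t : ℝ) (x : ℕ → ℝ) (a b : ℕ) : ℝ≥0∞ :=
  ENNReal.ofReal t * ENNReal.ofReal (x a) * ENNReal.ofReal (x b)

noncomputable def FF (t : ℝ) (x : ℕ → ℝ) : ℕ → List ℕ → ℕ → ℝ≥0∞
  | a, [], v => eE t x a v
  | a, w :: l, v => eE t x a w * FF t x w l v

def pairsOf : ℕ → List ℕ → ℕ → List (ℕ × ℕ)
  | a, [], v => [(a, v)]
  | a, w :: l, v => (a, w) :: pairsOf w l v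

def psort (q : ℕ × ℕ) : {p : ℕ × ℕ // p.1 < p.2} :=
  if h : q.1 < q.2 then ⟨q, h⟩
  else if h' : q.2 < q.1 then ⟨(q.2, q.1), h'⟩ else ⟨(0, 1), Nat.one_pos⟩

lemma psort_val {a b : ℕ} (h : a ≠ b) :
    (psort (a, b)).1 = (a, b) ∨ (psort (a, b)).1 = (b, a) := by
  rcases lt_or_gt_of_ne h with h1 | h1
  · left; simp [psort, h1]
  · right; simp [psort, h1, not_lt_of_gt h1]

lemma psort_eq {a b c d : ℕ} (hab : a ≠ b) (hcd : c ≠ d)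
    (h : psort (a, b) = psort (c, d)) : (a = c ∧ b = d) ∨ (a = d ∧ b = c) := by
  have h' : (psort (a, b)).1 = (psort (c, d)).1 := by rw [h]
  rcases psort_val hab with h1 | h1 <;> rcases psort_val hcd with h2 | h2 <;>
    rw [h1, h2, Prod.mk.injEq] at h' <;> tauto

lemma mem_pairsOf : ∀ {a : ℕ} {l : List ℕ} {v : ℕ} {q : ℕ × ℕ},
    q ∈ pairsOf a l v → q.1 ∈ a :: (l ++ [v]) ∧ q.2 ∈ a :: (l ++ [v])
  | a, [], v, q, hq => by
    simp only [pairsOf, List.mem_singleton] at hq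
    subst hq; simp
  | a, w :: l, v, q, hq => by
    simp only [pairsOf, List.mem_cons] at hq
    rcases hq with hq | hq
    · subst hq; simp
    · have h2 := mem_pairsOf hq
      rw [List.cons_append]
      exact ⟨List.mem_cons_of_mem a h2.1, List.mem_cons_of_mem a h2.2⟩

lemma chain'_pairsOf {R : ℕ → ℕ → Prop} : ∀ {a : ℕ} {l : List ℕ} {v : ℕ},
    List.Chain' R (a :: (l ++ [v])) → ∀ q ∈ pairsOf a l v, R q.1 q.2
  | a, [], v, h, q, hq => by
    simp only [pairsOf, List.mem_singleton] at hq
    subst hq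
    exact List.isChain_pair.mp h
  | a, w :: l, v, h, q, hq => by
    rw [List.cons_append] at h; unfold List.Chain' at h; rw [List.isChain_cons_cons] at h
    simp only [pairsOf, List.mem_cons] at hq
    rcases hq with hq | hq
    · subst hq; exact h.1
    · exact chain'_pairsOf h.2 q hq

lemma ne_pairsOf : ∀ {a : ℕ} {l : List ℕ} {v : ℕ},
    (a :: (l ++ [v])).Nodup → ∀ q ∈ pairsOf a l v, q.1 ≠ q.2
  | a, [], v, h, q, hq => by
    simp only [pairsOf, List.mem_singleton] at hq
    subst hq
    simp only [List.nil_append, List.nodup_cons, List.mem_singleton] at h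
    exact h.1
  | a, w :: l, v, h, q, hq => by
    rw [List.cons_append] at h
    have h1 : a ∉ w :: (l ++ [v]) := (List.nodup_cons.mp h).1
    have h2 : (w :: (l ++ [v])).Nodup := (List.nodup_cons.mp h).2
    simp only [pairsOf, List.mem_cons] at hq
    rcases hq with hq | hq
    · subst hq
      intro hh
      have hh' : a = w := hh
      exact h1 (by rw [hh']; exact List.mem_cons_self)
    · exact ne_pairsOf h2 q hq

lemma nodup_map_psort : ∀ {a : ℕ} {l : List ℕ} {v : ℕ},
    (a :: (l ++ [v])).Nodup → ((pairsOf a l v).map psort).Nodup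
  | a, [], v, h => by simp [pairsOf]
  | a, w :: l, v, h => by
    rw [List.cons_append] at h
    have ha : a ∉ w :: (l ++ [v]) := (List.nodup_cons.mp h).1
    have h' : (w :: (l ++ [v])).Nodup := (List.nodup_cons.mp h).2
    simp only [pairsOf, List.map_cons, List.nodup_cons]
    refine ⟨?_, nodup_map_psort h'⟩
    intro hmem
    simp only [List.mem_map] at hmem
    obtain ⟨q, hq, hqe⟩ := hmem
    have hne : q.1 ≠ q.2 := ne_pairsOf h' q hq
    have haw : a ≠ w := fun hh => ha (by rw [hh]; exact List.mem_cons_self)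
    have hqe' : psort (q.1, q.2) = psort (a, w) := by
      rw [Prod.mk.eta]; exact hqe
    have hm := mem_pairsOf hq
    rcases psort_eq hne haw hqe' with ⟨h1, h2⟩ | ⟨h1, h2⟩
    · exact ha (by rw [← h1]; exact hm.1)
    · exact ha (by rw [← h2]; exact hm.2)

lemma prod_pairsOf_eE (t : ℝ) (x : ℕ → ℝ) : ∀ (a : ℕ) (l : List ℕ) (v : ℕ),
    ((pairsOf a l v).map fun q => eE t x q.1 q.2).prod = FF t x a l v
  | a, [], v => by simp [pairsOf, FF]
  | a, w :: l, v => by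
    simp [pairsOf, FF, prod_pairsOf_eE t x w l v]

lemma tsum_ofFn_FF (t : ℝ) (x : ℕ → ℝ) (v : ℕ) :
    ∀ (n : ℕ) (a : ℕ),
      ∑' f : Fin n → ℕ, FF t x a (List.ofFn f) v
        = (ENNReal.ofReal t * ∑' i, ENNReal.ofReal (x i) ^ 2) ^ n * eE t x a v := by
  intro n
  induction n with
  | zero =>
      intro a
      rw [tsum_eq_single (fun i => i.elim0) (fun b hb =>
        absurd (Subsingleton.elim b _) hb)]
      simp [FF]
  | succ n ih =>
      intro a
      rw [← (Fin.consEquiv (fun _ : Fin (n + 1) => ℕ)).tsum_eq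
        (fun f => FF t x a (List.ofFn f) v)]
      have hof : ∀ (p : ℕ × (Fin n → ℕ)),
          FF t x a (List.ofFn ((Fin.consEquiv (fun _ : Fin (n+1) => ℕ)) (p.1, p.2))) v
            = eE t x a p.1 * FF t x p.1 (List.ofFn p.2) v := by
        intro p
        have : List.ofFn ((Fin.consEquiv (fun _ : Fin (n+1) => ℕ)) (p.1, p.2))
            = p.1 :: List.ofFn p.2 := by
          simp [List.ofFn_succ, Fin.consEquiv]
        rw [this]
        rfl
      calc ∑' p : ℕ × (Fin n → ℕ),
              FF t x a (List.ofFn ((Fin.consEquiv (fun _ : Fin (n+1) => ℕ)) p)) v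
          = ∑' (w : ℕ) (f : Fin n → ℕ), eE t x a w * FF t x w (List.ofFn f) v := by
            rw [← ENNReal.tsum_prod (f := fun w f => eE t x a w * FF t x w (List.ofFn f) v)]
            exact tsum_congr fun p => hof p
        _ = ∑' (w : ℕ), eE t x a w *
              ((ENNReal.ofReal t * ∑' i, ENNReal.ofReal (x i) ^ 2) ^ n * eE t x w v) := by
            refine tsum_congr fun w => ?_
            rw [ENNReal.tsum_mul_left, ih w]
        _ = (ENNReal.ofReal t * ∑' i, ENNReal.ofReal (x i) ^ 2) ^ (n + 1) * eE t x a v := by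
            have hrw : ∀ w : ℕ, eE t x a w *
                ((ENNReal.ofReal t * ∑' i, ENNReal.ofReal (x i) ^ 2) ^ n * eE t x w v)
                = ((ENNReal.ofReal t * ∑' i, ENNReal.ofReal (x i) ^ 2) ^ n *
                    (ENNReal.ofReal t * ENNReal.ofReal t *
                      (ENNReal.ofReal (x a) * ENNReal.ofReal (x v))))
                  * ENNReal.ofReal (x w) ^ 2 := by
              intro w; simp only [eE]; ring
            rw [tsum_congr hrw, ENNReal.tsum_mul_left]
            simp only [eE]
            ring

lemma tsum_FF_le (t : ℝ) (x : ℕ → ℝ) (u v : ℕ)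
    (hr : ENNReal.ofReal t * ∑' i, ENNReal.ofReal (x i) ^ 2 ≤ 2⁻¹) :
    ∑' l : List ℕ, FF t x u l v ≤ 2 * eE t x u v := by
  set r := ENNReal.ofReal t * ∑' i, ENNReal.ofReal (x i) ^ 2 with hrdef
  have h1 : ∑' l : List ℕ, FF t x u l v
      = ∑' s : Σ n, Fin n → ℕ, FF t x u (List.ofFn s.2) v := by
    rw [← ((@List.equivSigmaTuple ℕ).symm.tsum_eq (fun l => FF t x u l v))]
    exact tsum_congr fun s => by cases s; rfl
  rw [h1, ENNReal.tsum_sigma']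
  have h2 : ∀ n : ℕ, ∑' f : Fin n → ℕ, FF t x u (List.ofFn f) v = r ^ n * eE t x u v :=
    fun n => tsum_ofFn_FF t x v n u
  rw [tsum_congr h2, ENNReal.tsum_mul_right, ENNReal.tsum_geometric]
  have h3 : (1 - r)⁻¹ ≤ 2 := by
    have : (2 : ℝ≥0∞)⁻¹ ≤ 1 - r := by
      have h4 : (1 : ℝ≥0∞) - 2⁻¹ = 2⁻¹ := ENNReal.one_sub_inv_two
      calc (2:ℝ≥0∞)⁻¹ = 1 - 2⁻¹ := h4.symm
        _ ≤ 1 - r := tsub_le_tsub le_rfl hr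
    calc (1 - r)⁻¹ ≤ ((2:ℝ≥0∞)⁻¹)⁻¹ := ENNReal.inv_le_inv' this
      _ = 2 := by simp
  exact mul_le_mul_left h3 _

lemma walk_support_concat {V : Type*} {G : SimpleGraph V} {b v : V} (q : G.Walk b v) :
    ∃ l', q.support = l' ++ [v] := by
  induction q with
  | nil => exact ⟨[], by simp⟩
  | @cons a b c h q ih =>
      obtain ⟨l', hl'⟩ := ih
      exact ⟨a :: l', by simp [hl']⟩

lemma reachable_chain {V : Type*} [DecidableEq V] {G : SimpleGraph V} {u v : V} (hne : u ≠ v)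
    (h : G.Reachable u v) :
    ∃ l : List V, (u :: (l ++ [v])).Nodup ∧ List.Chain' G.Adj (u :: (l ++ [v])) := by
  obtain ⟨w⟩ := h
  obtain ⟨l', hl'⟩ := walk_support_concat w.bypass
  have hnd := w.bypass_isPath.support_nodup
  have hch := w.bypass.isChain_adj_support
  have hsup := w.bypass.support_eq_cons
  rw [hsup] at hl'
  cases l' with
  | nil =>
      simp only [List.nil_append] at hl'
      have : u = v := by
        have := congrArg List.head? hl'
        simp only [List.head?_cons, Option.some.injEq] at this; exact this
      exact (hne this).elim
  | cons a l'' =>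
      rw [List.cons_append] at hl'
      have h1 : u = a := by
        have := congrArg List.head? hl'
        simp only [List.head?_cons, Option.some.injEq] at this; exact this
      subst h1
      have h2 : w.bypass.support.tail = l'' ++ [v] := by
        have := congrArg List.tail hl'
        simpa using this
      rw [h2] at hsup
      rw [hsup] at hnd hch
      exact ⟨l'', hnd, hch⟩

lemma list_prod_le {α : Type*} (f g : α → ℝ≥0∞) : ∀ (P : List α),
    (∀ q ∈ P, f q ≤ g q) → (P.map f).prod ≤ (P.map g).prod
  | [], _ => le_rfl
  | a :: P, h => by
    simp only [List.map_cons, List.prod_cons]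
    exact mul_le_mul' (h a List.mem_cons_self)
      (list_prod_le f g P fun q hq => h q (List.mem_cons_of_mem _ hq))

end Stmt3Aux

/-- If each edge `{i,j}` is present independently with probability `1 - exp(-t x_i x_j)`
and `S₂^{G₀} = ∑ x_i² ≤ 1/(2t)`, then `E[S₂^{G_t}] ≤ 2 S₂^{G₀}`. -/
theorem stmt3 {Ω : Type*} [MeasurableSpace Ω] (μ : Measure Ω) [IsProbabilityMeasure μ]
    (x : ℕ → ℝ) (hx : ∀ i, 0 ≤ x i) (hx2 : Summable fun i => x i ^ 2)
    (t : ℝ) (ht : 0 ≤ t)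
    (G : Ω → SimpleGraph ℕ)
    (hprob : ∀ i j : ℕ, i < j →
      μ {ω | (G ω).Adj i j} = ENNReal.ofReal (1 - Real.exp (-(t * x i * x j))))
    (hindep : iIndepSet
      (fun p : {p : ℕ × ℕ // p.1 < p.2} => {ω | (G ω).Adj p.1.1 p.1.2}) μ)
    (hsmall : (∑' i, x i ^ 2) * (2 * t) ≤ 1) :
    ∫⁻ ω, S2E x (G ω) ∂μ ≤ ENNReal.ofReal (2 * ∑' i, x i ^ 2) := by
  classical
  open Stmt3Aux in
  -- notation
  set X : ℕ → ℝ≥0∞ := fun i => ENNReal.ofReal (x i) with hX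
  set S : ℝ≥0∞ := ∑' i, X i ^ 2 with hSdef
  have hS : S = ENNReal.ofReal (∑' i, x i ^ 2) := by
    rw [hSdef, ENNReal.ofReal_tsum_of_nonneg (fun i => sq_nonneg (x i)) hx2]
    exact tsum_congr fun i => (ENNReal.ofReal_pow (hx i) 2).symm
  have hStop : S ≠ ∞ := by rw [hS]; exact ENNReal.ofReal_ne_top
  have hr : ENNReal.ofReal t * S ≤ 2⁻¹ := by
    rw [hS, ← ENNReal.ofReal_mul ht]
    have h2 : t * (∑' i, x i ^ 2) ≤ 2⁻¹ := by nlinarith [hsmall]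
    calc ENNReal.ofReal (t * ∑' i, x i ^ 2) ≤ ENNReal.ofReal 2⁻¹ :=
          ENNReal.ofReal_le_ofReal h2
      _ = 2⁻¹ := by
          rw [ENNReal.ofReal_inv_of_pos (by norm_num : (0:ℝ) < 2)]
          norm_num
  -- the independent edge events
  set A : {p : ℕ × ℕ // p.1 < p.2} → Set Ω :=
    fun p => {ω | (G ω).Adj p.1.1 p.1.2} with hA
  -- measure of a sorted edge event
  have hAle : ∀ q : ℕ × ℕ, q.1 ≠ q.2 → μ (A (psort q)) ≤ eE t x q.1 q.2 := by
    intro q hne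
    have hexp : ∀ a b : ℕ, ENNReal.ofReal (1 - Real.exp (-(t * x a * x b)))
        ≤ ENNReal.ofReal (t * (x a * x b)) := by
      intro a b
      apply ENNReal.ofReal_le_ofReal
      have := Real.add_one_le_exp (-(t * x a * x b))
      nlinarith [this]
    have heE : ∀ a b : ℕ, ENNReal.ofReal (t * (x a * x b)) = eE t x a b := by
      intro a b
      rw [ENNReal.ofReal_mul ht, ENNReal.ofReal_mul (hx a), eE, mul_assoc]
    rcases lt_or_gt_of_ne hne with h | h
    · have hps : psort q = ⟨(q.1, q.2), h⟩ := by
        simp [psort, h]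
      rw [hps]
      have := hprob q.1 q.2 h
      simp only [hA]
      rw [this]
      exact (hexp q.1 q.2).trans_eq (heE q.1 q.2)
    · have hps : psort q = ⟨(q.2, q.1), h⟩ := by
        simp [psort, h, not_lt_of_gt h]
      rw [hps]
      have := hprob q.2 q.1 h
      simp only [hA]
      rw [this]
      refine (hexp q.2 q.1).trans_eq ?_
      rw [mul_comm (x q.2) (x q.1), heE q.1 q.2]
  -- chain events
  set Ec : ℕ → List ℕ → ℕ → Set Ω :=
    fun u l v => ⋂ q ∈ pairsOf u l v, {ω | (G ω).Adj q.1 q.2} with hEc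
  have hEc_le : ∀ (u : ℕ) (l : List ℕ) (v : ℕ), (u :: (l ++ [v])).Nodup →
      μ (Ec u l v) ≤ FF t x u l v := by
    intro u l v hnd
    have hset : Ec u l v = ⋂ i ∈ ((pairsOf u l v).map psort).toFinset, A i := by
      ext ω
      simp only [hEc, Set.mem_iInter, List.mem_toFinset, List.mem_map]
      constructor
      · rintro hω i ⟨q, hq, rfl⟩
        have hne := ne_pairsOf hnd q hq
        have hadj : (G ω).Adj q.1 q.2 := hω q hq
        rcases psort_val (a := q.1) (b := q.2) hne with hv | hv <;>
          · simp only [hA, Set.mem_setOf_eq, Prod.mk.eta] at *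
            rw [hv]
            first
              | exact hadj
              | exact hadj.symm
      · intro hω q hq
        have hne := ne_pairsOf hnd q hq
        have := hω (psort q) ⟨q, hq, rfl⟩
        simp only [hA, Set.mem_setOf_eq] at this
        rcases psort_val (a := q.1) (b := q.2) hne with hv | hv <;>
          · rw [Prod.mk.eta] at hv
            rw [hv] at this
            simp only [Set.mem_setOf_eq]
            first
              | exact this
              | exact this.symm
    rw [hset, hindep.meas_biInter,
      List.prod_toFinset (fun i => μ (A i)) (nodup_map_psort hnd), List.map_map]
    calc ((pairsOf u l v).map (fun q => μ (A (psort q)))).prod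
        ≤ ((pairsOf u l v).map (fun q => eE t x q.1 q.2)).prod :=
          list_prod_le _ _ _ fun q hq => hAle q (ne_pairsOf hnd q hq)
      _ = FF t x u l v := prod_pairsOf_eE t x u l v
  set D : ℕ → ℕ → List ℕ → Set Ω :=
    fun u v l => if (u :: (l ++ [v])).Nodup then Ec u l v else ∅ with hD
  have hD_le : ∀ (u v : ℕ) (l : List ℕ), μ (D u v l) ≤ FF t x u l v := by
    intro u v l
    by_cases hnd : (u :: (l ++ [v])).Nodup
    · simp only [hD, if_pos hnd]; exact hEc_le u l v hnd
    · have hempty : D u v l = ∅ := by simp only [hD]; rw [if_neg hnd]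
      rw [hempty]
      simp
  have hcover : ∀ u v : ℕ, u ≠ v →
      {ω | (G ω).connectedComponentMk u = (G ω).connectedComponentMk v}
        ⊆ ⋃ l : List ℕ, D u v l := by
    intro u v hne ω hω
    have hreach : (G ω).Reachable u v := SimpleGraph.ConnectedComponent.exact hω
    obtain ⟨l, hnd, hch⟩ := reachable_chain hne hreach
    refine Set.mem_iUnion.mpr ⟨l, ?_⟩
    simp only [hD, if_pos hnd, hEc, Set.mem_iInter]
    intro q hq
    exact chain'_pairsOf hch q hq
  -- measurable hulls
  obtain ⟨T, hT⟩ : ∃ T : ℕ → ℕ → List ℕ → Set Ω, ∀ u v l,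
      D u v l ⊆ T u v l ∧ MeasurableSet (T u v l) ∧ μ (T u v l) = μ (D u v l) :=
    ⟨fun u v l => (exists_measurable_superset μ (D u v l)).choose,
     fun u v l => (exists_measurable_superset μ (D u v l)).choose_spec⟩
  -- the majorant
  set h : ℕ × ℕ → Ω → ℝ≥0∞ := fun p ω => X p.1 * X p.2 *
    (if p.1 = p.2 then 1
     else ∑' l : List ℕ, (T p.1 p.2 l).indicator (fun _ => (1:ℝ≥0∞)) ω) with hh
  have hmeas : ∀ p : ℕ × ℕ, Measurable (h p) := by
    intro p
    by_cases hp : p.1 = p.2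
    · simp only [hh, if_pos hp]
      exact measurable_const
    · simp only [hh, if_neg hp]
      exact (Measurable.ennreal_tsum fun l =>
        measurable_const.indicator (hT p.1 p.2 l).2.1).const_mul _
  -- pointwise bound
  have hpt : ∀ ω, S2E x (G ω) ≤ ∑' p : ℕ × ℕ, h p ω := by
    intro ω
    have hstep1 : S2E x (G ω) ≤ ∑' p : ℕ × ℕ,
        (if (G ω).connectedComponentMk p.1 = (G ω).connectedComponentMk p.2
          then X p.1 * X p.2 else 0) := by
      have hcomp : ∀ C : (G ω).ConnectedComponent, compWE x (G ω) C ^ 2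
          = ∑' q : {a // (G ω).connectedComponentMk a = C} ×
              {b // (G ω).connectedComponentMk b = C}, X q.1.1 * X q.2.1 := by
        intro C
        rw [sq, compWE]
        rw [← ENNReal.tsum_mul_right]
        rw [ENNReal.tsum_prod (f := fun a b : {v // (G ω).connectedComponentMk v = C} =>
          X a.1 * X b.1)]
        exact tsum_congr fun a => (ENNReal.tsum_mul_left).symm
      rw [S2E, tsum_congr hcomp, ← ENNReal.tsum_sigma'
        (f := fun s : Σ C : (G ω).ConnectedComponent,
          {a // (G ω).connectedComponentMk a = C} ×
            {b // (G ω).connectedComponentMk b = C} => X s.2.1.1 * X s.2.2.1)]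
      refine Summable.tsum_le_tsum_of_inj (fun s => (s.2.1.1, s.2.2.1)) ?_
        (fun _ _ => zero_le) ?_ ENNReal.summable ENNReal.summable
      · rintro ⟨C, ⟨a, ha⟩, ⟨b, hb⟩⟩ ⟨C', ⟨a', ha'⟩, ⟨b', hb'⟩⟩ hval
        simp only [Prod.mk.injEq] at hval
        obtain ⟨h1, h2⟩ := hval
        subst h1; subst h2
        have : C = C' := by rw [← ha, ha']
        subst this
        rfl
      · rintro ⟨C, ⟨a, ha⟩, ⟨b, hb⟩⟩
        simp only
        rw [if_pos (by rw [ha, hb])]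
    refine hstep1.trans (Summable.tsum_le_tsum ?_ ENNReal.summable ENNReal.summable)
    intro p
    by_cases hpe : p.1 = p.2
    · simp only [hh, if_pos hpe]
      split_ifs with hcc
      · exact le_of_eq (mul_one _).symm
      · exact zero_le
    · simp only [hh, if_neg hpe]
      split_ifs with hcc
      · have hωmem : ω ∈ ⋃ l : List ℕ, D p.1 p.2 l := hcover p.1 p.2 hpe hcc
        obtain ⟨l, hl⟩ := Set.mem_iUnion.mp hωmem
        have hωT : ω ∈ T p.1 p.2 l := (hT p.1 p.2 l).1 hl
        have hone : (1:ℝ≥0∞) ≤ ∑' l' : List ℕ,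
            (T p.1 p.2 l').indicator (fun _ => (1:ℝ≥0∞)) ω := by
          have := ENNReal.le_tsum (f := fun l' : List ℕ =>
            (T p.1 p.2 l').indicator (fun _ => (1:ℝ≥0∞)) ω) l
          rwa [Set.indicator_of_mem hωT] at this
        calc X p.1 * X p.2 = X p.1 * X p.2 * 1 := (mul_one _).symm
          _ ≤ _ := mul_le_mul_right hone _
      · exact zero_le
  -- integrate
  calc ∫⁻ ω, S2E x (G ω) ∂μ ≤ ∫⁻ ω, ∑' p : ℕ × ℕ, h p ω ∂μ := lintegral_mono hpt
    _ = ∑' p : ℕ × ℕ, ∫⁻ ω, h p ω ∂μ :=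
        lintegral_tsum fun p => (hmeas p).aemeasurable
    _ ≤ ∑' p : ℕ × ℕ, ((if p.1 = p.2 then X p.1 * X p.2 else 0)
          + 2 * ENNReal.ofReal t * (X p.1 ^ 2 * X p.2 ^ 2)) := by
        refine Summable.tsum_le_tsum ?_ ENNReal.summable ENNReal.summable
        intro p
        by_cases hpe : p.1 = p.2
        · have : ∫⁻ ω, h p ω ∂μ = X p.1 * X p.2 := by
            simp only [hh, if_pos hpe, mul_one]
            simp [lintegral_const]
          rw [this, if_pos hpe]
          exact self_le_add_right _ _
        · have hint : ∫⁻ ω, h p ω ∂μ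
              = X p.1 * X p.2 * ∑' l : List ℕ, μ (T p.1 p.2 l) := by
            simp only [hh, if_neg hpe]
            rw [lintegral_const_mul _ (Measurable.ennreal_tsum fun l =>
              measurable_const.indicator (hT p.1 p.2 l).2.1)]
            congr 1
            rw [lintegral_tsum fun l =>
              (measurable_const.indicator (hT p.1 p.2 l).2.1).aemeasurable]
            exact tsum_congr fun l => lintegral_indicator_one (hT p.1 p.2 l).2.1
          rw [hint, if_neg hpe]
          have hsum : ∑' l : List ℕ, μ (T p.1 p.2 l) ≤ 2 * eE t x p.1 p.2 := by
            have h1 : ∑' l : List ℕ, μ (T p.1 p.2 l) = ∑' l : List ℕ, μ (D p.1 p.2 l) :=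
              tsum_congr fun l => (hT p.1 p.2 l).2.2
            rw [h1]
            refine le_trans (Summable.tsum_le_tsum (fun l => hD_le p.1 p.2 l)
              ENNReal.summable ENNReal.summable) ?_
            exact tsum_FF_le t x p.1 p.2 hr
          calc X p.1 * X p.2 * ∑' l : List ℕ, μ (T p.1 p.2 l)
              ≤ X p.1 * X p.2 * (2 * eE t x p.1 p.2) := mul_le_mul_right hsum _
            _ = 2 * ENNReal.ofReal t * (X p.1 ^ 2 * X p.2 ^ 2) := by
                simp only [eE, hX]; ring
            _ ≤ _ := le_add_self
    _ = (∑' a : ℕ, X a ^ 2) + 2 * ENNReal.ofReal t * (S * S) := by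
        rw [ENNReal.tsum_add]
        congr 1
        · rw [ENNReal.tsum_prod (f := fun a b =>
            if a = b then X a * X b else 0)]
          refine tsum_congr fun a => ?_
          rw [tsum_eq_single a (fun b hb => if_neg fun hc => hb hc.symm)]
          rw [if_pos rfl, sq]
        · rw [ENNReal.tsum_prod (f := fun a b =>
            2 * ENNReal.ofReal t * (X a ^ 2 * X b ^ 2))]
          calc ∑' (a : ℕ) (b : ℕ), 2 * ENNReal.ofReal t * (X a ^ 2 * X b ^ 2)
              = ∑' a : ℕ, 2 * ENNReal.ofReal t * X a ^ 2 * S := by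
                refine tsum_congr fun a => ?_
                rw [← ENNReal.tsum_mul_left]
                refine tsum_congr fun b => by ring
            _ = 2 * ENNReal.ofReal t * (S * S) := by
                have hr2 : ∀ a : ℕ, 2 * ENNReal.ofReal t * X a ^ 2 * S
                    = (2 * ENNReal.ofReal t * S) * X a ^ 2 := fun a => by ring
                rw [tsum_congr hr2, ENNReal.tsum_mul_left]
                ring
    _ ≤ S + S := by
        refine add_le_add le_rfl ?_
        calc 2 * ENNReal.ofReal t * (S * S) = 2 * (ENNReal.ofReal t * S) * S := by ring
          _ ≤ 2 * 2⁻¹ * S := by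
              exact mul_le_mul_left (mul_le_mul_right hr 2) S
          _ = S := by
              rw [ENNReal.mul_inv_cancel (by norm_num) (by norm_num), one_mul]
    _ = ENNReal.ofReal (2 * ∑' i, x i ^ 2) := by
        rw [← two_mul, hS, ← ENNReal.ofReal_ofNat 2, ← ENNReal.ofReal_mul (by norm_num)]
end

section
/- For any t ≥ 0 and x ∈ ℓ₂⁺, almost surely S₂^{G_t} < ∞, and in particular all connected components of G_t have finite total weight almost surely. -/
open MeasureTheory ProbabilityTheory Filter
open scoped ENNReal

namespace S4

open SimpleGraph

variable {Ω : Type*}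

noncomputable def ee (x : ℕ → ℝ) (i : ℕ) : ℝ≥0∞ := ENNReal.ofReal (x i)

noncomputable def eeT (x : ℕ → ℝ) (N i : ℕ) : ℝ≥0∞ := if N ≤ i then ENNReal.ofReal (x i) else 0

noncomputable def tailG (ξ : ℕ → ℕ → Ω → ℝ) (x : ℕ → ℝ) (t : ℝ) (N : ℕ) (ω : Ω) :
    SimpleGraph ℕ :=
  SimpleGraph.fromRel (fun i j => N ≤ i ∧ N ≤ j ∧ ξ (min i j) (max i j) ω ≤ t * x i * x j)

lemma expGraph_adj {ξ : ℕ → ℕ → Ω → ℝ} {x : ℕ → ℝ} {t : ℝ} {ω : Ω} {a b : ℕ} :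
    (expGraph ξ x t ω).Adj a b ↔ a ≠ b ∧ ξ (min a b) (max a b) ω ≤ t * x a * x b := by
  rw [expGraph, SimpleGraph.fromRel_adj]
  constructor
  · rintro ⟨hne, h | h⟩
    · exact ⟨hne, h⟩
    · refine ⟨hne, ?_⟩
      rw [min_comm b a, max_comm b a] at h
      exact le_trans h (le_of_eq (by ring))
  · rintro ⟨hne, h⟩; exact ⟨hne, Or.inl h⟩

lemma tailG_adj {ξ : ℕ → ℕ → Ω → ℝ} {x : ℕ → ℝ} {t : ℝ} {N : ℕ} {ω : Ω} {a b : ℕ} :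
    (tailG ξ x t N ω).Adj a b ↔
      a ≠ b ∧ N ≤ a ∧ N ≤ b ∧ ξ (min a b) (max a b) ω ≤ t * x a * x b := by
  rw [tailG, SimpleGraph.fromRel_adj]
  constructor
  · rintro ⟨hne, ⟨h1, h2, h⟩ | ⟨h1, h2, h⟩⟩
    · exact ⟨hne, h1, h2, h⟩
    · refine ⟨hne, h2, h1, ?_⟩
      rw [min_comm b a, max_comm b a] at h
      exact le_trans h (le_of_eq (by ring))
  · rintro ⟨hne, h1, h2, h⟩; exact ⟨hne, Or.inl ⟨h1, h2, h⟩⟩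

lemma tailG_le {ξ : ℕ → ℕ → Ω → ℝ} {x : ℕ → ℝ} {t : ℝ} {N : ℕ} {ω : Ω} :
    tailG ξ x t N ω ≤ expGraph ξ x t ω := by
  intro a b h
  rw [tailG_adj] at h
  exact expGraph_adj.2 ⟨h.1, h.2.2.2⟩

/-- vertices of the tail graph reachable from a vertex `< N` through an edge -/
def Zset (ξ : ℕ → ℕ → Ω → ℝ) (x : ℕ → ℝ) (t : ℝ) (N : ℕ) (ω : Ω) : Set ℕ :=
  {v | ∃ u j, N ≤ u ∧ j < N ∧ (tailG ξ x t N ω).Reachable v u ∧ (expGraph ξ x t ω).Adj u j}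

lemma walk_split {ξ : ℕ → ℕ → Ω → ℝ} {x : ℕ → ℝ} {t : ℝ} {N : ℕ} {ω : Ω} {v k : ℕ}
    (w : (expGraph ξ x t ω).Walk v k) :
    N ≤ v → ((N ≤ k ∧ (tailG ξ x t N ω).Reachable v k) ∨ v ∈ Zset ξ x t N ω) := by
  induction w with
  | nil => exact fun hv => Or.inl ⟨hv, Reachable.refl _⟩
  | @cons a b c h p ih =>
    intro hv
    by_cases hb : N ≤ b
    · have hadj : (tailG ξ x t N ω).Adj a b := by
        rw [expGraph_adj] at h
        exact tailG_adj.2 ⟨h.1, hv, hb, h.2⟩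
      rcases ih hb with ⟨hk, hr⟩ | ⟨u, j, h1, h2, h3, h4⟩
      · exact Or.inl ⟨hk, hadj.reachable.trans hr⟩
      · exact Or.inr ⟨u, j, h1, h2, hadj.reachable.trans h3, h4⟩
    · exact Or.inr ⟨a, b, hv, not_le.1 hb, Reachable.refl _, h⟩

lemma reach_iff (H : SimpleGraph ℕ) (u v : ℕ) :
    H.Reachable u v ↔ ∃ n, ∃ g : Fin (n+1) → ℕ, g 0 = u ∧ g (Fin.last n) = v ∧
      ∀ i : Fin n, H.Adj (g i.castSucc) (g i.succ) := by
  constructor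
  · intro h
    obtain ⟨w⟩ := h
    refine ⟨w.length, fun i => w.getVert i.1, w.getVert_zero, w.getVert_length, fun i => ?_⟩
    exact w.adj_getVert_succ i.2
  · rintro ⟨n, g, h0, hl, hadj⟩
    subst h0
    induction n with
    | zero => rw [← hl]; rfl
    | succ n ih =>
      have h1 : H.Reachable (g 0) (g 1) := by
        have := (hadj 0).reachable
        simpa using this
      refine h1.trans (ih (g ∘ Fin.succ) ?_ ?_)
      · rw [← hl]; simp [Function.comp, Fin.succ_last]
      · intro i
        have := hadj i.succ
        rwa [← Fin.succ_castSucc] at this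
  
lemma getVert_inj {H : SimpleGraph ℕ} {u v : ℕ} (p : H.Walk u v) (hnd : p.support.Nodup) :
    ∀ {i j : ℕ}, i ≤ p.length → j ≤ p.length → p.getVert i = p.getVert j → i = j := by
  induction p with
  | nil => intro i j hi hj _; simp only [SimpleGraph.Walk.length_nil] at hi hj; omega
  | @cons a b c h q ih =>
    rw [SimpleGraph.Walk.support_cons, List.nodup_cons] at hnd
    intro i j hi hj hij
    rw [SimpleGraph.Walk.length_cons] at hi hj
    match i, j with
    | 0, 0 => rfl
    | 0, (m+1) =>
      exfalso
      apply hnd.1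
      rw [SimpleGraph.Walk.mem_support_iff_exists_getVert]
      rw [SimpleGraph.Walk.getVert_cons_succ, SimpleGraph.Walk.getVert_zero] at hij
      exact ⟨m, hij.symm, by omega⟩
    | (m+1), 0 =>
      exfalso
      apply hnd.1
      rw [SimpleGraph.Walk.mem_support_iff_exists_getVert]
      rw [SimpleGraph.Walk.getVert_cons_succ, SimpleGraph.Walk.getVert_zero] at hij
      exact ⟨m, hij, by omega⟩
    | (m+1), (l+1) =>
      rw [SimpleGraph.Walk.getVert_cons_succ, SimpleGraph.Walk.getVert_cons_succ] at hij
      have := ih hnd.2 (by omega) (by omega) hij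
      omega

lemma exists_good_seq {H : SimpleGraph ℕ} {u v : ℕ} (h : H.Reachable u v) (hne : u ≠ v) :
    ∃ k, ∃ f : Fin (k+1) → ℕ,
      Function.Injective (Fin.cons u f : Fin (k+2) → ℕ) ∧
      (Fin.cons u f : Fin (k+2) → ℕ) (Fin.last (k+1)) = v ∧
      ∀ i : Fin (k+1), H.Adj ((Fin.cons u f : Fin (k+2) → ℕ) i.castSucc)
        ((Fin.cons u f : Fin (k+2) → ℕ) i.succ) := by
  classical
  obtain ⟨w0⟩ := h
  set p := w0.toPath with hp
  set w : H.Walk u v := p.1 with hw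
  have hnd : w.support.Nodup := p.2.support_nodup
  have hlen : w.length ≠ 0 := by
    intro h0
    exact hne (SimpleGraph.Walk.eq_of_length_eq_zero h0)
  obtain ⟨k, hk⟩ : ∃ k, w.length = k + 1 := ⟨w.length - 1, by omega⟩
  have key : ∀ i : Fin (k+2),
      (Fin.cons u (fun i : Fin (k+1) => w.getVert (i.1+1)) : Fin (k+2) → ℕ) i = w.getVert i.1 := by
    intro i
    induction i using Fin.cases with
    | zero => simp [w.getVert_zero]
    | succ j => simp
  refine ⟨k, fun i => w.getVert (i.1 + 1), ?_, ?_, ?_⟩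
  · intro a b hab
    rw [key a, key b] at hab
    exact Fin.ext (getVert_inj w hnd (by omega) (by omega) hab)
  · rw [key (Fin.last (k+1))]
    have := w.getVert_length
    rw [hk] at this
    exact this
  · intro i
    rw [key i.castSucc, key i.succ]
    have h1 : (i.succ : ℕ) = i.1 + 1 := rfl
    have h2 : (i.castSucc : ℕ) = i.1 := rfl
    rw [h1, h2]
    exact w.adj_getVert_succ (by have := i.2; omega)

/-- the component-pair equivalence -/
def pairEquiv (G : SimpleGraph ℕ) :
    (Σ C : G.ConnectedComponent,
      {v : ℕ // G.connectedComponentMk v = C} × {u : ℕ // G.connectedComponentMk u = C}) ≃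
    {p : ℕ × ℕ // G.connectedComponentMk p.1 = G.connectedComponentMk p.2} where
  toFun := fun ⟨C, vp, up⟩ => ⟨(vp.1, up.1), vp.2.trans up.2.symm⟩
  invFun := fun ⟨p, h⟩ => ⟨G.connectedComponentMk p.1, ⟨p.1, rfl⟩, ⟨p.2, h.symm⟩⟩
  left_inv := by rintro ⟨C, ⟨v, rfl⟩, ⟨u, hu⟩⟩; rfl
  right_inv := by rintro ⟨⟨v, u⟩, h⟩; rfl

open scoped Classical in
lemma S2E_eq (x : ℕ → ℝ) (G : SimpleGraph ℕ) :
    S2E x G = ∑' p : ℕ × ℕ,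
      (if G.Reachable p.1 p.2 then ee x p.1 * ee x p.2 else 0) := by
  classical
  have step1 : S2E x G = ∑' C : G.ConnectedComponent,
      ∑' vp : {v : ℕ // G.connectedComponentMk v = C} × {u : ℕ // G.connectedComponentMk u = C},
        ee x vp.1.1 * ee x vp.2.1 := by
    unfold S2E compWE
    congr 1
    funext C
    rw [pow_two, ← ENNReal.tsum_mul_right]
    rw [ENNReal.tsum_prod']
    congr 1
    funext v
    rw [← ENNReal.tsum_mul_left]
    rfl
  have step15 := ENNReal.tsum_sigma'
    (f := fun s : (Σ C : G.ConnectedComponent,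
      {v : ℕ // G.connectedComponentMk v = C} × {u : ℕ // G.connectedComponentMk u = C}) =>
      ee x s.2.1.1 * ee x s.2.2.1)
  have step16 := Equiv.tsum_eq (pairEquiv G)
    (fun p : {p : ℕ × ℕ // G.connectedComponentMk p.1 = G.connectedComponentMk p.2} =>
      ee x p.1.1 * ee x p.1.2)
  have step17 : ∀ s : (Σ C : G.ConnectedComponent,
      {v : ℕ // G.connectedComponentMk v = C} × {u : ℕ // G.connectedComponentMk u = C}),
      (fun p : {p : ℕ × ℕ // G.connectedComponentMk p.1 = G.connectedComponentMk p.2} =>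
        ee x p.1.1 * ee x p.1.2) (pairEquiv G s) = ee x s.2.1.1 * ee x s.2.2.1 := by
    rintro ⟨C, vp, up⟩; rfl
  have step2 : ∑' (p : {p : ℕ × ℕ // G.connectedComponentMk p.1 = G.connectedComponentMk p.2}),
      ee x p.1.1 * ee x p.1.2
      = ∑' p : ℕ × ℕ, Set.indicator {p : ℕ × ℕ | G.connectedComponentMk p.1 = G.connectedComponentMk p.2}
          (fun p => ee x p.1 * ee x p.2) p :=
    tsum_subtype {p : ℕ × ℕ | G.connectedComponentMk p.1 = G.connectedComponentMk p.2}
      (fun p => ee x p.1 * ee x p.2)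
  rw [step1, ← step15]
  rw [show (∑' s : (Σ C : G.ConnectedComponent,
      {v : ℕ // G.connectedComponentMk v = C} × {u : ℕ // G.connectedComponentMk u = C}),
      ee x s.2.1.1 * ee x s.2.2.1)
    = ∑' (p : {p : ℕ × ℕ // G.connectedComponentMk p.1 = G.connectedComponentMk p.2}),
      ee x p.1.1 * ee x p.1.2 from by
      rw [← step16]; exact tsum_congr step17 |>.symm]
  rw [step2]
  congr 1
  funext p
  rw [Set.indicator_apply]
  simp only [Set.mem_setOf_eq, SimpleGraph.ConnectedComponent.eq]


open scoped Classical

section Det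
variable (ξ : ℕ → ℕ → Ω → ℝ) (x : ℕ → ℝ) (t : ℝ) (N : ℕ) (ω : Ω)

noncomputable def TqF : ℝ≥0∞ :=
  ∑' p : ℕ × ℕ, (if (tailG ξ x t N ω).Reachable p.1 p.2 then eeT x N p.1 * eeT x N p.2 else 0)

noncomputable def ZqF : ℝ≥0∞ :=
  ∑' v : ℕ, (if v ∈ Zset ξ x t N ω then eeT x N v else 0)

noncomputable def X0F : ℝ≥0∞ := ∑' v : ℕ, (if v < N then ee x v else 0)

noncomputable def WkF (k : ℕ) : ℝ≥0∞ :=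
  ∑' v : ℕ, (if (expGraph ξ x t ω).Reachable k v then ee x v else 0)

noncomputable def SkF (k : ℕ) : ℝ≥0∞ :=
  ∑' v : ℕ, (if (tailG ξ x t N ω).Reachable v k then eeT x N v else 0)

lemma le_one_add_sq (a : ℝ≥0∞) : a ≤ 1 + a ^ 2 := by
  by_cases h : a ≤ 1
  · exact h.trans le_self_add
  · push_neg at h
    refine le_add_self.trans' ?_
    rw [pow_two]
    nth_rewrite 1 [← one_mul a]
    exact mul_le_mul_left h.le a

lemma X0F_ne_top : X0F x N ≠ ⊤ := by
  rw [X0F, tsum_eq_sum (s := Finset.range N) (by intro v hv; simp at hv; simp [hv])]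
  refine (ENNReal.sum_lt_top.2 (fun i _ => ?_)).ne
  split <;> simp [ee, ENNReal.ofReal_lt_top]

lemma SkF_sq_le (k : ℕ) : SkF ξ x t N ω k ^ 2 ≤ TqF ξ x t N ω := by
  rw [SkF, pow_two, ← ENNReal.tsum_mul_right]
  rw [TqF, ENNReal.tsum_prod']
  refine ENNReal.tsum_le_tsum (fun v => ?_)
  rw [← ENNReal.tsum_mul_left]
  refine ENNReal.tsum_le_tsum (fun u => ?_)
  by_cases h1 : (tailG ξ x t N ω).Reachable v k
  · by_cases h2 : (tailG ξ x t N ω).Reachable u k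
    · simp only [h1, h2, if_true, if_pos (h1.trans h2.symm)]; rfl
    · simp [h2]
  · simp [h1]

lemma WkF_le (k : ℕ) :
    WkF ξ x t ω k ≤ X0F x N + ZqF ξ x t N ω + SkF ξ x t N ω k := by
  rw [WkF, X0F, ZqF, SkF, ← ENNReal.tsum_add, ← ENNReal.tsum_add]
  refine ENNReal.tsum_le_tsum (fun v => ?_)
  by_cases hr : (expGraph ξ x t ω).Reachable k v
  · rw [if_pos hr]
    by_cases hv : v < N
    · exact le_add_right (le_add_right (le_of_eq (if_pos hv).symm))
    · push_neg at hv
      obtain ⟨w⟩ := hr.symm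
      rcases walk_split w hv with ⟨hk, hr'⟩ | hz
      · refine le_add_left (le_of_eq ?_)
        rw [if_pos hr', eeT, if_pos hv]; rfl
      · refine le_add_right (le_add_left (le_of_eq ?_))
        rw [if_pos hz, eeT, if_pos hv]; rfl
  · simp [hr]

lemma S2E_le :
    S2E x (expGraph ξ x t ω) ≤
      X0F x N * (X0F x N + ZqF ξ x t N ω + (1 + TqF ξ x t N ω))
      + (X0F x N + ZqF ξ x t N ω + (1 + TqF ξ x t N ω)) * X0F x N
      + (TqF ξ x t N ω + ZqF ξ x t N ω * ZqF ξ x t N ω) := by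
  set C := X0F x N + ZqF ξ x t N ω + (1 + TqF ξ x t N ω) with hC
  have hW : ∀ k, WkF ξ x t ω k ≤ C := by
    intro k
    refine (WkF_le ξ x t N ω k).trans ?_
    refine add_le_add le_rfl ((le_one_add_sq _).trans ?_)
    exact add_le_add le_rfl (SkF_sq_le ξ x t N ω k)
  rw [S2E_eq]
  have key : ∀ p : ℕ × ℕ,
      (if (expGraph ξ x t ω).Reachable p.1 p.2 then ee x p.1 * ee x p.2 else 0) ≤
      (if p.1 < N then ee x p.1 * (if (expGraph ξ x t ω).Reachable p.1 p.2 then ee x p.2 else 0) else 0)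
      + (if p.2 < N then (if (expGraph ξ x t ω).Reachable p.2 p.1 then ee x p.1 else 0) * ee x p.2 else 0)
      + ((if (tailG ξ x t N ω).Reachable p.1 p.2 then eeT x N p.1 * eeT x N p.2 else 0)
         + (if p.1 ∈ Zset ξ x t N ω then eeT x N p.1 else 0) * (if p.2 ∈ Zset ξ x t N ω then eeT x N p.2 else 0)) := by
    rintro ⟨a, b⟩
    by_cases hr : (expGraph ξ x t ω).Reachable a b
    · simp only [hr, if_true]
      by_cases ha : a < N
      · exact le_add_right (le_add_right (le_of_eq (by rw [if_pos ha])))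
      · push_neg at ha
        by_cases hb : b < N
        · refine le_add_right (le_add_left (le_of_eq ?_))
          rw [if_pos hb, if_pos hr.symm]
        · push_neg at hb
          have hee : ee x a * ee x b = eeT x N a * eeT x N b := by
            rw [eeT, eeT, if_pos ha, if_pos hb]; rfl
          refine le_add_left ?_
          obtain ⟨w⟩ := id hr
          rcases walk_split w ha with ⟨_, hr'⟩ | hza
          · exact le_add_right (le_of_eq (by rw [if_pos hr', hee]))
          · obtain ⟨w'⟩ := id hr.symm
            rcases walk_split w' hb with ⟨_, hr''⟩ | hzb
            · exact le_add_right (le_of_eq (by rw [if_pos hr''.symm, hee]))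
            · refine le_add_left (le_of_eq ?_)
              rw [if_pos hza, if_pos hzb, eeT, eeT, if_pos ha, if_pos hb, hee, eeT, eeT,
                if_pos ha, if_pos hb]
    · simp [hr]
  refine (ENNReal.tsum_le_tsum key).trans ?_
  rw [ENNReal.tsum_add, ENNReal.tsum_add]
  refine add_le_add (add_le_add ?_ ?_) (le_of_eq ?_)
  · -- g1 sum ≤ X0 * C
    rw [ENNReal.tsum_prod']
    have inner : ∀ a : ℕ, (∑' b, (if a < N then ee x a * (if (expGraph ξ x t ω).Reachable a b then ee x b else 0) else 0))
        ≤ (if a < N then ee x a else 0) * C := by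
      intro a
      by_cases ha : a < N
      · simp only [ha, if_true]
        rw [ENNReal.tsum_mul_left]
        exact mul_le_mul_right (hW a) _
      · simp [ha]
    refine (ENNReal.tsum_le_tsum inner).trans (le_of_eq ?_)
    rw [ENNReal.tsum_mul_right, X0F]
  · -- g2 sum ≤ C * X0
    rw [ENNReal.tsum_prod']
    have inner : ∀ a : ℕ, (∑' b, (if b < N then (if (expGraph ξ x t ω).Reachable b a then ee x a else 0) * ee x b else 0)) =
        ∑' b, (if b < N then (if (expGraph ξ x t ω).Reachable b a then ee x a else 0) * ee x b else 0) := fun _ => rfl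
    rw [ENNReal.tsum_comm]
    have inner2 : ∀ b : ℕ, (∑' a, (if b < N then (if (expGraph ξ x t ω).Reachable b a then ee x a else 0) * ee x b else 0))
        ≤ C * (if b < N then ee x b else 0) := by
      intro b
      by_cases hb : b < N
      · simp only [hb, if_true]
        rw [ENNReal.tsum_mul_right]
        exact mul_le_mul_left (hW b) _
      · simp [hb]
    refine (ENNReal.tsum_le_tsum inner2).trans (le_of_eq ?_)
    rw [ENNReal.tsum_mul_left, X0F]
  · -- g3 sum = Tq + Zq * Zq
    rw [ENNReal.tsum_add, TqF]
    congr 1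
    rw [ENNReal.tsum_prod']
    have : ∀ a : ℕ, (∑' b, (if a ∈ Zset ξ x t N ω then eeT x N a else 0) * (if b ∈ Zset ξ x t N ω then eeT x N b else 0))
        = (if a ∈ Zset ξ x t N ω then eeT x N a else 0) * ZqF ξ x t N ω := by
      intro a; rw [ENNReal.tsum_mul_left, ZqF]
    rw [tsum_congr this, ENNReal.tsum_mul_right, ZqF]
end Det
section Sums
variable (x : ℕ → ℝ) (t : ℝ) (N : ℕ)

noncomputable def AAF : ℝ≥0∞ := ∑' w, eeT x N w * eeT x N w

noncomputable def qF (a b : ℕ) : ℝ≥0∞ := ENNReal.ofReal t * (eeT x N a * eeT x N b)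

def CC (u : ℕ) {k : ℕ} (f : Fin (k+1) → ℕ) : Fin (k+2) → ℕ := Fin.cons u f

noncomputable def prodQ (u : ℕ) {k : ℕ} (f : Fin (k+1) → ℕ) : ℝ≥0∞ :=
  ∏ i : Fin (k+1), qF x t N (CC u f i.castSucc) (CC u f i.succ)

lemma csum (u : ℕ) :
    ∑' w, qF x t N u w * eeT x N w = ENNReal.ofReal t * AAF x N * eeT x N u := by
  have h : ∀ w, qF x t N u w * eeT x N w
      = ENNReal.ofReal t * eeT x N u * (eeT x N w * eeT x N w) := by
    intro w; rw [qF]; ring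
  rw [tsum_congr h, ENNReal.tsum_mul_left, AAF]
  ring

lemma prodQ_cons (u w : ℕ) {k : ℕ} (g : Fin (k+1) → ℕ) :
    prodQ x t N u (Fin.cons w g) = qF x t N u w * prodQ x t N w g := by
  rw [prodQ, Fin.prod_univ_succ, prodQ]
  have h1 : qF x t N (CC u (Fin.cons w g) ((0 : Fin (k+2)).castSucc))
      (CC u (Fin.cons w g) ((0 : Fin (k+2)).succ)) = qF x t N u w := by
    simp [CC]
  rw [h1]
  congr 1

lemma CC_cons_last (u w : ℕ) {k : ℕ} (g : Fin (k+1) → ℕ) :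
    CC u (Fin.cons w g) (Fin.last (k+2)) = CC w g (Fin.last (k+1)) := by
  have h : Fin.last (k+2) = (Fin.last (k+1)).succ := (Fin.succ_last _).symm
  rw [CC, CC, h, Fin.cons_succ]

lemma sumQ : ∀ (k : ℕ) (u : ℕ),
    ∑' f : Fin (k+1) → ℕ, prodQ x t N u f * eeT x N (CC u f (Fin.last (k+1)))
      = (ENNReal.ofReal t * AAF x N)^(k+1) * eeT x N u := by
  intro k
  induction k with
  | zero =>
    intro u
    rw [← Equiv.tsum_eq (Equiv.funUnique (Fin 1) ℕ).symm
      (fun f => prodQ x t N u f * eeT x N (CC u f (Fin.last 1)))]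
    have h : ∀ w : ℕ, prodQ x t N u ((Equiv.funUnique (Fin 1) ℕ).symm w)
        * eeT x N (CC u ((Equiv.funUnique (Fin 1) ℕ).symm w) (Fin.last 1))
        = qF x t N u w * eeT x N w := by
      intro w
      have h1 : ((Equiv.funUnique (Fin 1) ℕ).symm w) = fun _ : Fin 1 => w := rfl
      rw [h1]
      have h2 : prodQ x t N u (fun _ : Fin 1 => w) = qF x t N u w := by
        rw [prodQ, Fin.prod_univ_one]
        simp [CC]
      have h3 : CC u (fun _ : Fin 1 => w) (Fin.last 1) = w := by
        simp [CC, Fin.last]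
      rw [h2, h3]
    rw [tsum_congr h, csum, pow_one]
  | succ k ih =>
    intro u
    rw [← Equiv.tsum_eq (Fin.consEquiv (fun _ : Fin (k+2) => ℕ))
      (fun f => prodQ x t N u f * eeT x N (CC u f (Fin.last (k+2))))]
    have h : ∀ p : ℕ × (Fin (k+1) → ℕ),
        prodQ x t N u (Fin.consEquiv (fun _ : Fin (k+2) => ℕ) p)
          * eeT x N (CC u (Fin.consEquiv (fun _ : Fin (k+2) => ℕ) p) (Fin.last (k+2)))
        = qF x t N u p.1 * (prodQ x t N p.1 p.2 * eeT x N (CC p.1 p.2 (Fin.last (k+1)))) := by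
      rintro ⟨w, g⟩
      have he : (Fin.consEquiv (fun _ : Fin (k+2) => ℕ)) (w, g) = Fin.cons w g := rfl
      rw [he, prodQ_cons, CC_cons_last]
      ring
    rw [tsum_congr h, ENNReal.tsum_prod']
    have h2 : ∀ w, ∑' g : Fin (k+1) → ℕ,
        qF x t N u w * (prodQ x t N w g * eeT x N (CC w g (Fin.last (k+1))))
        = qF x t N u w * ((ENNReal.ofReal t * AAF x N)^(k+1) * eeT x N w) := by
      intro w
      rw [ENNReal.tsum_mul_left, ih w]
    rw [tsum_congr h2]
    have h3 : ∀ w, qF x t N u w * ((ENNReal.ofReal t * AAF x N)^(k+1) * eeT x N w)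
        = (ENNReal.ofReal t * AAF x N)^(k+1) * (qF x t N u w * eeT x N w) := by
      intro w; ring
    rw [tsum_congr h3, ENNReal.tsum_mul_left, csum]
    ring

end Sums
section Prob
variable [MeasurableSpace Ω] (μ : Measure Ω) [IsProbabilityMeasure μ]
variable (ξ : ℕ → ℕ → Ω → ℝ) (x : ℕ → ℝ) (t : ℝ) (N : ℕ)

/-- the event that the edge `{a,b}` is present (given the weight bound) -/
def xiE (a b : ℕ) : Set Ω := {ω | ξ (min a b) (max a b) ω ≤ t * x a * x b}

lemma xiE_meas (hmeas : ∀ i j, Measurable (ξ i j)) (a b : ℕ) :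
    MeasurableSet (xiE ξ x t a b) :=
  measurableSet_le (hmeas _ _) measurable_const

lemma edge_prob_le (hmeas : ∀ i j, Measurable (ξ i j))
    (hlaw : ∀ i j, i < j → ∀ s : ℝ, 0 ≤ s →
      μ {ω | s < ξ i j ω} = ENNReal.ofReal (Real.exp (-s)))
    (hx : ∀ i, 0 ≤ x i) (ht : 0 ≤ t) {a b : ℕ} (hab : a ≠ b) :
    μ (xiE ξ x t a b) ≤ ENNReal.ofReal (t * x a * x b) := by
  set s := t * x a * x b with hs
  have hs0 : 0 ≤ s := mul_nonneg (mul_nonneg ht (hx a)) (hx b)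
  have hmm : min a b < max a b := min_lt_max.2 hab
  have hcompl : (xiE ξ x t a b)ᶜ = {ω | s < ξ (min a b) (max a b) ω} := by
    ext ω; simp [xiE, not_le, hs]
  have h1 : μ (xiE ξ x t a b) + μ ((xiE ξ x t a b)ᶜ) = 1 :=
    by rw [measure_add_measure_compl (xiE_meas ξ x t hmeas a b), measure_univ]
  have h2 : μ ((xiE ξ x t a b)ᶜ) = ENNReal.ofReal (Real.exp (-s)) := by
    rw [hcompl]; exact hlaw _ _ hmm s hs0
  have key : (1 : ℝ≥0∞) ≤ ENNReal.ofReal s + ENNReal.ofReal (Real.exp (-s)) := by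
    rw [← ENNReal.ofReal_add hs0 (Real.exp_nonneg _)]
    rw [show (1 : ℝ≥0∞) = ENNReal.ofReal 1 by simp]
    apply ENNReal.ofReal_le_ofReal
    have := Real.add_one_le_exp (-s)
    linarith
  have h3 : μ (xiE ξ x t a b) + μ ((xiE ξ x t a b)ᶜ) ≤
      ENNReal.ofReal s + μ ((xiE ξ x t a b)ᶜ) := by
    rw [h1, h2]; exact key
  exact ENNReal.le_of_add_le_add_right (measure_ne_top μ _) h3

/-- coordinate σ-algebras -/
def coordMS (p : {p : ℕ × ℕ // p.1 < p.2}) : MeasurableSpace Ω :=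
  MeasurableSpace.comap (ξ p.1.1 p.1.2) inferInstance

lemma coordMS_le (hmeas : ∀ i j, Measurable (ξ i j)) (p : {p : ℕ × ℕ // p.1 < p.2}) :
    coordMS ξ p ≤ (inferInstance : MeasurableSpace Ω) :=
  (hmeas _ _).comap_le

lemma mem_coordMS {a b : ℕ} (hab : a < b) (s : ℝ) :
    MeasurableSet[coordMS ξ (⟨(a, b), hab⟩ : {p : ℕ × ℕ // p.1 < p.2})]
      {ω : Ω | ξ a b ω ≤ s} :=
  ⟨Set.Iic s, measurableSet_Iic, rfl⟩

/-- product formula for intersections of edge events with distinct coordinates -/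
lemma indep_prod
    (hindep : iIndepFun
      (fun p : {p : ℕ × ℕ // p.1 < p.2} => ξ p.1.1 p.1.2) μ)
    {n : ℕ} (c : Fin n → {p : ℕ × ℕ // p.1 < p.2}) (hc : Function.Injective c)
    (s : Fin n → ℝ) :
    μ (⋂ i, {ω | ξ (c i).1.1 (c i).1.2 ω ≤ s i}) =
      ∏ i, μ {ω | ξ (c i).1.1 (c i).1.2 ω ≤ s i} := by
  classical
  set E : Fin n → Set Ω := fun i => {ω | ξ (c i).1.1 (c i).1.2 ω ≤ s i} with hE
  set F : {p : ℕ × ℕ // p.1 < p.2} → Set Ω := fun p =>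
    if h : ∃ i, c i = p then E h.choose else Set.univ with hF
  have hFc : ∀ i, F (c i) = E i := by
    intro i
    have h : ∃ j, c j = c i := ⟨i, rfl⟩
    rw [hF]
    simp only [h, dif_pos]
    have := h.choose_spec
    rw [hc this]
  have hmeasF : ∀ p ∈ Finset.univ.image c, MeasurableSet[coordMS ξ p] (F p) := by
    intro p hp
    rw [Finset.mem_image] at hp
    obtain ⟨i, _, rfl⟩ := hp
    rw [hFc]
    exact ⟨Set.Iic (s i), measurableSet_Iic, rfl⟩
  have key := hindep.meas_biInter (S := Finset.univ.image c) (s := F) hmeasF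
  have h1 : (⋂ p ∈ Finset.univ.image c, F p) = ⋂ i, E i := by
    ext ω
    simp only [Set.mem_iInter, Finset.mem_image]
    constructor
    · intro h i
      rw [← hFc]
      exact h (c i) ⟨i, Finset.mem_univ i, rfl⟩
    · rintro h p ⟨i, _, rfl⟩
      rw [hFc]; exact h i
  have h2 : ∏ p ∈ Finset.univ.image c, μ (F p) = ∏ i, μ (E i) := by
    rw [Finset.prod_image (fun a _ b _ h => hc h)]
    exact Finset.prod_congr rfl (fun i _ => by rw [hFc])
  rw [← h1, key.trans h2]

/-- the tail σ-algebra generated by edges with both endpoints `≥ N` -/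
def tailMS : MeasurableSpace Ω :=
  ⨆ p ∈ {p : {p : ℕ × ℕ // p.1 < p.2} | N ≤ p.1.1}, coordMS ξ p

lemma tailMS_le (hmeas : ∀ i j, Measurable (ξ i j)) :
    tailMS ξ N ≤ (inferInstance : MeasurableSpace Ω) := by
  refine iSup₂_le fun p _ => coordMS_le ξ hmeas p

lemma tailAdj_mem (a b : ℕ) :
    MeasurableSet[tailMS ξ N] {ω : Ω | (tailG ξ x t N ω).Adj a b} := by
  by_cases h : a ≠ b ∧ N ≤ a ∧ N ≤ b
  · have hmm : min a b < max a b := min_lt_max.2 h.1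
    have hNm : N ≤ min a b := le_min h.2.1 h.2.2
    have hset : {ω : Ω | (tailG ξ x t N ω).Adj a b}
        = {ω : Ω | ξ (min a b) (max a b) ω ≤ t * x a * x b} := by
      ext ω
      rw [Set.mem_setOf_eq, tailG_adj]
      exact ⟨fun hh => hh.2.2.2, fun hh => ⟨h.1, h.2.1, h.2.2, hh⟩⟩
    rw [hset]
    have hle : coordMS ξ (⟨(min a b, max a b), hmm⟩ : {p : ℕ × ℕ // p.1 < p.2})
        ≤ tailMS ξ N := by
      refine le_iSup₂ (f := fun p _ => coordMS ξ p) _ hNm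
    exact hle _ (mem_coordMS ξ hmm (t * x a * x b))
  · have hset : {ω : Ω | (tailG ξ x t N ω).Adj a b} = ∅ := by
      ext ω
      rw [Set.mem_setOf_eq, tailG_adj]
      simp only [Set.mem_empty_iff_false, iff_false]
      rintro ⟨h1, h2, h3, _⟩
      exact h ⟨h1, h2, h3⟩
    rw [hset]
    exact @MeasurableSet.empty _ (tailMS ξ N)

lemma tailReach_mem (u v : ℕ) :
    MeasurableSet[tailMS ξ N] {ω : Ω | (tailG ξ x t N ω).Reachable u v} := by
  have hset : {ω : Ω | (tailG ξ x t N ω).Reachable u v} =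
      ⋃ n, ⋃ g : Fin (n+1) → ℕ, ⋃ (_ : g 0 = u ∧ g (Fin.last n) = v),
        ⋂ i : Fin n, {ω : Ω | (tailG ξ x t N ω).Adj (g i.castSucc) (g i.succ)} := by
    ext ω
    simp only [Set.mem_setOf_eq, Set.mem_iUnion, Set.mem_iInter, reach_iff]
    constructor
    · rintro ⟨n, g, h0, hl, hadj⟩; exact ⟨n, g, ⟨h0, hl⟩, hadj⟩
    · rintro ⟨n, g, ⟨h0, hl⟩, hadj⟩; exact ⟨n, g, h0, hl, hadj⟩
  rw [hset]
  exact MeasurableSet.iUnion fun n => MeasurableSet.iUnion fun g =>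
    MeasurableSet.iUnion fun _ => MeasurableSet.iInter fun i => tailAdj_mem ξ x t N _ _

lemma tailReach_measurable (hmeas : ∀ i j, Measurable (ξ i j)) (u v : ℕ) :
    MeasurableSet {ω : Ω | (tailG ξ x t N ω).Reachable u v} :=
  tailMS_le ξ N hmeas _ (tailReach_mem ξ x t N u v)

end Prob
section ProbSums
variable [MeasurableSpace Ω] (μ : Measure Ω) [IsProbabilityMeasure μ]
variable (ξ : ℕ → ℕ → Ω → ℝ) (x : ℕ → ℝ) (t : ℝ) (N : ℕ)


lemma minmax_pair_eq {a b c d : ℕ} (h1 : min a b = min c d) (h2 : max a b = max c d) :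
    (a = c ∧ b = d) ∨ (a = d ∧ b = c) := by omega

open scoped Classical in
lemma mu_reach_le
    (hmeas : ∀ i j, Measurable (ξ i j))
    (hlaw : ∀ i j, i < j → ∀ s : ℝ, 0 ≤ s →
      μ {ω | s < ξ i j ω} = ENNReal.ofReal (Real.exp (-s)))
    (hindep : iIndepFun
      (fun p : {p : ℕ × ℕ // p.1 < p.2} => ξ p.1.1 p.1.2) μ)
    (hx : ∀ i, 0 ≤ x i) (ht : 0 ≤ t) (u v : ℕ) :
    μ {ω | (tailG ξ x t N ω).Reachable u v} ≤
      (if v = u then 1 else 0) +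
      ∑' k : ℕ, ∑' f : Fin (k+1) → ℕ,
        (if CC u f (Fin.last (k+1)) = v then prodQ x t N u f else 0) := by
  by_cases huv : v = u
  · rw [if_pos huv]
    exact le_add_right prob_le_one
  · rw [if_neg huv, zero_add]
    set Good : (Σ k : ℕ, (Fin (k+1) → ℕ)) → Prop := fun s =>
      Function.Injective (CC u s.2) ∧ (∀ i, N ≤ CC u s.2 i) ∧
        CC u s.2 (Fin.last (s.1+1)) = v with hGood
    set E : (Σ k : ℕ, (Fin (k+1) → ℕ)) → Set Ω := fun s =>
      if Good s then ⋂ i : Fin (s.1+1), xiE ξ x t (CC u s.2 i.castSucc) (CC u s.2 i.succ)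
      else ∅ with hE
    have hsub : {ω | (tailG ξ x t N ω).Reachable u v} ⊆ ⋃ s, E s := by
      intro ω hω
      obtain ⟨k, f, hinj, hlast, hadj⟩ := exists_good_seq hω (fun hh => huv hh.symm)
      have hN : ∀ i, N ≤ CC u f i := by
        intro i
        induction i using Fin.lastCases with
        | last =>
          have := (tailG_adj.1 (hadj (Fin.last k))).2.2.1
          rwa [Fin.succ_last] at this
        | cast j => exact (tailG_adj.1 (hadj j)).2.1
      have hGs : Good ⟨k, f⟩ := ⟨hinj, hN, hlast⟩
      refine Set.mem_iUnion.2 ⟨⟨k, f⟩, ?_⟩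
      have hEeq : E ⟨k, f⟩ = ⋂ i : Fin (k+1), xiE ξ x t (CC u f i.castSucc) (CC u f i.succ) := by
        rw [hE]; exact if_pos hGs
      rw [hEeq]
      refine Set.mem_iInter.2 (fun i => ?_)
      show ξ _ _ ω ≤ _
      exact (tailG_adj.1 (hadj i)).2.2.2
    refine (measure_mono hsub).trans ((measure_iUnion_le E).trans ?_)
    rw [ENNReal.tsum_sigma' (fun s => μ (E s))]
    refine ENNReal.tsum_le_tsum (fun k => ENNReal.tsum_le_tsum (fun f => ?_))
    by_cases hGs : Good ⟨k, f⟩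
    · have hEeq : E ⟨k, f⟩ = ⋂ i : Fin (k+1), xiE ξ x t (CC u f i.castSucc) (CC u f i.succ) := by
        rw [hE]; exact if_pos hGs
      rw [hEeq, if_pos hGs.2.2]
      set C := CC u f with hC
      have hne : ∀ i : Fin (k+1), C i.castSucc ≠ C i.succ := by
        intro i h
        have := hGs.1 h
        have h2 : (i.castSucc : Fin (k+2)) ≠ i.succ := by
          intro hh
          have := congrArg Fin.val hh
          simp at this
        exact h2 this
      set c : Fin (k+1) → {p : ℕ × ℕ // p.1 < p.2} := fun i =>
        ⟨(min (C i.castSucc) (C i.succ), max (C i.castSucc) (C i.succ)),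
          min_lt_max.2 (hne i)⟩ with hc
      have hcinj : Function.Injective c := by
        intro i j hij
        rw [hc] at hij
        simp only [Subtype.mk.injEq, Prod.mk.injEq] at hij
        rcases minmax_pair_eq hij.1 hij.2 with ⟨h1, h2⟩ | ⟨h1, h2⟩
        · have := hGs.1 h1
          exact Fin.castSucc_injective _ this
        · have e1 := hGs.1 h1
          have e2 := hGs.1 h2
          have v1 := congrArg Fin.val e1
          have v2 := congrArg Fin.val e2
          simp at v1 v2
          omega
      have hprod := indep_prod μ ξ hindep c hcinj
        (fun i => t * x (C i.castSucc) * x (C i.succ))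
      have heq : (⋂ i : Fin (k+1), xiE ξ x t (C i.castSucc) (C i.succ)) =
          ⋂ i : Fin (k+1), {ω | ξ (c i).1.1 (c i).1.2 ω ≤ t * x (C i.castSucc) * x (C i.succ)} := rfl
      rw [heq, hprod]
      rw [prodQ]
      refine Finset.prod_le_prod' (fun i _ => ?_)
      have hle : μ {ω | ξ (c i).1.1 (c i).1.2 ω ≤ t * x (C i.castSucc) * x (C i.succ)}
          ≤ ENNReal.ofReal (t * x (C i.castSucc) * x (C i.succ)) :=
        edge_prob_le μ ξ x t hmeas hlaw hx ht (hne i)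
      refine hle.trans (le_of_eq ?_)
      rw [qF, ENNReal.ofReal_mul (mul_nonneg ht (hx _)), ENNReal.ofReal_mul ht, mul_assoc]
      congr 1
      rw [eeT, eeT, if_pos (hGs.2.1 i.castSucc), if_pos (hGs.2.1 i.succ)]
    · have hEeq : E ⟨k, f⟩ = ∅ := by rw [hE]; exact if_neg hGs
      rw [hEeq]
      simp
noncomputable def Theta (μ : Measure Ω) : ℝ≥0∞ :=
  ∑' p : ℕ × ℕ, eeT x N p.1 * eeT x N p.2 * μ {ω | (tailG ξ x t N ω).Reachable p.1 p.2}

open scoped Classical in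
lemma theta_le
    (hmeas : ∀ i j, Measurable (ξ i j))
    (hlaw : ∀ i j, i < j → ∀ s : ℝ, 0 ≤ s →
      μ {ω | s < ξ i j ω} = ENNReal.ofReal (Real.exp (-s)))
    (hindep : iIndepFun
      (fun p : {p : ℕ × ℕ // p.1 < p.2} => ξ p.1.1 p.1.2) μ)
    (hx : ∀ i, 0 ≤ x i) (ht : 0 ≤ t) :
    Theta ξ x t N μ ≤ AAF x N
      + ∑' k : ℕ, ((ENNReal.ofReal t * AAF x N)^(k+1) * AAF x N) := by
  rw [Theta, ENNReal.tsum_prod']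
  have step1 : ∀ u, (∑' v, eeT x N u * eeT x N v * μ {ω | (tailG ξ x t N ω).Reachable u v})
      ≤ (eeT x N u * eeT x N u)
        + ∑' k : ℕ, ((ENNReal.ofReal t * AAF x N)^(k+1) * (eeT x N u * eeT x N u)) := by
    intro u
    have pt : ∀ v, eeT x N u * eeT x N v * μ {ω | (tailG ξ x t N ω).Reachable u v}
        ≤ (if v = u then eeT x N u * eeT x N u else 0)
          + eeT x N u * eeT x N v * (∑' k : ℕ, ∑' f : Fin (k+1) → ℕ,
              (if CC u f (Fin.last (k+1)) = v then prodQ x t N u f else 0)) := by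
      intro v
      refine (mul_le_mul_right (mu_reach_le μ ξ x t N hmeas hlaw hindep hx ht u v) _).trans ?_
      rw [mul_add]
      refine add_le_add (le_of_eq ?_) le_rfl
      by_cases hv : v = u
      · rw [if_pos hv, if_pos hv, mul_one, hv]
      · rw [if_neg hv, if_neg hv, mul_zero]
    refine (ENNReal.tsum_le_tsum pt).trans ?_
    rw [ENNReal.tsum_add]
    refine add_le_add (le_of_eq (tsum_ite_eq u (fun _ => eeT x N u * eeT x N u))) (le_of_eq ?_)
    have h1 : ∀ v, eeT x N u * eeT x N v * (∑' k : ℕ, ∑' f : Fin (k+1) → ℕ,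
        (if CC u f (Fin.last (k+1)) = v then prodQ x t N u f else 0))
        = ∑' k : ℕ, ∑' f : Fin (k+1) → ℕ,
            eeT x N u * eeT x N v * (if CC u f (Fin.last (k+1)) = v then prodQ x t N u f else 0) := by
      intro v
      rw [← ENNReal.tsum_mul_left]
      exact tsum_congr (fun k => (ENNReal.tsum_mul_left).symm)
    rw [tsum_congr h1, ENNReal.tsum_comm]
    refine tsum_congr (fun k => ?_)
    rw [ENNReal.tsum_comm]
    have h2 : ∀ f : Fin (k+1) → ℕ,
        (∑' v, eeT x N u * eeT x N v * (if CC u f (Fin.last (k+1)) = v then prodQ x t N u f else 0))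
        = eeT x N u * (prodQ x t N u f * eeT x N (CC u f (Fin.last (k+1)))) := by
      intro f
      have h3 : ∀ v, eeT x N u * eeT x N v * (if CC u f (Fin.last (k+1)) = v then prodQ x t N u f else 0)
          = (if v = CC u f (Fin.last (k+1)) then
              eeT x N u * (prodQ x t N u f * eeT x N (CC u f (Fin.last (k+1)))) else 0) := by
        intro v
        by_cases hv : CC u f (Fin.last (k+1)) = v
        · rw [if_pos hv, if_pos hv.symm, ← hv]; ring
        · rw [if_neg hv, if_neg (fun hh => hv hh.symm), mul_zero]
      rw [tsum_congr h3, tsum_ite_eq]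
    rw [tsum_congr h2, ENNReal.tsum_mul_left, sumQ]
    ring
  refine (ENNReal.tsum_le_tsum step1).trans (le_of_eq ?_)
  rw [ENNReal.tsum_add]
  congr 1
  rw [ENNReal.tsum_comm]
  exact tsum_congr (fun k => by rw [ENNReal.tsum_mul_left, AAF])

end ProbSums
section Int
variable [MeasurableSpace Ω] (μ : Measure Ω) [IsProbabilityMeasure μ]
variable (ξ : ℕ → ℕ → Ω → ℝ) (x : ℕ → ℝ) (t : ℝ) (N : ℕ)

lemma TqF_fun_eq (p : ℕ × ℕ) :
    (fun ω : Ω => if (tailG ξ x t N ω).Reachable p.1 p.2 then eeT x N p.1 * eeT x N p.2 else 0)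
    = Set.indicator {ω : Ω | (tailG ξ x t N ω).Reachable p.1 p.2}
        (fun _ => eeT x N p.1 * eeT x N p.2) := by
  funext ω
  by_cases h : (tailG ξ x t N ω).Reachable p.1 p.2 <;>
    simp [Set.indicator_apply, h]

lemma TqF_meas (hmeas : ∀ i j, Measurable (ξ i j)) :
    Measurable (TqF ξ x t N) := by
  have : TqF ξ x t N = fun ω => ∑' p : ℕ × ℕ,
      Set.indicator {ω : Ω | (tailG ξ x t N ω).Reachable p.1 p.2}
        (fun _ => eeT x N p.1 * eeT x N p.2) ω := by
    funext ω
    rw [TqF]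
    exact tsum_congr (fun p => by rw [← TqF_fun_eq])
  rw [this]
  exact Measurable.ennreal_tsum (fun p =>
    Measurable.indicator measurable_const (tailReach_measurable ξ x t N hmeas p.1 p.2))

lemma lint_TqF (hmeas : ∀ i j, Measurable (ξ i j)) :
    ∫⁻ ω, TqF ξ x t N ω ∂μ = Theta ξ x t N μ := by
  have h1 : ∫⁻ ω, TqF ξ x t N ω ∂μ = ∑' p : ℕ × ℕ,
      ∫⁻ ω, Set.indicator {ω : Ω | (tailG ξ x t N ω).Reachable p.1 p.2}
        (fun _ => eeT x N p.1 * eeT x N p.2) ω ∂μ := by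
    rw [show (fun ω => TqF ξ x t N ω) = fun ω => ∑' p : ℕ × ℕ,
        Set.indicator {ω : Ω | (tailG ξ x t N ω).Reachable p.1 p.2}
          (fun _ => eeT x N p.1 * eeT x N p.2) ω from by
      funext ω; rw [TqF]; exact tsum_congr (fun p => by rw [← TqF_fun_eq])]
    exact lintegral_tsum (fun p => (Measurable.indicator measurable_const
      (tailReach_measurable ξ x t N hmeas p.1 p.2)).aemeasurable)
  rw [h1, Theta]
  exact tsum_congr (fun p => lintegral_indicator_const
    (tailReach_measurable ξ x t N hmeas p.1 p.2) _)

lemma expAdj_meas (hmeas : ∀ i j, Measurable (ξ i j)) (a b : ℕ) :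
    MeasurableSet {ω : Ω | (expGraph ξ x t ω).Adj a b} := by
  by_cases hab : a ≠ b
  · have : {ω : Ω | (expGraph ξ x t ω).Adj a b} = xiE ξ x t a b := by
      ext ω
      rw [Set.mem_setOf_eq, expGraph_adj]
      exact ⟨fun h => h.2, fun h => ⟨hab, h⟩⟩
    rw [this]
    exact xiE_meas ξ x t hmeas a b
  · push_neg at hab
    have : {ω : Ω | (expGraph ξ x t ω).Adj a b} = ∅ := by
      ext ω
      simp only [Set.mem_setOf_eq, Set.mem_empty_iff_false, iff_false]
      intro h
      exact (expGraph_adj.1 h).1 hab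
    rw [this]
    exact MeasurableSet.empty

lemma Zev_eq (v : ℕ) :
    {ω : Ω | v ∈ Zset ξ x t N ω} =
      ⋃ u, ⋃ j, ⋃ (_ : N ≤ u ∧ j < N),
        ({ω : Ω | (tailG ξ x t N ω).Reachable v u} ∩ {ω : Ω | (expGraph ξ x t ω).Adj u j}) := by
  ext ω
  simp only [Set.mem_setOf_eq, Set.mem_iUnion, Set.mem_inter_iff, Zset]
  constructor
  · rintro ⟨u, j, h1, h2, h3, h4⟩; exact ⟨u, j, ⟨h1, h2⟩, h3, h4⟩
  · rintro ⟨u, j, ⟨h1, h2⟩, h3, h4⟩; exact ⟨u, j, h1, h2, h3, h4⟩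

lemma Zev_meas (hmeas : ∀ i j, Measurable (ξ i j)) (v : ℕ) :
    MeasurableSet {ω : Ω | v ∈ Zset ξ x t N ω} := by
  rw [Zev_eq]
  exact MeasurableSet.iUnion fun u => MeasurableSet.iUnion fun j =>
    MeasurableSet.iUnion fun _ =>
      ((tailReach_measurable ξ x t N hmeas v u).inter (expAdj_meas ξ x t hmeas u j))

lemma ZqF_meas (hmeas : ∀ i j, Measurable (ξ i j)) :
    Measurable (ZqF ξ x t N) := by
  have : ZqF ξ x t N = fun ω => ∑' v : ℕ,
      Set.indicator {ω : Ω | v ∈ Zset ξ x t N ω} (fun _ => eeT x N v) ω := by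
    funext ω
    rw [ZqF]
    refine tsum_congr (fun v => ?_)
    by_cases h : v ∈ Zset ξ x t N ω <;> simp [Set.indicator_apply, h]
  rw [this]
  exact Measurable.ennreal_tsum (fun v =>
    Measurable.indicator measurable_const (Zev_meas ξ x t N hmeas v))

lemma indep_tail_edge (hmeas : ∀ i j, Measurable (ξ i j))
    (hindep : iIndepFun
      (fun p : {p : ℕ × ℕ // p.1 < p.2} => ξ p.1.1 p.1.2) μ)
    {u j v : ℕ} (hu : N ≤ u) (hj : j < N) :
    μ ({ω : Ω | (tailG ξ x t N ω).Reachable v u} ∩ xiE ξ x t u j) =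
      μ {ω : Ω | (tailG ξ x t N ω).Reachable v u} * μ (xiE ξ x t u j) := by
  have hju : j < u := lt_of_lt_of_le hj hu
  set pj : {p : ℕ × ℕ // p.1 < p.2} := ⟨(j, u), hju⟩ with hpj
  have hindep2 := indep_biSup_compl (coordMS_le ξ hmeas) hindep.iIndep
    {p : {p : ℕ × ℕ // p.1 < p.2} | N ≤ p.1.1}
  have hco : coordMS ξ pj ≤ ⨆ p ∈ {p : {p : ℕ × ℕ // p.1 < p.2} | N ≤ p.1.1}ᶜ, coordMS ξ p := by
    refine le_iSup₂ (f := fun p (_ : p ∈ _ᶜ) => coordMS ξ p) pj ?_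
    simp only [Set.mem_compl_iff, Set.mem_setOf_eq, not_le, hpj]
    exact hj
  have hindep3 : Indep (tailMS ξ N)
      (coordMS ξ pj) μ :=
    indep_of_indep_of_le_right hindep2 hco
  have hxi_mem : MeasurableSet[coordMS ξ pj] (xiE ξ x t u j) := by
    have hset : xiE ξ x t u j = (ξ j u) ⁻¹' (Set.Iic (t * x u * x j)) := by
      ext ω
      rw [xiE, Set.mem_setOf_eq, min_eq_right hju.le, max_eq_left hju.le]
      rfl
    rw [hset]
    exact ⟨Set.Iic (t * x u * x j), measurableSet_Iic, rfl⟩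
  exact (Indep_iff _ _ _).1 hindep3 _ _ (tailReach_mem ξ x t N v u) hxi_mem

lemma lint_ZqF_le (hmeas : ∀ i j, Measurable (ξ i j))
    (hlaw : ∀ i j, i < j → ∀ s : ℝ, 0 ≤ s →
      μ {ω | s < ξ i j ω} = ENNReal.ofReal (Real.exp (-s)))
    (hindep : iIndepFun
      (fun p : {p : ℕ × ℕ // p.1 < p.2} => ξ p.1.1 p.1.2) μ)
    (hx : ∀ i, 0 ≤ x i) (ht : 0 ≤ t) :
    ∫⁻ ω, ZqF ξ x t N ω ∂μ ≤ ENNReal.ofReal t * X0F x N * Theta ξ x t N μ := by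
  have h1 : ∫⁻ ω, ZqF ξ x t N ω ∂μ = ∑' v : ℕ, eeT x N v * μ {ω : Ω | v ∈ Zset ξ x t N ω} := by
    rw [show (fun ω => ZqF ξ x t N ω) = fun ω => ∑' v : ℕ,
        Set.indicator {ω : Ω | v ∈ Zset ξ x t N ω} (fun _ => eeT x N v) ω from by
      funext ω; rw [ZqF]; refine tsum_congr (fun v => ?_)
      by_cases h : v ∈ Zset ξ x t N ω <;> simp [Set.indicator_apply, h]]
    rw [lintegral_tsum (fun v => (Measurable.indicator measurable_const
      (Zev_meas ξ x t N hmeas v)).aemeasurable)]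
    exact tsum_congr (fun v => lintegral_indicator_const (Zev_meas ξ x t N hmeas v) _)
  rw [h1]
  have h2 : ∀ v, μ {ω : Ω | v ∈ Zset ξ x t N ω} ≤
      ∑' u : ℕ, ∑' j : ℕ, (if N ≤ u ∧ j < N then
        μ {ω : Ω | (tailG ξ x t N ω).Reachable v u} * ENNReal.ofReal (t * x u * x j) else 0) := by
    intro v
    have hsub : {ω : Ω | v ∈ Zset ξ x t N ω} ⊆
        ⋃ u : ℕ, ⋃ j : ℕ, (if N ≤ u ∧ j < N then
          ({ω : Ω | (tailG ξ x t N ω).Reachable v u} ∩ xiE ξ x t u j) else ∅) := by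
      intro ω hω
      obtain ⟨u, j, h1', h2', h3', h4'⟩ := hω
      refine Set.mem_iUnion.2 ⟨u, Set.mem_iUnion.2 ⟨j, ?_⟩⟩
      rw [if_pos ⟨h1', h2'⟩]
      exact ⟨h3', (expGraph_adj.1 h4').2⟩
    refine (measure_mono hsub).trans ?_
    refine (measure_iUnion_le _).trans ?_
    refine ENNReal.tsum_le_tsum (fun u => ?_)
    refine (measure_iUnion_le _).trans ?_
    refine ENNReal.tsum_le_tsum (fun j => ?_)
    by_cases hc : N ≤ u ∧ j < N
    · rw [if_pos hc, if_pos hc, indep_tail_edge μ ξ x t N hmeas hindep hc.1 hc.2]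
      refine mul_le_mul_right (edge_prob_le μ ξ x t hmeas hlaw hx ht ?_) _
      omega
    · rw [if_neg hc, if_neg hc]
      simp
  have h3 : ∀ v, eeT x N v * μ {ω : Ω | v ∈ Zset ξ x t N ω} ≤
      ENNReal.ofReal t * X0F x N *
        ∑' u : ℕ, eeT x N v * eeT x N u * μ {ω : Ω | (tailG ξ x t N ω).Reachable v u} := by
    intro v
    refine (mul_le_mul_right (h2 v) _).trans ?_
    rw [← ENNReal.tsum_mul_left (a := eeT x N v)]
    have h4 : ∀ u, eeT x N v * ∑' j : ℕ, (if N ≤ u ∧ j < N then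
        μ {ω : Ω | (tailG ξ x t N ω).Reachable v u} * ENNReal.ofReal (t * x u * x j) else 0)
        ≤ ENNReal.ofReal t * X0F x N *
          (eeT x N v * eeT x N u * μ {ω : Ω | (tailG ξ x t N ω).Reachable v u}) := by
      intro u
      have h5 : ∀ j, (if N ≤ u ∧ j < N then
          μ {ω : Ω | (tailG ξ x t N ω).Reachable v u} * ENNReal.ofReal (t * x u * x j) else 0)
          ≤ (ENNReal.ofReal t * eeT x N u * μ {ω : Ω | (tailG ξ x t N ω).Reachable v u}) *
            (if j < N then ee x j else 0) := by
        intro j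
        by_cases hc : N ≤ u ∧ j < N
        · rw [if_pos hc, if_pos hc.2]
          refine le_of_eq ?_
          rw [ENNReal.ofReal_mul (mul_nonneg ht (hx u)), ENNReal.ofReal_mul ht]
          rw [eeT, if_pos hc.1, ee]
          ring
        · rw [if_neg hc]
          exact zero_le
      refine (mul_le_mul_right (ENNReal.tsum_le_tsum h5) _).trans ?_
      rw [ENNReal.tsum_mul_left (a := ENNReal.ofReal t * eeT x N u *
        μ {ω : Ω | (tailG ξ x t N ω).Reachable v u}), X0F.eq_def]
      refine le_of_eq ?_
      ring
    refine (ENNReal.tsum_le_tsum h4).trans (le_of_eq ?_)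
    rw [ENNReal.tsum_mul_left]
  refine (ENNReal.tsum_le_tsum h3).trans (le_of_eq ?_)
  rw [ENNReal.tsum_mul_left, Theta, ENNReal.tsum_prod']

end Int
lemma AAF_eq (x : ℕ → ℝ) (N : ℕ) (hx : ∀ i, 0 ≤ x i) (hx2 : Summable fun i => x i ^ 2) :
    AAF x N = ENNReal.ofReal (∑' k, x (k + N) ^ 2) := by
  have h1 : ∀ w, eeT x N w * eeT x N w = (if N ≤ w then ENNReal.ofReal (x w ^ 2) else 0) := by
    intro w
    rw [eeT]
    split
    · rw [← ENNReal.ofReal_mul (hx w), ← pow_two]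
    · simp
  rw [AAF, tsum_congr h1]
  have h2 := Function.Injective.tsum_eq (g := fun k : ℕ => k + N) (add_left_injective N)
    (f := fun w => if N ≤ w then ENNReal.ofReal (x w ^ 2) else 0) ?_
  · rw [← h2]
    have h3 : ∀ k : ℕ, (if N ≤ k + N then ENNReal.ofReal (x (k + N) ^ 2) else 0)
        = ENNReal.ofReal (x (k + N) ^ 2) := by
      intro k; rw [if_pos (Nat.le_add_left N k)]
    rw [tsum_congr h3]
    exact (ENNReal.ofReal_tsum_of_nonneg (fun k => sq_nonneg _)
      ((summable_nat_add_iff N).2 hx2)).symm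
  · intro w hw
    by_cases hNw : N ≤ w
    · exact ⟨w - N, by show w - N + N = w; omega⟩
    · exfalso
      apply hw
      simp only [if_neg hNw]

lemma exists_N (x : ℕ → ℝ) (t : ℝ) (hx : ∀ i, 0 ≤ x i) (hx2 : Summable fun i => x i ^ 2)
    (ht : 0 ≤ t) :
    ∃ N, ENNReal.ofReal t * AAF x N < 1 ∧ AAF x N ≠ ∞ := by
  have hten := tendsto_sum_nat_add (fun i => x i ^ 2)
  have hδ : (0:ℝ) < 1 / (t + 1) := by positivity
  obtain ⟨N, hN⟩ := (hten.eventually_lt_const hδ).exists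
  refine ⟨N, ?_, by rw [AAF_eq x N hx hx2]; exact ENNReal.ofReal_ne_top⟩
  rw [AAF_eq x N hx hx2, ← ENNReal.ofReal_mul ht, ENNReal.ofReal_lt_one]
  have htail0 : 0 ≤ ∑' k, x (k + N) ^ 2 := tsum_nonneg (fun k => sq_nonneg _)
  have hmul : t * (∑' k, x (k + N) ^ 2) ≤ t * (1 / (t + 1)) :=
    mul_le_mul_of_nonneg_left hN.le ht
  have h1 : t * (1 / (t + 1)) < 1 := by
    rw [mul_one_div, div_lt_one (by linarith)]
    linarith
  linarith

lemma geo_ne_top {r A : ℝ≥0∞} (hr : r < 1) (hA : A ≠ ∞) :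
    (∑' k : ℕ, r ^ (k + 1) * A) ≠ ∞ := by
  rw [ENNReal.tsum_mul_right]
  refine ENNReal.mul_ne_top ?_ hA
  have h1 : (∑' k : ℕ, r ^ (k + 1)) ≤ ∑' k : ℕ, r ^ k := by
    refine ENNReal.tsum_le_tsum (fun k => ?_)
    rw [pow_succ]
    exact (mul_le_mul_right hr.le _).trans (le_of_eq (mul_one _))
  rw [ENNReal.tsum_geometric] at h1
  refine (h1.trans_lt (ENNReal.inv_lt_top.2 ?_)).ne
  exact tsub_pos_iff_lt.2 hr


open scoped Classical in
lemma final_det (ξ : ℕ → ℕ → Ω → ℝ) (x : ℕ → ℝ) (t : ℝ) (N : ℕ) (ω : Ω)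
    (hT : TqF ξ x t N ω ≠ ⊤) (hZ : ZqF ξ x t N ω ≠ ⊤) :
    S2E x (expGraph ξ x t ω) < ⊤ ∧ ∀ k, WkF ξ x t ω k < ⊤ := by
  have hX := X0F_ne_top x N
  have hC : X0F x N + ZqF ξ x t N ω + (1 + TqF ξ x t N ω) < ⊤ :=
    ENNReal.add_lt_top.2 ⟨ENNReal.add_lt_top.2 ⟨hX.lt_top, hZ.lt_top⟩,
      ENNReal.add_lt_top.2 ⟨ENNReal.one_lt_top, hT.lt_top⟩⟩
  constructor
  · refine (S2E_le ξ x t N ω).trans_lt ?_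
    exact ENNReal.add_lt_top.2 ⟨ENNReal.add_lt_top.2
      ⟨ENNReal.mul_lt_top hX.lt_top hC, ENNReal.mul_lt_top hC hX.lt_top⟩,
      ENNReal.add_lt_top.2 ⟨hT.lt_top, ENNReal.mul_lt_top hZ.lt_top hZ.lt_top⟩⟩
  · intro k
    refine ((WkF_le ξ x t N ω k).trans ?_).trans_lt hC
    exact add_le_add le_rfl ((le_one_add_sq _).trans
      (add_le_add le_rfl (SkF_sq_le ξ x t N ω k)))

end S4

/-- For any `t ≥ 0` and `x ∈ ℓ₂⁺`, almost surely `S₂^{G_t} < ∞`; in particular,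
almost surely every connected component of `G_t` has finite total weight. -/
theorem stmt4 {Ω : Type*} [MeasurableSpace Ω] (μ : Measure Ω) [IsProbabilityMeasure μ]
    (x : ℕ → ℝ) (hx : ∀ i, 0 ≤ x i) (hx2 : Summable fun i => x i ^ 2)
    (ξ : ℕ → ℕ → Ω → ℝ) (hmeas : ∀ i j, Measurable (ξ i j))
    (hlaw : ∀ i j, i < j → ∀ s : ℝ, 0 ≤ s →
      μ {ω | s < ξ i j ω} = ENNReal.ofReal (Real.exp (-s)))
    (hindep : iIndepFun
      (fun p : {p : ℕ × ℕ // p.1 < p.2} => ξ p.1.1 p.1.2) μ)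
    (t : ℝ) (ht : 0 ≤ t) :
    μ {ω | S2E x (expGraph ξ x t ω) < ⊤ ∧
      ∀ k : ℕ, (∑' i : {i : ℕ // (expGraph ξ x t ω).Reachable k i},
        ENNReal.ofReal (x i)) < ⊤} = 1 := by
  classical
  obtain ⟨N, hrA, hAne⟩ := S4.exists_N x t hx hx2 ht
  have hTheta : S4.Theta ξ x t N μ ≠ ⊤ := by
    refine ((S4.theta_le μ ξ x t N hmeas hlaw hindep hx ht).trans_lt ?_).ne
    have h2 : (∑' k : ℕ, ((ENNReal.ofReal t * S4.AAF x N) ^ (k+1) * S4.AAF x N)) ≠ ⊤ :=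
      S4.geo_ne_top hrA hAne
    exact ENNReal.add_lt_top.2 ⟨hAne.lt_top, h2.lt_top⟩
  have hTint : ∫⁻ ω, S4.TqF ξ x t N ω ∂μ ≠ ⊤ := by
    rw [S4.lint_TqF μ ξ x t N hmeas]
    exact hTheta
  have hZint : ∫⁻ ω, S4.ZqF ξ x t N ω ∂μ ≠ ⊤ := by
    refine ((S4.lint_ZqF_le μ ξ x t N hmeas hlaw hindep hx ht).trans_lt ?_).ne
    exact ENNReal.mul_lt_top
      (ENNReal.mul_lt_top ENNReal.ofReal_lt_top (S4.X0F_ne_top x N).lt_top) hTheta.lt_top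
  have h1 : ∀ᵐ ω ∂μ, S4.TqF ξ x t N ω < ⊤ := ae_lt_top (S4.TqF_meas ξ x t N hmeas) hTint
  have h2 : ∀ᵐ ω ∂μ, S4.ZqF ξ x t N ω < ⊤ := ae_lt_top (S4.ZqF_meas ξ x t N hmeas) hZint
  have h12 : ∀ᵐ ω ∂μ, S4.TqF ξ x t N ω < ⊤ ∧ S4.ZqF ξ x t N ω < ⊤ := h1.and h2
  have hsub : {ω : Ω | S4.TqF ξ x t N ω < ⊤ ∧ S4.ZqF ξ x t N ω < ⊤} ⊆
      {ω | S2E x (expGraph ξ x t ω) < ⊤ ∧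
        ∀ k : ℕ, (∑' i : {i : ℕ // (expGraph ξ x t ω).Reachable k i},
          ENNReal.ofReal (x i)) < ⊤} := by
    rintro ω ⟨hT, hZ⟩
    obtain ⟨hS, hW⟩ := S4.final_det ξ x t N ω hT.ne hZ.ne
    refine ⟨hS, fun k => ?_⟩
    have heq0 : (∑' i : {i : ℕ // (expGraph ξ x t ω).Reachable k i}, ENNReal.ofReal (x i))
        = ∑' v : ℕ, Set.indicator {i : ℕ | (expGraph ξ x t ω).Reachable k i}
            (fun i => ENNReal.ofReal (x i)) v :=
      tsum_subtype {i : ℕ | (expGraph ξ x t ω).Reachable k i} (fun i => ENNReal.ofReal (x i))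
    have heq : (∑' i : {i : ℕ // (expGraph ξ x t ω).Reachable k i}, ENNReal.ofReal (x i))
        = S4.WkF ξ x t ω k := by
      rw [heq0, S4.WkF]
      refine tsum_congr (fun v => ?_)
      by_cases h : (expGraph ξ x t ω).Reachable k v <;>
        simp [Set.indicator_apply, h, S4.ee]
    rw [heq]
    exact hW k
  have hnull : μ {ω : Ω | ¬(S4.TqF ξ x t N ω < ⊤ ∧ S4.ZqF ξ x t N ω < ⊤)} = 0 :=
    ae_iff.1 h12
  have hcompl : μ ({ω | S2E x (expGraph ξ x t ω) < ⊤ ∧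
      ∀ k : ℕ, (∑' i : {i : ℕ // (expGraph ξ x t ω).Reachable k i},
        ENNReal.ofReal (x i)) < ⊤}ᶜ) = 0 := by
    refine measure_mono_null ?_ hnull
    intro ω hω
    exact fun hP => hω (hsub hP)
  refine le_antisymm prob_le_one ?_
  have hle := measure_union_le (μ := μ)
    {ω | S2E x (expGraph ξ x t ω) < ⊤ ∧
      ∀ k : ℕ, (∑' i : {i : ℕ // (expGraph ξ x t ω).Reachable k i},
        ENNReal.ofReal (x i)) < ⊤}
    ({ω | S2E x (expGraph ξ x t ω) < ⊤ ∧
      ∀ k : ℕ, (∑' i : {i : ℕ // (expGraph ξ x t ω).Reachable k i},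
        ENNReal.ofReal (x i)) < ⊤}ᶜ)
  rw [Set.union_compl_self, measure_univ, hcompl, add_zero] at hle
  exact hle
end

section
/- Let x = (x_i)_{i∈I}, y = (y_j)_{j∈J} be nonnegative weights with ∑ x_i² < ∞ and ∑ y_j² < ∞, and let B_t be the random bipartite graph where i ∈ I and j ∈ J are joined with probability 1 − exp(−t x_i y_j) independently. If I is finite then E[S₂^{B_t}] < ∞. -/
open MeasureTheory ProbabilityTheory Filter
open scoped ENNReal

/-- The combined weight function on the bipartite vertex set `I ⊕ J`. -/
def bipW {ι κ : Type*} (x : ι → ℝ) (y : κ → ℝ) : ι ⊕ κ → ℝ := Sum.elim x y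

/- ### Auxiliary lemmas -/

lemma tsum_sumType_aux {α β : Type*} (f : α ⊕ β → ℝ≥0∞) :
    ∑' v, f v = ∑' a, f (.inl a) + ∑' b, f (.inr b) := by
  have hf : f = fun v => Sum.elim (fun a => f (.inl a)) (fun _ => (0:ℝ≥0∞)) v
      + Sum.elim (fun _ => (0:ℝ≥0∞)) (fun b => f (.inr b)) v := by
    funext v; cases v <;> simp
  rw [hf, ENNReal.tsum_add]
  congr 1
  · rw [← Sum.inl_injective.tsum_eq
      (f := fun v => Sum.elim (fun a => f (.inl a)) (fun _ => (0:ℝ≥0∞)) v)]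
    · simp
    · intro v hv; cases v with
      | inl a => exact Set.mem_range_self _
      | inr b => simp [Function.mem_support] at hv
  · rw [← Sum.inr_injective.tsum_eq
      (f := fun v => Sum.elim (fun _ => (0:ℝ≥0∞)) (fun b => f (.inr b)) v)]
    · simp
    · intro v hv; cases v with
      | inl a => simp [Function.mem_support] at hv
      | inr b => exact Set.mem_range_self _

lemma sq_tsum_ennreal_aux {σ : Type*} (ov : σ → ℝ≥0∞) :
    (∑' v, ov v) ^ 2 = ∑' p : σ × σ, ov p.1 * ov p.2 := by
  rw [sq, ENNReal.tsum_prod' (f := fun p : σ × σ => ov p.1 * ov p.2)]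
  calc (∑' a, ov a) * (∑' b, ov b) = ∑' a, ov a * (∑' b, ov b) := by
        rw [ENNReal.tsum_mul_right]
    _ = ∑' (a) (b), ov a * ov b := by
        refine tsum_congr fun a => ?_
        rw [ENNReal.tsum_mul_left]

lemma iIndepSet_meas_inter_aux {Ω ι : Type*} [MeasurableSpace Ω] {μ : Measure Ω}
    {s : ι → Set Ω} (h : iIndepSet s μ) {a b : ι} (hab : a ≠ b) :
    μ (s a ∩ s b) = μ (s a) * μ (s b) := by
  classical
  have := (iIndepSet_iff s μ).1 h {a, b} (f := s)
    (fun i _ => MeasurableSpace.measurableSet_generateFrom rfl)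
  rwa [show ⋂ i ∈ ({a,b} : Finset ι), s i = s a ∩ s b by simp, Finset.prod_pair hab] at this

/-- If the side `I` of the bipartite random graph `B_t` is finite then
`E[S₂^{B_t}] < ∞`. -/
theorem stmt6 {Ω ι κ : Type*} [Finite ι] [MeasurableSpace Ω] (μ : Measure Ω)
    [IsProbabilityMeasure μ]
    (x : ι → ℝ) (y : κ → ℝ) (hx : ∀ i, 0 ≤ x i) (hy : ∀ j, 0 ≤ y j)
    (hx2 : Summable fun i => x i ^ 2) (hy2 : Summable fun j => y j ^ 2)
    (t : ℝ) (ht : 0 ≤ t)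
    (B : Ω → SimpleGraph (ι ⊕ κ))
    (hbipI : ∀ ω i i', ¬ (B ω).Adj (Sum.inl i) (Sum.inl i'))
    (hbipJ : ∀ ω j j', ¬ (B ω).Adj (Sum.inr j) (Sum.inr j'))
    (hprob : ∀ i j, μ {ω | (B ω).Adj (Sum.inl i) (Sum.inr j)} =
      ENNReal.ofReal (1 - Real.exp (-(t * x i * y j))))
    (hindep : iIndepSet
      (fun p : ι × κ => {ω | (B ω).Adj (Sum.inl p.1) (Sum.inr p.2)}) μ) :
    ∫⁻ ω, S2E (bipW x y) (B ω) ∂μ < ⊤ := by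
  classical
  haveI : Fintype ι := Fintype.ofFinite ι
  have hcnt : ({j | y j ≠ 0} : Set κ).Countable := by
    simpa [Function.support, pow_eq_zero_iff] using hy2.countable_support
  haveI : Countable {j : κ // y j ≠ 0} := hcnt.to_subtype
  set S : ι → κ → Set Ω := fun i j => {ω | (B ω).Adj (.inl i) (.inr j)} with hSdef
  set E : κ → Set Ω := fun j => ⋃ i, S i j with hEdef
  set ox : ι → ℝ≥0∞ := fun i => ENNReal.ofReal (x i) with hox
  set oy : κ → ℝ≥0∞ := fun j => ENNReal.ofReal (y j) with hoy
  set oT : ℝ≥0∞ := ENNReal.ofReal t with hoT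
  set XE : ℝ≥0∞ := ∑' i, ox i with hXE
  have hXEne : XE ≠ ⊤ := by
    rw [hXE, tsum_fintype]
    exact (ENNReal.sum_lt_top.2 fun i _ => ENNReal.ofReal_lt_top).ne
  have hoTne : oT ≠ ⊤ := ENNReal.ofReal_ne_top
  -- basic measure bounds
  have hSle : ∀ i j, μ (S i j) ≤ oT * ox i * oy j := by
    intro i j
    rw [hSdef]
    calc μ {ω | (B ω).Adj (.inl i) (.inr j)}
        = ENNReal.ofReal (1 - Real.exp (-(t * x i * y j))) := hprob i j
      _ ≤ ENNReal.ofReal (t * x i * y j) := ENNReal.ofReal_le_ofReal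
          (by nlinarith [Real.add_one_le_exp (-(t * x i * y j))])
      _ = oT * ox i * oy j := by
          rw [ENNReal.ofReal_mul (mul_nonneg ht (hx i)), ENNReal.ofReal_mul ht]
  have hsum1 : ∀ j : κ, ∑' i, oT * ox i * oy j = oT * XE * oy j := by
    intro j
    rw [show (fun i => oT * ox i * oy j) = fun i => (oT * oy j) * ox i by funext i; ring,
      ENNReal.tsum_mul_left, ← hXE]
    ring
  have hEle : ∀ j, μ (E j) ≤ oT * XE * oy j := by
    intro j
    calc μ (E j) ≤ ∑' i, μ (S i j) := measure_iUnion_le _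
      _ ≤ ∑' i, oT * ox i * oy j :=
          Summable.tsum_le_tsum (fun i => hSle i j) ENNReal.summable ENNReal.summable
      _ = oT * XE * oy j := hsum1 j
  have hE2le : ∀ j j', j ≠ j' →
      μ (E j ∩ E j') ≤ (oT * XE * oy j) * (oT * XE * oy j') := by
    intro j j' hne
    have h1 : E j ∩ E j' = ⋃ i, ⋃ i', (S i j ∩ S i' j') := by
      rw [hEdef]; simp only [Set.iUnion_inter, Set.inter_iUnion]
      exact Set.iUnion_comm _
    calc μ (E j ∩ E j') ≤ ∑' i, μ (⋃ i', S i j ∩ S i' j') := by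
          rw [h1]; exact measure_iUnion_le _
      _ ≤ ∑' i, ∑' i', μ (S i j ∩ S i' j') :=
          Summable.tsum_le_tsum (fun i => measure_iUnion_le _) ENNReal.summable ENNReal.summable
      _ = ∑' i, ∑' i', μ (S i j) * μ (S i' j') := by
          refine tsum_congr fun i => tsum_congr fun i' => ?_
          exact iIndepSet_meas_inter_aux hindep
            (show ((i, j) : ι × κ) ≠ (i', j') by simp [Prod.ext_iff]; intro _; exact hne)
      _ ≤ ∑' i, ∑' i', (oT * ox i * oy j) * (oT * ox i' * oy j') :=
          Summable.tsum_le_tsum (fun i => Summable.tsum_le_tsum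
            (fun i' => mul_le_mul' (hSle i j) (hSle i' j'))
            ENNReal.summable ENNReal.summable) ENNReal.summable ENNReal.summable
      _ = (oT * XE * oy j) * (oT * XE * oy j') := by
          calc ∑' i, ∑' i', (oT * ox i * oy j) * (oT * ox i' * oy j')
              = ∑' i, (oT * ox i * oy j) * (oT * XE * oy j') := by
                refine tsum_congr fun i => ?_
                rw [ENNReal.tsum_mul_left, hsum1 j']
            _ = (oT * XE * oy j) * (oT * XE * oy j') := by
                rw [ENNReal.tsum_mul_right, hsum1 j]
  -- reachability implies membership in the neighbor event
  have hreach : ∀ ω (u : ι ⊕ κ) (j : κ), (B ω).Reachable u (.inr j) → u ≠ .inr j →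
      ω ∈ E j := by
    intro ω u j h hne
    obtain ⟨p⟩ := h.symm
    cases p with
    | nil => exact absurd rfl hne.symm
    | cons ha q =>
      rename_i v
      cases v with
      | inl i => exact Set.mem_iUnion.2 ⟨i, ha.symm⟩
      | inr j' => exact absurd ha (hbipJ ω j j')
  -- the measurable hull sets
  set H : (ι ⊕ κ) × (ι ⊕ κ) → Set Ω := fun q =>
    match q with
    | (.inl _, .inl _) => Set.univ
    | (.inl _, .inr j) => toMeasurable μ (E j)
    | (.inr j, .inl _) => toMeasurable μ (E j)
    | (.inr j, .inr j') => if j = j' then Set.univ else toMeasurable μ (E j ∩ E j')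
    with hHdef
  have hHm : ∀ q, MeasurableSet (H q) := by
    rintro ⟨(i | j), (i' | j')⟩
    · exact MeasurableSet.univ
    · exact measurableSet_toMeasurable μ _
    · exact measurableSet_toMeasurable μ _
    · by_cases hjj : j = j'
      · simp only [hHdef, if_pos hjj]; exact MeasurableSet.univ
      · simp only [hHdef, if_neg hjj]; exact measurableSet_toMeasurable μ _
  have hHmem : ∀ ω (u v : ι ⊕ κ), (B ω).Reachable u v → ω ∈ H (u, v) := by
    rintro ω (i | j) (i' | j') h
    · exact Set.mem_univ ω
    · exact subset_toMeasurable μ _ (hreach ω _ j' h (by simp))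
    · exact subset_toMeasurable μ _ (hreach ω _ j h.symm (by simp))
    · by_cases hjj : j = j'
      · simp only [hHdef, if_pos hjj]; exact Set.mem_univ ω
      · have h1 : ω ∈ E j := hreach ω (.inr j') j h.symm (by simp [Ne.symm hjj])
        have h2 : ω ∈ E j' := hreach ω (.inr j) j' h (by simp [hjj])
        simp only [hHdef, if_neg hjj]
        exact subset_toMeasurable μ _ ⟨h1, h2⟩
  -- the countable index type
  set em : ι ⊕ {j : κ // y j ≠ 0} → ι ⊕ κ := Sum.map id Subtype.val with hem
  have hem_inj : Function.Injective em :=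
    Function.Injective.sumMap Function.injective_id Subtype.val_injective
  set cW : ι ⊕ {j : κ // y j ≠ 0} → ℝ≥0∞ := fun a => ENNReal.ofReal (bipW x y (em a)) with hcW
  set Φ : (ι ⊕ {j : κ // y j ≠ 0}) × (ι ⊕ {j : κ // y j ≠ 0}) → Ω → ℝ≥0∞ := fun p =>
    (H (em p.1, em p.2)).indicator (fun _ => cW p.1 * cW p.2) with hΦ
  -- the pointwise bound
  have key : ∀ ω, S2E (bipW x y) (B ω) ≤ ∑' p : (ι ⊕ {j : κ // y j ≠ 0}) × (ι ⊕ {j : κ // y j ≠ 0}), Φ p ω := by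
    intro ω
    set g : (ι ⊕ κ) × (ι ⊕ κ) → ℝ≥0∞ := fun q =>
      (H q).indicator (fun _ =>
        ENNReal.ofReal (bipW x y q.1) * ENNReal.ofReal (bipW x y q.2)) ω with hgdef
    have hcWrange : ∀ q : (ι ⊕ κ) × (ι ⊕ κ), q ∉ Set.range (Prod.map em em) → g q = 0 := by
      intro q hq
      have hz : ∀ a : ι ⊕ κ, a ∉ Set.range em → ENNReal.ofReal (bipW x y a) = 0 := by
        intro a ha
        cases a with
        | inl i => exact absurd ⟨Sum.inl i, rfl⟩ ha
        | inr j =>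
          by_cases hj : y j = 0
          · simp [bipW, hj]
          · exact absurd ⟨Sum.inr ⟨j, hj⟩, rfl⟩ ha
      have : q.1 ∉ Set.range em ∨ q.2 ∉ Set.range em := by
        by_contra hcon
        push_neg at hcon
        obtain ⟨⟨a, ha⟩, ⟨b, hb⟩⟩ := hcon
        exact hq ⟨(a, b), by simp [Prod.map, ha, hb, Prod.ext_iff]⟩
      rcases this with h | h
      · simp [hgdef, hz _ h]
      · simp [hgdef, hz _ h]
    have step1 : S2E (bipW x y) (B ω) ≤ ∑' q, g q := by
      rw [S2E]
      have hC : ∀ C : (B ω).ConnectedComponent, compWE (bipW x y) (B ω) C ^ 2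
          = ∑' p : {v // (B ω).connectedComponentMk v = C} ×
              {v // (B ω).connectedComponentMk v = C},
            ENNReal.ofReal (bipW x y p.1.1) * ENNReal.ofReal (bipW x y p.2.1) := by
        intro C
        rw [compWE, sq_tsum_ennreal_aux]
      calc ∑' C, compWE (bipW x y) (B ω) C ^ 2
          = ∑' C : (B ω).ConnectedComponent, ∑' p : {v // (B ω).connectedComponentMk v = C} ×
              {v // (B ω).connectedComponentMk v = C},
              ENNReal.ofReal (bipW x y p.1.1) * ENNReal.ofReal (bipW x y p.2.1) :=
            tsum_congr hC
        _ = ∑' σ : Σ C : (B ω).ConnectedComponent,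
              ({v // (B ω).connectedComponentMk v = C} ×
               {v // (B ω).connectedComponentMk v = C}),
              ENNReal.ofReal (bipW x y σ.2.1.1) * ENNReal.ofReal (bipW x y σ.2.2.1) :=
            (ENNReal.tsum_sigma' (fun σ : Σ C : (B ω).ConnectedComponent,
              ({v // (B ω).connectedComponentMk v = C} ×
               {v // (B ω).connectedComponentMk v = C}) =>
              ENNReal.ofReal (bipW x y σ.2.1.1) * ENNReal.ofReal (bipW x y σ.2.2.1))).symm
        _ ≤ ∑' q, g q := by
            refine Summable.tsum_le_tsum_of_inj (fun σ => ((σ.2.1.1, σ.2.2.1) : (ι ⊕ κ) × (ι ⊕ κ)))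
              ?_ (fun c _ => zero_le) ?_ ENNReal.summable ENNReal.summable
            · rintro ⟨C, ⟨u, hu⟩, ⟨v, hv⟩⟩ ⟨C', ⟨u', hu'⟩, ⟨v', hv'⟩⟩ hσ
              simp only [Prod.mk.injEq] at hσ
              obtain ⟨h1, h2⟩ := hσ
              subst h1; subst h2
              obtain rfl : C = C' := hu.symm.trans hu'
              rfl
            · rintro ⟨C, ⟨u, hu⟩, ⟨v, hv⟩⟩
              have hR : (B ω).Reachable u v :=
                SimpleGraph.ConnectedComponent.exact (hu.trans hv.symm)
              have : ω ∈ H (u, v) := hHmem ω u v hR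
              simp only [hgdef, Set.indicator_of_mem this]
              exact le_refl _
    have step2 : ∑' q, g q = ∑' p : (ι ⊕ {j : κ // y j ≠ 0}) × (ι ⊕ {j : κ // y j ≠ 0}), Φ p ω := by
      rw [← (hem_inj.prodMap hem_inj).tsum_eq (f := g)]
      · refine tsum_congr fun p => ?_
        simp only [hgdef, hΦ, hcW, Prod.map]
      · intro q hq
        by_contra hcon
        exact absurd (hcWrange q hcon) hq
    exact step1.trans step2.le
  -- the weight function for the final bound
  set F : ι ⊕ {j : κ // y j ≠ 0} → ℝ≥0∞ := Sum.elim ox (fun j => oy j.1 ^ 2) with hF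
  set K : ℝ≥0∞ := 1 + oT * XE with hK
  have hK1 : (1:ℝ≥0∞) ≤ K := le_add_of_nonneg_right zero_le
  have hK2 : oT * XE ≤ K := le_add_self
  have hKne : K ≠ ⊤ := by
    rw [hK]
    exact ENNReal.add_ne_top.2 ⟨ENNReal.one_ne_top, ENNReal.mul_ne_top hoTne hXEne⟩
  have hKK1 : (1:ℝ≥0∞) ≤ K * K := by
    calc (1:ℝ≥0∞) = 1 * 1 := (one_mul 1).symm
      _ ≤ K * K := mul_le_mul' hK1 hK1
  have hKK2 : oT * XE ≤ K * K := by
    calc oT * XE = 1 * (oT * XE) := (one_mul _).symm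
      _ ≤ K * K := mul_le_mul' hK1 hK2
  have hKK3 : (oT * XE) * (oT * XE) ≤ K * K := mul_le_mul' hK2 hK2
  -- the per-term bound
  have hterm : ∀ p : (ι ⊕ {j : κ // y j ≠ 0}) × (ι ⊕ {j : κ // y j ≠ 0}), cW p.1 * cW p.2 * μ (H (em p.1, em p.2))
      ≤ K * K * (F p.1 * F p.2) + (if p.1 = p.2 then cW p.1 * cW p.2 else 0) := by
    rintro ⟨(i | j), (i' | j')⟩
    · -- (inl, inl)
      refine le_trans ?_ le_self_add
      calc cW (Sum.inl i) * cW (Sum.inl i') * μ (H (em (Sum.inl i), em (Sum.inl i')))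
          ≤ cW (Sum.inl i) * cW (Sum.inl i') * 1 :=
            mul_le_mul' le_rfl prob_le_one
        _ = 1 * (F (Sum.inl i) * F (Sum.inl i')) := by
            simp only [hcW, hF, hem, Sum.map, bipW, Function.comp, id_eq, Sum.elim_inl, hox]
            ring
        _ ≤ K * K * (F (Sum.inl i) * F (Sum.inl i')) := mul_le_mul' hKK1 le_rfl
    · -- (inl i, inr j')
      refine le_trans ?_ le_self_add
      have hμ : μ (H (em (Sum.inl i), em (Sum.inr j'))) ≤ oT * XE * oy j'.1 := by
        simpa only [hHdef, hem, Sum.map, Function.comp, id_eq, Sum.elim_inl, Sum.elim_inr, measure_toMeasurable] using hEle j'.1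
      calc cW (Sum.inl i) * cW (Sum.inr j') * μ (H (em (Sum.inl i), em (Sum.inr j')))
          ≤ cW (Sum.inl i) * cW (Sum.inr j') * (oT * XE * oy j'.1) :=
            mul_le_mul' le_rfl hμ
        _ = (oT * XE) * (F (Sum.inl i) * F (Sum.inr j')) := by
            simp only [hcW, hF, hem, Sum.map, bipW, Function.comp, id_eq,
              Sum.elim_inl, Sum.elim_inr, hox, hoy]
            ring
        _ ≤ K * K * (F (Sum.inl i) * F (Sum.inr j')) := mul_le_mul' hKK2 le_rfl
    · -- (inr j, inl i)
      refine le_trans ?_ le_self_add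
      have hμ : μ (H (em (Sum.inr j), em (Sum.inl i'))) ≤ oT * XE * oy j.1 := by
        simpa only [hHdef, hem, Sum.map, Function.comp, id_eq, Sum.elim_inl, Sum.elim_inr, measure_toMeasurable] using hEle j.1
      calc cW (Sum.inr j) * cW (Sum.inl i') * μ (H (em (Sum.inr j), em (Sum.inl i')))
          ≤ cW (Sum.inr j) * cW (Sum.inl i') * (oT * XE * oy j.1) :=
            mul_le_mul' le_rfl hμ
        _ = (oT * XE) * (F (Sum.inr j) * F (Sum.inl i')) := by
            simp only [hcW, hF, hem, Sum.map, bipW, Function.comp, id_eq, Sum.elim_inl, Sum.elim_inr, hox, hoy]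
            ring
        _ ≤ K * K * (F (Sum.inr j) * F (Sum.inl i')) := mul_le_mul' hKK2 le_rfl
    · -- (inr j, inr j')
      by_cases hjj : j = j'
      · subst hjj
        have hμ : μ (H (em (Sum.inr j), em (Sum.inr j))) ≤ 1 := prob_le_one
        rw [if_pos rfl]
        refine le_trans ?_ le_add_self
        calc cW (Sum.inr j) * cW (Sum.inr j) * μ (H (em (Sum.inr j), em (Sum.inr j)))
            ≤ cW (Sum.inr j) * cW (Sum.inr j) * 1 := mul_le_mul' le_rfl hμ
          _ = cW (Sum.inr j) * cW (Sum.inr j) := mul_one _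
      · refine le_trans ?_ le_self_add
        have hvne : j.1 ≠ j'.1 := fun h => hjj (Subtype.ext h)
        have hμ : μ (H (em (Sum.inr j), em (Sum.inr j')))
            ≤ (oT * XE * oy j.1) * (oT * XE * oy j'.1) := by
          have : H (em (Sum.inr j), em (Sum.inr j'))
              = toMeasurable μ (E j.1 ∩ E j'.1) := by
            simp only [hHdef, hem, Sum.map, Function.comp, id_eq, Sum.elim_inl, Sum.elim_inr, if_neg hvne]
          rw [this, measure_toMeasurable]
          exact hE2le _ _ hvne
        calc cW (Sum.inr j) * cW (Sum.inr j') * μ (H (em (Sum.inr j), em (Sum.inr j')))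
            ≤ cW (Sum.inr j) * cW (Sum.inr j')
              * ((oT * XE * oy j.1) * (oT * XE * oy j'.1)) := mul_le_mul' le_rfl hμ
          _ = ((oT * XE) * (oT * XE)) * (F (Sum.inr j) * F (Sum.inr j')) := by
              simp only [hcW, hF, hem, Sum.map, bipW, Function.comp, id_eq, Sum.elim_inr, hoy]
              ring
          _ ≤ K * K * (F (Sum.inr j) * F (Sum.inr j')) := mul_le_mul' hKK3 le_rfl
  -- finiteness of the two total sums
  have hFsum : ∑' a : ι ⊕ {j : κ // y j ≠ 0}, F a ≠ ⊤ := by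
    rw [tsum_sumType_aux]
    refine ENNReal.add_ne_top.2 ⟨?_, ?_⟩
    · simpa only [hF, Sum.elim_inl, ← hXE] using hXEne
    · have h1 : ∑' j : {j : κ // y j ≠ 0}, F (Sum.inr j) ≤ ∑' j : κ, oy j ^ 2 := by
        refine Summable.tsum_le_tsum_of_inj Subtype.val Subtype.val_injective
          (fun c _ => zero_le) (fun j => ?_) ENNReal.summable ENNReal.summable
        simp [hF]
      have h2 : ∑' j : κ, oy j ^ 2 ≠ ⊤ := by
        have : ∀ j : κ, oy j ^ 2 = ENNReal.ofReal (y j ^ 2) := fun j =>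
          (ENNReal.ofReal_pow (hy j) 2).symm
        rw [tsum_congr this, ← ENNReal.ofReal_tsum_of_nonneg (fun j => sq_nonneg _) hy2]
        exact ENNReal.ofReal_ne_top
      exact (lt_of_le_of_lt h1 (lt_top_iff_ne_top.2 h2)).ne
  have hDsum : ∑' a : ι ⊕ {j : κ // y j ≠ 0}, cW a * cW a ≠ ⊤ := by
    rw [tsum_sumType_aux]
    refine ENNReal.add_ne_top.2 ⟨?_, ?_⟩
    · rw [tsum_fintype]
      exact (ENNReal.sum_lt_top.2 fun i _ =>
        ENNReal.mul_lt_top ENNReal.ofReal_lt_top ENNReal.ofReal_lt_top).ne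
    · have h1 : ∑' j : {j : κ // y j ≠ 0}, cW (Sum.inr j) * cW (Sum.inr j)
          ≤ ∑' j : κ, oy j ^ 2 := by
        refine Summable.tsum_le_tsum_of_inj Subtype.val Subtype.val_injective
          (fun c _ => zero_le) (fun j => ?_) ENNReal.summable ENNReal.summable
        simp [hcW, hem, Sum.map, bipW, sq, hoy]
      have h2 : ∑' j : κ, oy j ^ 2 ≠ ⊤ := by
        have : ∀ j : κ, oy j ^ 2 = ENNReal.ofReal (y j ^ 2) := fun j =>
          (ENNReal.ofReal_pow (hy j) 2).symm
        rw [tsum_congr this, ← ENNReal.ofReal_tsum_of_nonneg (fun j => sq_nonneg _) hy2]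
        exact ENNReal.ofReal_ne_top
      exact (lt_of_le_of_lt h1 (lt_top_iff_ne_top.2 h2)).ne
  -- assemble
  calc ∫⁻ ω, S2E (bipW x y) (B ω) ∂μ
      ≤ ∫⁻ ω, ∑' p : (ι ⊕ {j : κ // y j ≠ 0}) × (ι ⊕ {j : κ // y j ≠ 0}), Φ p ω ∂μ := lintegral_mono key
    _ = ∑' p : (ι ⊕ {j : κ // y j ≠ 0}) × (ι ⊕ {j : κ // y j ≠ 0}), ∫⁻ ω, Φ p ω ∂μ :=
        lintegral_tsum fun p => (measurable_const.indicator (hHm _)).aemeasurable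
    _ = ∑' p : (ι ⊕ {j : κ // y j ≠ 0}) × (ι ⊕ {j : κ // y j ≠ 0}), cW p.1 * cW p.2 * μ (H (em p.1, em p.2)) := by
        refine tsum_congr fun p => ?_
        simp only [hΦ]
        exact lintegral_indicator_const (hHm _) _
    _ ≤ ∑' p : (ι ⊕ {j : κ // y j ≠ 0}) × (ι ⊕ {j : κ // y j ≠ 0}), (K * K * (F p.1 * F p.2)
          + (if p.1 = p.2 then cW p.1 * cW p.2 else 0)) :=
        Summable.tsum_le_tsum hterm ENNReal.summable ENNReal.summable
    _ = K * K * ((∑' a : ι ⊕ {j : κ // y j ≠ 0}, F a) * (∑' a : ι ⊕ {j : κ // y j ≠ 0}, F a)) + ∑' a : ι ⊕ {j : κ // y j ≠ 0}, cW a * cW a := by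
        rw [ENNReal.tsum_add]
        congr 1
        · rw [ENNReal.tsum_mul_left]
          congr 1
          rw [← sq, sq_tsum_ennreal_aux]
        · rw [ENNReal.tsum_prod' (f := fun p : (ι ⊕ {j : κ // y j ≠ 0}) × (ι ⊕ {j : κ // y j ≠ 0}) =>
            if p.1 = p.2 then cW p.1 * cW p.2 else 0)]
          refine tsum_congr fun a => ?_
          rw [tsum_eq_single a (fun b hb => if_neg fun h => hb (Eq.symm h))]
          · exact if_pos rfl
    _ < ⊤ := by
        refine ENNReal.add_lt_top.2 ⟨?_, lt_top_iff_ne_top.2 hDsum⟩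
        exact ENNReal.mul_lt_top (ENNReal.mul_lt_top (lt_top_iff_ne_top.2 hKne)
          (lt_top_iff_ne_top.2 hKne))
          (ENNReal.mul_lt_top (lt_top_iff_ne_top.2 hFsum) (lt_top_iff_ne_top.2 hFsum))
end

section
/- Let x ∈ ℓ₂⁺ with S₂ = ∑ x_i² and t < 1/S₂. Then for fixed i ≠ j, the expected number of simple paths from i to j in the random graph G_t (edge {u,v} with probability 1 − exp(−t x_u x_v), independently) is at most x_i x_j t / (1 − t S₂); in particular, it is finite, so a.s. only finitely many simple paths join i and j. -/
open MeasureTheory ProbabilityTheory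
open scoped ENNReal

/-- The set of (intermediate-vertex lists of) simple paths from `i` to `j` in `G`. -/
def simplePathsBetween (G : SimpleGraph ℕ) (i j : ℕ) : Set (List ℕ) :=
  {l | (i :: (l ++ [j])).Chain' G.Adj ∧ (i :: (l ++ [j])).Nodup}

noncomputable def pathW (x : ℕ → ℝ) (t : ℝ) (j : ℕ) : ℕ → List ℕ → ℝ≥0∞
  | a, [] => ENNReal.ofReal (t * x a * x j)
  | a, v :: l => ENNReal.ofReal (t * x a * x v) * pathW x t j v l

lemma pathW_eq_prod (x : ℕ → ℝ) (t : ℝ) (j : ℕ) :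
    ∀ (l : List ℕ) (a : ℕ), pathW x t j a l =
      ∏ m ∈ Finset.range (l.length + 1),
        ENNReal.ofReal (t * x ((a :: (l ++ [j])).getD m 0) *
          x ((a :: (l ++ [j])).getD (m + 1) 0))
  | [], a => by simp [pathW]
  | v :: l, a => by
    rw [List.length_cons, Finset.prod_range_succ', pathW, pathW_eq_prod x t j l v]
    exact mul_comm _ _

def consEquiv (k : ℕ) : ℕ × {l : List ℕ // l.length = k} ≃ {l : List ℕ // l.length = k + 1} where
  toFun p := ⟨p.1 :: p.2.1, by simp [p.2.2]⟩
  invFun p := match p with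
    | ⟨[], h⟩ => nomatch h
    | ⟨v :: l, h⟩ => (v, ⟨l, by simpa using h⟩)
  left_inv := by rintro ⟨v, l, h⟩; rfl
  right_inv := by
    rintro ⟨(_ | ⟨v, l⟩), h⟩
    · exact absurd h (by simp)
    · rfl

def listSigmaEquiv : (Σ k : ℕ, {l : List ℕ // l.length = k}) ≃ List ℕ where
  toFun p := p.2.1
  invFun l := ⟨l.length, l, rfl⟩
  left_inv := by rintro ⟨k, l, rfl⟩; rfl
  right_inv l := rfl

lemma pathW_tsum (x : ℕ → ℝ) (t : ℝ) (j : ℕ) (hx : ∀ i, 0 ≤ x i) (ht : 0 ≤ t)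
    (hx2 : Summable fun i => x i ^ 2) (k : ℕ) :
    ∀ a : ℕ, ∑' l : {l : List ℕ // l.length = k}, pathW x t j a l.1
      = ENNReal.ofReal (t * x a * x j) * (ENNReal.ofReal (t * ∑' i, x i ^ 2)) ^ k := by
  induction k with
  | zero =>
    intro a
    rw [tsum_eq_single (⟨[], rfl⟩ : {l : List ℕ // l.length = 0})]
    · simp [pathW]
    · rintro ⟨l, hl⟩ hne
      exact absurd (Subtype.ext (List.length_eq_zero_iff.mp hl)) hne
  | succ k ih =>
    intro a
    rw [← Equiv.tsum_eq (consEquiv k)]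
    calc ∑' (p : ℕ × {l : List ℕ // l.length = k}), pathW x t j a ((consEquiv k) p).1
        = ∑' (v : ℕ) (l : {l : List ℕ // l.length = k}),
            ENNReal.ofReal (t * x a * x v) * pathW x t j v l.1 := ENNReal.tsum_prod'
      _ = ∑' (v : ℕ), ENNReal.ofReal (t * x a * x v)
            * ∑' (l : {l : List ℕ // l.length = k}), pathW x t j v l.1 :=
          tsum_congr fun v => ENNReal.tsum_mul_left
      _ = ∑' (v : ℕ), ENNReal.ofReal (t * x a * x v)
            * (ENNReal.ofReal (t * x v * x j) * (ENNReal.ofReal (t * ∑' i, x i ^ 2)) ^ k) :=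
          tsum_congr fun v => by rw [ih v]
      _ = ∑' (v : ℕ), ENNReal.ofReal (t * x a * x j) * ENNReal.ofReal (t * x v ^ 2)
            * (ENNReal.ofReal (t * ∑' i, x i ^ 2)) ^ k := by
          refine tsum_congr fun v => ?_
          rw [← mul_assoc, ← ENNReal.ofReal_mul (mul_nonneg (mul_nonneg ht (hx a)) (hx v)),
            show (t * x a * x v) * (t * x v * x j) = (t * x a * x j) * (t * x v ^ 2) by ring,
            ENNReal.ofReal_mul (mul_nonneg (mul_nonneg ht (hx a)) (hx j))]
      _ = ENNReal.ofReal (t * x a * x j) * (ENNReal.ofReal (t * ∑' i, x i ^ 2)) ^ (k + 1) := by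
          rw [ENNReal.tsum_mul_right, ENNReal.tsum_mul_left,
            ← ENNReal.ofReal_tsum_of_nonneg (fun v => mul_nonneg ht (sq_nonneg _)) (hx2.mul_left t),
            tsum_mul_left, pow_succ]
          ring

lemma pathW_total (x : ℕ → ℝ) (t : ℝ) (j : ℕ) (hx : ∀ i, 0 ≤ x i) (ht : 0 ≤ t)
    (hx2 : Summable fun i => x i ^ 2) (a : ℕ) :
    ∑' l : List ℕ, pathW x t j a l
      = ENNReal.ofReal (t * x a * x j) * (1 - ENNReal.ofReal (t * ∑' i, x i ^ 2))⁻¹ := by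
  rw [← Equiv.tsum_eq listSigmaEquiv, ENNReal.tsum_sigma']
  calc ∑' (k : ℕ) (l : {l : List ℕ // l.length = k}), pathW x t j a (listSigmaEquiv ⟨k, l⟩)
      = ∑' (k : ℕ), ENNReal.ofReal (t * x a * x j) * (ENNReal.ofReal (t * ∑' i, x i ^ 2)) ^ k :=
        tsum_congr fun k => pathW_tsum x t j hx ht hx2 k a
    _ = _ := by rw [ENNReal.tsum_mul_left, ENNReal.tsum_geometric]

lemma meas_chain_le {Ω : Type*} [MeasurableSpace Ω] (μ : Measure Ω) (x : ℕ → ℝ) (t : ℝ)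
    (G : Ω → SimpleGraph ℕ)
    (hprob : ∀ i j : ℕ, i < j →
      μ {ω | (G ω).Adj i j} = ENNReal.ofReal (1 - Real.exp (-(t * x i * x j))))
    (hindep : iIndepSet
      (fun p : {p : ℕ × ℕ // p.1 < p.2} => {ω | (G ω).Adj p.1.1 p.1.2}) μ)
    (path : List ℕ) (hnd : path.Nodup) (n : ℕ) (hplen : path.length = n + 1) :
    μ {ω | path.Chain' (G ω).Adj} ≤
      ∏ m ∈ Finset.range n, ENNReal.ofReal (t * x (path.getD m 0) * x (path.getD (m + 1) 0)) := by
  let u : Fin n → ℕ := fun m => path.getD m 0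
  let v : Fin n → ℕ := fun m => path.getD (m + 1) 0
  have hlt1 : ∀ m : Fin n, (m : ℕ) < path.length := fun m => by have := m.isLt; omega
  have hlt2 : ∀ m : Fin n, (m : ℕ) + 1 < path.length := fun m => by have := m.isLt; omega
  have hu : ∀ m : Fin n, u m = path[(m : ℕ)]'(hlt1 m) := fun m =>
    List.getD_eq_getElem _ _ (hlt1 m)
  have hv : ∀ m : Fin n, v m = path[(m : ℕ) + 1]'(hlt2 m) := fun m =>
    List.getD_eq_getElem _ _ (hlt2 m)
  have hgetinj : ∀ (q q' : ℕ) (hq : q < path.length) (hq' : q' < path.length),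
      path[q] = path[q'] → q = q' := fun q q' hq hq' h => (hnd.getElem_inj_iff).mp h
  have hne : ∀ m : Fin n, u m ≠ v m := by
    intro m h
    rw [hu, hv] at h
    have := hgetinj _ _ (hlt1 m) (hlt2 m) h
    omega
  let σ : Fin n → {p : ℕ × ℕ // p.1 < p.2} :=
    fun m => ⟨(min (u m) (v m), max (u m) (v m)), min_lt_max.mpr (hne m)⟩
  have hσ1 : ∀ m, (σ m).1.1 = min (u m) (v m) := fun m => rfl
  have hσ2 : ∀ m, (σ m).1.2 = max (u m) (v m) := fun m => rfl
  have hσinj : Function.Injective σ := by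
    intro m m' hmm
    have h1 : min (u m) (v m) = min (u m') (v m') := congrArg (fun p => p.1.1) hmm
    have h2 : max (u m) (v m) = max (u m') (v m') := congrArg (fun p => p.1.2) hmm
    have hcases : (u m = u m' ∧ v m = v m') ∨ (u m = v m' ∧ v m = u m') := by omega
    rcases hcases with ⟨h3, _⟩ | ⟨h3, h4⟩
    · exact Fin.ext (hgetinj _ _ (hlt1 m) (hlt1 m') (by rw [← hu m, ← hu m']; exact h3))
    · have e1 : (m : ℕ) = (m' : ℕ) + 1 :=
        hgetinj _ _ (hlt1 m) (hlt2 m') (by rw [← hu m, ← hv m']; exact h3)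
      have e2 : (m : ℕ) + 1 = (m' : ℕ) :=
        hgetinj _ _ (hlt2 m) (hlt1 m') (by rw [← hv m, ← hu m']; exact h4)
      omega
  have hadj_iff : ∀ (ω : Ω) (m : Fin n),
      (G ω).Adj (σ m).1.1 (σ m).1.2 ↔ (G ω).Adj (u m) (v m) := by
    intro ω m
    rw [hσ1, hσ2]
    rcases le_total (u m) (v m) with h | h
    · rw [min_eq_left h, max_eq_right h]
    · rw [min_eq_right h, max_eq_left h]; exact ((G ω).adj_comm _ _)
  have hchain : ∀ ω : Ω, path.Chain' (G ω).Adj ↔ ∀ m : Fin n, (G ω).Adj (u m) (v m) := by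
    intro ω
    rw [show path.Chain' (G ω).Adj ↔ path.IsChain (G ω).Adj from Iff.rfl, List.isChain_iff_getElem]
    constructor
    · intro h m
      have hm : (m : ℕ) + 1 < path.length := by have := m.isLt; omega
      have h' := h m hm
      rw [hu, hv]
      simpa [List.get_eq_getElem] using h'
    · intro h q hq
      have hq' : q < n := by omega
      have h' := h ⟨q, hq'⟩
      rw [hu, hv] at h'
      simpa [List.get_eq_getElem] using h'
  have hset : {ω | path.Chain' (G ω).Adj}
      = ⋂ p ∈ Finset.image σ Finset.univ, {ω | (G ω).Adj p.1.1 p.1.2} := by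
    ext ω
    simp only [Set.mem_setOf_eq, Set.mem_iInter, Finset.mem_image, Finset.mem_univ, true_and,
      hchain ω]
    constructor
    · rintro h p ⟨m, rfl⟩
      exact (hadj_iff ω m).mpr (h m)
    · intro h m
      exact (hadj_iff ω m).mp (h (σ m) ⟨m, rfl⟩)
  calc μ {ω | path.Chain' (G ω).Adj}
      = ∏ p ∈ Finset.image σ Finset.univ, μ {ω | (G ω).Adj p.1.1 p.1.2} := by
        rw [hset]; exact hindep.meas_biInter _
    _ = ∏ m : Fin n, μ {ω | (G ω).Adj (σ m).1.1 (σ m).1.2} :=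
        Finset.prod_image fun m _ m' _ h => hσinj h
    _ ≤ ∏ m : Fin n, ENNReal.ofReal (t * x (u m) * x (v m)) := by
        refine Finset.prod_le_prod' fun m _ => ?_
        rw [hprob _ _ (σ m).2]
        refine ENNReal.ofReal_le_ofReal ?_
        have hxy : x (σ m).1.1 * x (σ m).1.2 = x (u m) * x (v m) := by
          rw [hσ1, hσ2]
          rcases le_total (u m) (v m) with h | h
          · rw [min_eq_left h, max_eq_right h]
          · rw [min_eq_right h, max_eq_left h, mul_comm]
        have hexp := Real.add_one_le_exp (-(t * x (u m) * x (v m)))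
        have heq : t * x (σ m).1.1 * x (σ m).1.2 = t * x (u m) * x (v m) := by
          rw [mul_assoc, hxy, mul_assoc]
        rw [heq]
        linarith
    _ = ∏ m ∈ Finset.range n,
          ENNReal.ofReal (t * x (path.getD m 0) * x (path.getD (m + 1) 0)) := by
        rw [← Fin.prod_univ_eq_prod_range
          (fun q => ENNReal.ofReal (t * x (path.getD q 0) * x (path.getD (q + 1) 0))) n]

/-- For `t < 1/S₂`, the expected number of simple paths from `i` to `j` in the random
graph `G_t` is at most `x_i x_j t / (1 - t S₂)`; in particular it is finite, so a.s.
only finitely many simple paths join `i` and `j`. -/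
theorem stmt18 {Ω : Type*} [MeasurableSpace Ω] (μ : Measure Ω) [IsProbabilityMeasure μ]
    (x : ℕ → ℝ) (hx : ∀ i, 0 ≤ x i) (hx2 : Summable fun i => x i ^ 2)
    (t : ℝ) (ht : 0 ≤ t) (hts : t * (∑' i, x i ^ 2) < 1)
    (G : Ω → SimpleGraph ℕ)
    (hprob : ∀ i j : ℕ, i < j →
      μ {ω | (G ω).Adj i j} = ENNReal.ofReal (1 - Real.exp (-(t * x i * x j))))
    (hindep : iIndepSet
      (fun p : {p : ℕ × ℕ // p.1 < p.2} => {ω | (G ω).Adj p.1.1 p.1.2}) μ)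
    (i j : ℕ) (hij : i ≠ j) :
    (∫⁻ ω, ∑' _ : (simplePathsBetween (G ω) i j), (1 : ℝ≥0∞) ∂μ) ≤
        ENNReal.ofReal (x i * x j * t / (1 - t * ∑' i, x i ^ 2)) ∧
      μ {ω | (simplePathsBetween (G ω) i j).Finite} = 1 := by
  have hS2nn : 0 ≤ ∑' i, x i ^ 2 := tsum_nonneg fun i => sq_nonneg _
  have htS2 : 0 ≤ t * ∑' i, x i ^ 2 := mul_nonneg ht hS2nn
  -- the event that `l` is (the interior of) a simple path from i to j
  set Sl : List ℕ → Set Ω := fun l => {ω | l ∈ simplePathsBetween (G ω) i j} with hSl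
  -- per-list bound
  have key : ∀ l : List ℕ, μ (Sl l) ≤ pathW x t j i l := by
    intro l
    by_cases hnd : (i :: (l ++ [j])).Nodup
    · have hSeq : Sl l = {ω | (i :: (l ++ [j])).Chain' (G ω).Adj} := by
        ext ω
        simp only [hSl, Set.mem_setOf_eq, simplePathsBetween]
        exact and_iff_left hnd
      rw [hSeq, pathW_eq_prod]
      have hplen : (i :: (l ++ [j])).length = (l.length + 1) + 1 := by simp
      exact meas_chain_le μ x t G hprob hindep _ hnd _ hplen
    · have hSeq : Sl l = ∅ := by
        ext ω
        simp only [hSl, Set.mem_setOf_eq, simplePathsBetween, Set.mem_empty_iff_false, iff_false]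
        exact fun h => hnd h.2
      rw [hSeq, measure_empty]
      exact zero_le
  -- a measurable majorant of the path-counting function
  set g : Ω → ℝ≥0∞ := fun ω => ∑' l : List ℕ, (toMeasurable μ (Sl l)).indicator 1 ω with hg
  have hmg : Measurable g :=
    Measurable.ennreal_tsum fun l =>
      measurable_one.indicator (measurableSet_toMeasurable μ (Sl l))
  have hfg : ∀ ω : Ω, (∑' _ : (simplePathsBetween (G ω) i j), (1 : ℝ≥0∞)) ≤ g ω := by
    intro ω
    rw [show (∑' _ : (simplePathsBetween (G ω) i j), (1 : ℝ≥0∞))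
        = ∑' l : List ℕ, (simplePathsBetween (G ω) i j).indicator (fun _ => 1) l from
      tsum_subtype (simplePathsBetween (G ω) i j) (fun _ => (1 : ℝ≥0∞))]
    refine ENNReal.tsum_le_tsum fun l => ?_
    by_cases h : l ∈ simplePathsBetween (G ω) i j
    · have hω : ω ∈ toMeasurable μ (Sl l) := subset_toMeasurable μ (Sl l) h
      simp [Set.indicator_of_mem h, Set.indicator_of_mem hω]
    · simp [Set.indicator_of_notMem h]
  have hgint : ∫⁻ ω, g ω ∂μ = ∑' l : List ℕ, μ (Sl l) := by
    rw [hg, lintegral_tsum fun l =>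
      (measurable_one.indicator (measurableSet_toMeasurable μ (Sl l))).aemeasurable]
    refine tsum_congr fun l => ?_
    rw [lintegral_indicator_one (measurableSet_toMeasurable μ (Sl l)),
      measure_toMeasurable]
  have hsum : ∑' l : List ℕ, μ (Sl l)
      ≤ ENNReal.ofReal (x i * x j * t / (1 - t * ∑' i, x i ^ 2)) := by
    calc ∑' l : List ℕ, μ (Sl l) ≤ ∑' l : List ℕ, pathW x t j i l :=
          ENNReal.tsum_le_tsum key
      _ = ENNReal.ofReal (t * x i * x j) * (1 - ENNReal.ofReal (t * ∑' i, x i ^ 2))⁻¹ :=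
          pathW_total x t j hx ht hx2 i
      _ = ENNReal.ofReal (x i * x j * t / (1 - t * ∑' i, x i ^ 2)) := by
          rw [show (1 : ℝ≥0∞) - ENNReal.ofReal (t * ∑' i, x i ^ 2)
              = ENNReal.ofReal (1 - t * ∑' i, x i ^ 2) by
            rw [ENNReal.ofReal_sub 1 htS2, ENNReal.ofReal_one],
            ENNReal.ofReal_div_of_pos (by linarith), div_eq_mul_inv,
            show t * x i * x j = x i * x j * t from by ring]
  constructor
  · calc ∫⁻ ω, ∑' _ : (simplePathsBetween (G ω) i j), (1 : ℝ≥0∞) ∂μ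
        ≤ ∫⁻ ω, g ω ∂μ := lintegral_mono hfg
      _ = ∑' l : List ℕ, μ (Sl l) := hgint
      _ ≤ _ := hsum
  · have hgne : ∫⁻ ω, g ω ∂μ ≠ ⊤ := by
      rw [hgint]
      exact ne_top_of_le_ne_top ENNReal.ofReal_ne_top hsum
    have hae : ∀ᵐ ω ∂μ, g ω < ⊤ := ae_lt_top hmg hgne
    have hnull : μ {ω | g ω = ⊤} = 0 := by
      rw [ae_iff] at hae
      simpa [lt_top_iff_ne_top, not_not] using hae
    have hsubset : {ω | (simplePathsBetween (G ω) i j).Finite}ᶜ ⊆ {ω | g ω = ⊤} := by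
      intro ω hω
      simp only [Set.mem_compl_iff, Set.mem_setOf_eq] at hω ⊢
      have hinf : Infinite ↥(simplePathsBetween (G ω) i j) := Set.infinite_coe_iff.mpr hω
      have htop : (∑' _ : (simplePathsBetween (G ω) i j), (1 : ℝ≥0∞)) = ⊤ :=
        ENNReal.tsum_const_eq_top_of_ne_zero one_ne_zero
      exact top_le_iff.mp (htop ▸ hfg ω)
    have hcompl : μ ({ω | (simplePathsBetween (G ω) i j).Finite}ᶜ) = 0 :=
      measure_mono_null hsubset hnull
    have h1 : (1 : ℝ≥0∞) ≤ μ {ω | (simplePathsBetween (G ω) i j).Finite} := by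
      have hle := measure_union_le (μ := μ)
        {ω | (simplePathsBetween (G ω) i j).Finite}
        {ω | (simplePathsBetween (G ω) i j).Finite}ᶜ
      rw [Set.union_compl_self, measure_univ, hcompl, add_zero] at hle
      exact hle
    exact le_antisymm prob_le_one h1
end
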